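/- arXiv:1905.08683 — 7 statements merged into one kernel-verified Lean document; each statement's English description precedes it below -/
import Mathlib

section
/- Let G and H be finite connected simple graphs, let c be a pebbling configuration on the Cartesian product G□H, and let (r_G, r_H) be any root vertex of G□H. If the total G-set count of c is at least π(H), i.e. Σ_{j∈V(H)} ⌊c̃_j / π(G)⌋ ≥ π(H), then c is (r_G, r_H)-solvable. -/
open SimpleGraph Finset

/-- A single pebbling move on `G`: remove two pebbles from a vertex `v` with at least two
pebbles and add one pebble to an adjacent vertex `w`. -/
def PebblingMove {V : Type*} (G : SimpleGraph V) (c c' : V → ℕ) : Prop :=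
  ∃ v w, G.Adj v w ∧ 2 ≤ c v ∧ c' v = c v - 2 ∧ c' w = c w + 1 ∧
    ∀ u, u ≠ v → u ≠ w → c' u = c u

/-- Some finite sequence of pebbling moves starting from `c` places at least `t` pebbles
on the vertex `r`. -/
def NSolvable {V : Type*} (G : SimpleGraph V) (c : V → ℕ) (r : V) (t : ℕ) : Prop :=
  ∃ c', Relation.ReflTransGen (PebblingMove G) c c' ∧ t ≤ c' r

/-- A configuration `c` is `r`-solvable. -/
def Solvable {V : Type*} (G : SimpleGraph V) (c : V → ℕ) (r : V) : Prop :=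
  NSolvable G c r 1

/-- The pebbling number `π(G)`: least `k` such that every configuration of size `k` is
`r`-solvable for every root `r`. -/
noncomputable def pebblingNumber {V : Type*} (G : SimpleGraph V) [Fintype V] : ℕ :=
  sInf {k | ∀ c : V → ℕ, (∑ v, c v) = k → ∀ r, Solvable G c r}

/-- The 2-pebbling number `π₂(G, s)`: least `m` such that for every root `r`, every
configuration of size at least `m` with support of size exactly `s` can place two pebbles
on `r`. -/
noncomputable def twoPebblingNumber {V : Type*} (G : SimpleGraph V) [Fintype V] (s : ℕ) : ℕ :=
  sInf {m | ∀ (r : V) (c : V → ℕ), m ≤ ∑ v, c v →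
    (Finset.univ.filter fun v => 1 ≤ c v).card = s → NSolvable G c r 2}

namespace PebAux

variable {V : Type*} {G : SimpleGraph V}

lemma move_add {c d : V → ℕ} (e : V → ℕ) (h : PebblingMove G c d) :
    PebblingMove G (fun v => c v + e v) (fun v => d v + e v) := by
  obtain ⟨v, w, hadj, hv2, hdv, hdw, hother⟩ := h
  refine ⟨v, w, hadj, by show 2 ≤ c v + e v; omega, ?_, ?_, ?_⟩
  · show d v + e v = (c v + e v) - 2; omega
  · show d w + e w = (c w + e w) + 1; omega
  · intro u hu1 hu2; show d u + e u = c u + e u; rw [hother u hu1 hu2]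

lemma rtg_add {c d : V → ℕ} (h : Relation.ReflTransGen (PebblingMove G) c d) (e : V → ℕ) :
    Relation.ReflTransGen (PebblingMove G) (fun v => c v + e v) (fun v => d v + e v) := by
  induction h with
  | refl => exact .refl
  | tail _ hstep ih => exact ih.tail (move_add e hstep)

lemma nsolvable_mono {c c' : V → ℕ} {r : V} {t : ℕ} (hle : ∀ v, c v ≤ c' v)
    (h : NSolvable G c r t) : NSolvable G c' r t := by
  obtain ⟨d, hd, hr⟩ := h
  refine ⟨fun v => d v + (c' v - c v), ?_, by show t ≤ d r + (c' r - c r); omega⟩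
  have h2 := rtg_add hd (fun v => c' v - c v)
  have hc : (fun v => c v + (c' v - c v)) = c' := funext fun v => by have := hle v; omega
  rw [hc] at h2; exact h2

variable [DecidableEq V]

lemma moveMany {v w : V} (hadj : G.Adj v w) :
    ∀ (k : ℕ) (c : V → ℕ), 2 * k ≤ c v →
    Relation.ReflTransGen (PebblingMove G)
      c (fun u => if u = v then c v - 2 * k else if u = w then c w + k else c u) := by
  intro k
  induction k with
  | zero =>
    intro c _
    have hvw : v ≠ w := G.ne_of_adj hadj
    have h0 : (fun u => if u = v then c v - 2 * 0 else if u = w then c w + 0 else c u) = c := by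
      funext u
      by_cases h1 : u = v
      · simp [h1]
      · by_cases h2 : u = w <;> simp [h1, h2, Ne.symm hvw]
    rw [h0]
  | succ k ih =>
    intro c hc
    have hvw : v ≠ w := G.ne_of_adj hadj
    set c1 : V → ℕ := fun u => if u = v then c v - 2 else if u = w then c w + 1 else c u with hc1
    have h1v : c1 v = c v - 2 := by simp [hc1]
    have h1w : c1 w = c w + 1 := by simp [hc1, Ne.symm hvw]
    have hstep : PebblingMove G c c1 := by
      refine ⟨v, w, hadj, by omega, h1v, h1w, ?_⟩
      intro u hu1 hu2; simp [hc1, hu1, hu2]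
    have hrest := ih c1 (by omega)
    have heq : (fun u => if u = v then c1 v - 2 * k else if u = w then c1 w + k else c1 u)
        = (fun u => if u = v then c v - 2 * (k + 1) else if u = w then c w + (k + 1) else c u) := by
      funext u
      by_cases h1 : u = v
      · simp [h1, h1v]; omega
      · by_cases h2 : u = w
        · simp [h1, h2, h1w, Ne.symm hvw]; omega
        · simp [hc1, h1, h2]
    rw [heq] at hrest
    exact Relation.ReflTransGen.head hstep hrest

lemma nsolvable_of_walk {r : V} (t : ℕ) :
    ∀ {v : V} (p : G.Walk v r) (c : V → ℕ), t * 2 ^ p.length ≤ c v → NSolvable G c r t := by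
  intro v p
  induction p with
  | nil => intro c hc; exact ⟨c, .refl, by simpa using hc⟩
  | @cons v b r hadj q ih =>
    intro c hc
    rw [Walk.length_cons, pow_succ] at hc
    have hle : 2 * (t * 2 ^ q.length) ≤ c v := by
      rw [show 2 * (t * 2 ^ q.length) = t * (2 ^ q.length * 2) by ring]; exact hc
    have hmv := moveMany hadj (t * 2 ^ q.length) c hle
    have hvb : v ≠ b := G.ne_of_adj hadj
    obtain ⟨d, hd, hr⟩ := ih (fun u => if u = v then c v - 2 * (t * 2 ^ q.length)
        else if u = b then c b + t * 2 ^ q.length else c u)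
      (by simp only [if_neg (Ne.symm hvb), if_pos rfl]; exact Nat.le_add_left _ _)
    exact ⟨d, hmv.trans hd, hr⟩

end PebAux

namespace PebAux

variable {V : Type*} {G : SimpleGraph V}

lemma big_in_set [Fintype V] (hG : G.Connected) (c : V → ℕ)
    (hc : (∑ v, c v) = Fintype.card V * 2 ^ Fintype.card V) (r : V) : Solvable G c r := by
  classical
  have hne : Nonempty V := hG.nonempty
  have hcard : 1 ≤ Fintype.card V := Fintype.card_pos
  have hbig : ∃ v, 2 ^ Fintype.card V ≤ c v := by
    by_contra hno
    push_neg at hno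
    have hle : ∑ v, c v ≤ ∑ _v : V, (2 ^ Fintype.card V - 1) :=
      Finset.sum_le_sum fun v _ => by have := hno v; omega
    rw [Finset.sum_const, Finset.card_univ, smul_eq_mul] at hle
    have h2 : 1 ≤ 2 ^ Fintype.card V := Nat.one_le_two_pow
    rw [hc] at hle
    have h4 : Fintype.card V * (2 ^ Fintype.card V - 1) + Fintype.card V * 1
        = Fintype.card V * 2 ^ Fintype.card V := by
      rw [← Nat.mul_add]; congr 1; omega
    linarith
  obtain ⟨v, hv⟩ := hbig
  obtain ⟨p⟩ := hG.preconnected v r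
  have hlen : (p.toPath : G.Walk v r).length < Fintype.card V := p.toPath.2.length_lt
  refine nsolvable_of_walk 1 (p.toPath : G.Walk v r) c ?_
  calc 1 * 2 ^ (p.toPath : G.Walk v r).length ≤ 2 ^ Fintype.card V := by
        rw [one_mul]; exact Nat.pow_le_pow_right (by norm_num) hlen.le
    _ ≤ c v := hv

lemma exists_sub [Fintype V] :
    ∀ (d : ℕ) (c : V → ℕ) (k : ℕ), (∑ v, c v) = k + d →
      ∃ c₁ : V → ℕ, (∀ v, c₁ v ≤ c v) ∧ (∑ v, c₁ v) = k := by
  classical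
  intro d
  induction d with
  | zero => intro c k h; exact ⟨c, fun _ => le_rfl, by simpa using h⟩
  | succ d ih =>
    intro c k h
    have hpos : ∃ v, 1 ≤ c v := by
      by_contra h0
      push_neg at h0
      have : ∑ v, c v = 0 := Finset.sum_eq_zero fun v _ => by have := h0 v; omega
      omega
    obtain ⟨v, hv⟩ := hpos
    set c' : V → ℕ := fun u => if u = v then c u - 1 else c u with hc'
    have hsum : ∑ u, c' u = k + d := by
      have h1 : ∑ u, c' u = ∑ u ∈ Finset.univ.erase v, c' u + c' v :=
        (Finset.sum_erase_add _ _ (Finset.mem_univ v)).symm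
      have h2 : ∑ u, c u = ∑ u ∈ Finset.univ.erase v, c u + c v :=
        (Finset.sum_erase_add _ _ (Finset.mem_univ v)).symm
      have h3 : ∑ u ∈ Finset.univ.erase v, c' u = ∑ u ∈ Finset.univ.erase v, c u :=
        Finset.sum_congr rfl fun u hu => by
          simp [hc', (Finset.mem_erase.mp hu).1]
      have h4 : c' v = c v - 1 := by simp [hc']
      omega
    obtain ⟨c₁, h1, h2⟩ := ih c' k hsum
    refine ⟨c₁, fun u => (h1 u).trans ?_, h2⟩
    simp only [hc']; split <;> omega

lemma pi_mem [Fintype V] (hG : G.Connected) :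
    ∀ c : V → ℕ, (∑ v, c v) = pebblingNumber G → ∀ r, Solvable G c r :=
  Nat.sInf_mem (⟨Fintype.card V * 2 ^ Fintype.card V, fun c hc r => big_in_set hG c hc r⟩ :
    Set.Nonempty {k | ∀ c : V → ℕ, (∑ v, c v) = k → ∀ r, Solvable G c r})

lemma solvable_of_pi_le [Fintype V] (hG : G.Connected) {c : V → ℕ} (r : V)
    (h : pebblingNumber G ≤ ∑ v, c v) : Solvable G c r := by
  obtain ⟨c₁, hle, hsum⟩ := exists_sub ((∑ v, c v) - pebblingNumber G) c (pebblingNumber G)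
    (by omega)
  exact nsolvable_mono hle (pi_mem hG c₁ hsum r)

lemma nsolvable_of_sum [Fintype V] (hG : G.Connected) :
    ∀ (a : ℕ) (c : V → ℕ) (r : V), a * pebblingNumber G ≤ ∑ v, c v → NSolvable G c r a := by
  classical
  intro a
  induction a with
  | zero => intro c r _; exact ⟨c, .refl, Nat.zero_le _⟩
  | succ a ih =>
    intro c r h
    have hpi : pebblingNumber G ≤ ∑ v, c v := le_trans (by nlinarith) h
    obtain ⟨c₁, hle, hsum⟩ := exists_sub ((∑ v, c v) - pebblingNumber G) c (pebblingNumber G)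
      (by omega)
    obtain ⟨d₁, hd₁, hr₁⟩ := pi_mem hG c₁ hsum r
    set e : V → ℕ := fun v => c v - c₁ v with he
    have step1 : Relation.ReflTransGen (PebblingMove G) c (fun v => d₁ v + e v) := by
      have h2 := rtg_add hd₁ e
      have hc : (fun v => c₁ v + e v) = c := funext fun v => by
        simp only [he]; have := hle v; omega
      rw [hc] at h2; exact h2
    set f : V → ℕ := fun v => e v + (if v = r then d₁ v - 1 else d₁ v) with hf
    have hsume : ∑ v, e v = (∑ v, c v) - pebblingNumber G := by
      have : ∑ v, (e v + c₁ v) = ∑ v, c v := Finset.sum_congr rfl fun v _ => by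
        simp only [he]; have := hle v; omega
      rw [Finset.sum_add_distrib] at this
      omega
    have hsumf : a * pebblingNumber G ≤ ∑ v, f v := by
      have h1 : ∑ v, e v ≤ ∑ v, f v := by
        simp only [hf]
        rw [Finset.sum_add_distrib]
        exact Nat.le_add_right _ _
      have h2 : a * pebblingNumber G ≤ ∑ v, e v := by
        rw [hsume]
        have : (a + 1) * pebblingNumber G = a * pebblingNumber G + pebblingNumber G := by ring
        omega
      omega
    obtain ⟨g, hg, hgr⟩ := ih f r hsumf
    refine ⟨fun v => g v + (if v = r then 1 else 0), step1.trans ?_,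
      by show a + 1 ≤ g r + (if r = r then 1 else 0); simp; omega⟩
    have h3 := rtg_add hg (fun v => if v = r then 1 else 0)
    have h4 : (fun v => f v + (if v = r then 1 else 0)) = (fun v => d₁ v + e v) := by
      funext v
      simp only [hf]
      by_cases hvr : v = r
      · subst hvr; simp; omega
      · simp [hvr]; omega
    rw [h4] at h3; exact h3

end PebAux

namespace PebAux

variable {α β : Type*} {G : SimpleGraph α} {H : SimpleGraph β}

lemma slice_lift [DecidableEq α] [DecidableEq β] (j : β) {x y : α → ℕ}
    (h : Relation.ReflTransGen (PebblingMove G) x y) :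
    ∀ C : α × β → ℕ, (∀ i, C (i, j) = x i) →
      ∃ D : α × β → ℕ, Relation.ReflTransGen (PebblingMove (G.boxProd H)) C D ∧
        (∀ i, D (i, j) = y i) ∧ ∀ p : α × β, p.2 ≠ j → D p = C p := by
  induction h with
  | refl => intro C hC; exact ⟨C, .refl, hC, fun _ _ => rfl⟩
  | @tail b y _ hstep ih =>
    intro C hC
    obtain ⟨D, hD, hDj, hDo⟩ := ih C hC
    obtain ⟨v, w, hadj, hv, hyv, hyw, hyo⟩ := hstep
    have hvw : v ≠ w := G.ne_of_adj hadj
    set D' : α × β → ℕ := fun p => if p = (v, j) then D p - 2 else if p = (w, j) then D p + 1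
      else D p with hD'
    have hstep' : PebblingMove (G.boxProd H) D D' := by
      refine ⟨(v, j), (w, j), SimpleGraph.boxProd_adj.mpr (Or.inl ⟨hadj, rfl⟩),
        by rw [hDj]; exact hv, by simp [hD'], ?_, ?_⟩
      · have : (w, j) ≠ (v, j) := by simp [Ne.symm hvw]
        simp [hD', this]
      · intro p h1 h2; simp [hD', h1, h2]
    refine ⟨D', hD.tail hstep', ?_, ?_⟩
    · intro i
      by_cases h1 : i = v
      · subst h1; simp only [hD', if_pos rfl]; rw [hDj, hyv]
      · by_cases h2 : i = w
        · have hne : ((i, j) : α × β) ≠ (v, j) := by simp [h1]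
          have heq : ((i, j) : α × β) = (w, j) := by rw [h2]
          simp only [hD', if_neg hne, if_pos heq]
          rw [hDj i, h2, hyw]
        · have hne1 : (i, j) ≠ (v, j) := by simp [h1]
          have hne2 : (i, j) ≠ (w, j) := by simp [h2]
          simp only [hD', if_neg hne1, if_neg hne2]
          rw [hDj, hyo i h1 h2]
    · intro p hp
      have hne1 : p ≠ (v, j) := by intro hh; rw [hh] at hp; exact hp rfl
      have hne2 : p ≠ (w, j) := by intro hh; rw [hh] at hp; exact hp rfl
      simp only [hD', if_neg hne1, if_neg hne2]
      exact hDo p hp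

lemma column_lift [DecidableEq α] [DecidableEq β] (i0 : α) {x y : β → ℕ}
    (h : Relation.ReflTransGen (PebblingMove H) x y) :
    ∀ C : α × β → ℕ, (∀ j, C (i0, j) = x j) →
      ∃ D : α × β → ℕ, Relation.ReflTransGen (PebblingMove (G.boxProd H)) C D ∧
        (∀ j, D (i0, j) = y j) := by
  induction h with
  | refl => intro C hC; exact ⟨C, .refl, hC⟩
  | @tail b y _ hstep ih =>
    intro C hC
    obtain ⟨D, hD, hDj⟩ := ih C hC
    obtain ⟨v, w, hadj, hv, hyv, hyw, hyo⟩ := hstep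
    have hvw : v ≠ w := H.ne_of_adj hadj
    set D' : α × β → ℕ := fun p => if p = (i0, v) then D p - 2 else if p = (i0, w) then D p + 1
      else D p with hD'
    have hstep' : PebblingMove (G.boxProd H) D D' := by
      refine ⟨(i0, v), (i0, w), SimpleGraph.boxProd_adj.mpr (Or.inr ⟨hadj, rfl⟩),
        by rw [hDj]; exact hv, by simp [hD'], ?_, ?_⟩
      · have : (i0, w) ≠ (i0, v) := by simp [Ne.symm hvw]
        simp [hD', this]
      · intro p h1 h2; simp [hD', h1, h2]
    refine ⟨D', hD.tail hstep', ?_⟩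
    intro j
    by_cases h1 : j = v
    · subst h1; simp only [hD', if_pos rfl]; rw [hDj, hyv]
    · by_cases h2 : j = w
      · have hne : ((i0, j) : α × β) ≠ (i0, v) := by simp [h1]
        have heq : ((i0, j) : α × β) = (i0, w) := by rw [h2]
        simp only [hD', if_neg hne, if_pos heq]
        rw [hDj j, h2, hyw]
      · have hne1 : (i0, j) ≠ (i0, v) := by simp [h1]
        have hne2 : (i0, j) ≠ (i0, w) := by simp [h2]
        simp only [hD', if_neg hne1, if_neg hne2]
        rw [hDj, hyo j h1 h2]

lemma all_slices [Fintype α] [Fintype β] [DecidableEq α] [DecidableEq β]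
    (hG : G.Connected) (c : α × β → ℕ) (rG : α) (a : β → ℕ)
    (ha : ∀ j, a j * pebblingNumber G ≤ ∑ i, c (i, j)) :
    ∀ s : Finset β, ∃ D : α × β → ℕ,
      Relation.ReflTransGen (PebblingMove (G.boxProd H)) c D ∧
      (∀ j ∈ s, a j ≤ D (rG, j)) ∧ (∀ p : α × β, p.2 ∉ s → D p = c p) := by
  intro s
  induction s using Finset.induction_on with
  | empty => exact ⟨c, .refl, fun j hj => absurd hj (Finset.notMem_empty j), fun _ _ => rfl⟩
  | @insert j s hjs ih =>
    obtain ⟨D, hD, hge, hout⟩ := ih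
    have hslice : ∀ i, D (i, j) = c (i, j) := fun i => hout (i, j) hjs
    obtain ⟨xs, hxs, hxr⟩ := nsolvable_of_sum hG (a j) (fun i => c (i, j)) rG (ha j)
    obtain ⟨D', hD', hD'j, hD'o⟩ := slice_lift (H := H) j hxs D hslice
    refine ⟨D', hD.trans hD', ?_, ?_⟩
    · intro j' hj'
      rcases Finset.mem_insert.mp hj' with h1 | h1
      · subst h1; rw [hD'j rG]; exact hxr
      · have : j' ≠ j := fun hh => hjs (hh ▸ h1)
        rw [hD'o (rG, j') this]; exact hge j' h1
    · intro p hp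
      rw [Finset.mem_insert, not_or] at hp
      rw [hD'o p hp.1]; exact hout p hp.2

end PebAux


/-- If the total `G`-set count of a configuration on `G □ H` is at least
`π(H)`, then the configuration is `(r_G, r_H)`-solvable. -/
theorem stmt0 {α β : Type*} [Fintype α] [Fintype β]
    (G : SimpleGraph α) (H : SimpleGraph β) (hG : G.Connected) (hH : H.Connected)
    (c : α × β → ℕ) (rG : α) (rH : β)
    (h : pebblingNumber H ≤ ∑ j : β, (∑ i : α, c (i, j)) / pebblingNumber G) :
    Solvable (G.boxProd H) c (rG, rH) := by
  classical
  set a : β → ℕ := fun j => (∑ i, c (i, j)) / pebblingNumber G with ha_def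
  have ha : ∀ j, a j * pebblingNumber G ≤ ∑ i, c (i, j) := fun j => Nat.div_mul_le_self _ _
  obtain ⟨D, hD, hge, -⟩ := PebAux.all_slices (H := H) hG c rG a ha Finset.univ
  have he : pebblingNumber H ≤ ∑ j, D (rG, j) :=
    le_trans h (Finset.sum_le_sum fun j _ => hge j (Finset.mem_univ j))
  obtain ⟨f, hf, hfr⟩ := PebAux.solvable_of_pi_le hH rH he
  obtain ⟨E, hE, hEj⟩ := PebAux.column_lift (G := G) rG hf D (fun j => rfl)
  exact ⟨E, hD.trans hE, by rw [hEj rH]; exact hfr⟩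
end

section
/- Let G and H be finite connected simple graphs and fix a root (r_G, r_H) of G□H. Every pebbling configuration c on G□H that is not (r_G, r_H)-solvable satisfies Σ_{j∈V(H)} ⌊c̃_j / π(G)⌋ ≤ π(H) − 1, and symmetrically Σ_{i∈V(G)} ⌊(Σ_{j∈V(H)} c(i,j)) / π(H)⌋ ≤ π(G) − 1. -/
open SimpleGraph Finset

section Aux
variable {V : Type*} {G : SimpleGraph V}

lemma move_add {a a' : V → ℕ} (b : V → ℕ) (h : PebblingMove G a a') :
    PebblingMove G (fun v => a v + b v) (fun v => a' v + b v) := by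
  obtain ⟨v, w, hadj, h2, hv, hw, ho⟩ := h
  refine ⟨v, w, hadj, show 2 ≤ a v + b v by omega, ?_, ?_, fun u h1 h2 => ?_⟩
  · show a' v + b v = a v + b v - 2; omega
  · show a' w + b w = a w + b w + 1; omega
  · show a' u + b u = a u + b u; rw [ho u h1 h2]

lemma rtg_add {a a' : V → ℕ} (b : V → ℕ)
    (h : Relation.ReflTransGen (PebblingMove G) a a') :
    Relation.ReflTransGen (PebblingMove G) (fun v => a v + b v) (fun v => a' v + b v) :=
  Relation.ReflTransGen.lift (fun (x : V → ℕ) v => x v + b v) (fun _ _ hm => move_add b hm) _ _ h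

lemma exists_subconfig [Fintype V] (a : V → ℕ) :
    ∀ m, m ≤ ∑ v, a v → ∃ b : V → ℕ, (∀ v, b v ≤ a v) ∧ ∑ v, b v = m := by
  classical
  intro m
  induction m with
  | zero => exact fun _ => ⟨fun _ => 0, fun v => Nat.zero_le _, by simp⟩
  | succ n ih =>
    intro h
    obtain ⟨b, hb, hs⟩ := ih (Nat.le_of_succ_le h)
    have hex : ∃ v, b v < a v := by
      by_contra hc
      push_neg at hc
      have := Finset.sum_le_sum (fun v (_ : v ∈ univ) => hc v)
      omega
    obtain ⟨v, hv⟩ := hex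
    refine ⟨Function.update b v (b v + 1), fun u => ?_, ?_⟩
    · rcases eq_or_ne u v with rfl | hne
      · simpa using hv
      · simp [Function.update_of_ne hne, hb u]
    · rw [Finset.sum_update_of_mem (Finset.mem_univ v)]
      have h2 := Finset.add_sum_erase univ b (Finset.mem_univ v)
      have h3 : univ \ {v} = univ.erase v := by ext u; simp [Finset.mem_erase, and_comm]
      rw [h3]
      omega

lemma nsolvable_of_mul [Fintype V] {k : ℕ}
    (hk : ∀ a : V → ℕ, (∑ v, a v) = k → ∀ r, Solvable G a r) :
    ∀ (t : ℕ) (a : V → ℕ) (r : V), t * k ≤ ∑ v, a v → NSolvable G a r t := by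
  intro t
  induction t with
  | zero => exact fun a r _ => ⟨a, .refl, Nat.zero_le _⟩
  | succ n ih =>
    intro a r h
    have hmul : (n + 1) * k = n * k + k := by ring
    obtain ⟨b, hb, hsb⟩ := exists_subconfig a k (by omega)
    set d : V → ℕ := fun v => a v - b v with hd
    have hab : a = fun v => b v + d v := by funext v; have := hb v; simp [hd]; omega
    have hsum : ∑ v, b v + ∑ v, d v = ∑ v, a v := by
      rw [← Finset.sum_add_distrib]
      exact Finset.sum_congr rfl (fun v _ => by have := hb v; simp [hd]; omega)
    obtain ⟨b', hb', h1⟩ := hk b hsb r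
    obtain ⟨d'', hd'', h2⟩ := ih d r (by omega)
    have step1 : Relation.ReflTransGen (PebblingMove G) a (fun v => b' v + d v) := by
      rw [hab]; exact rtg_add d hb'
    have step2 : Relation.ReflTransGen (PebblingMove G)
        (fun v => b' v + d v) (fun v => b' v + d'' v) := by
      have e1 : (fun v => b' v + d v) = (fun v => d v + b' v) := by funext v; omega
      have e2 : (fun v => b' v + d'' v) = (fun v => d'' v + b' v) := by funext v; omega
      rw [e1, e2]
      exact rtg_add b' hd''
    exact ⟨_, step1.trans step2, show n + 1 ≤ b' r + d'' r by omega⟩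

end Aux

section Aux2
variable {V : Type*} {G : SimpleGraph V}

lemma rtg_edge_pump {v w : V} (hadj : G.Adj v w) :
    ∀ (k : ℕ) (c : V → ℕ), 2 * k ≤ c v →
      ∃ c', Relation.ReflTransGen (PebblingMove G) c c' ∧ c w + k ≤ c' w := by
  intro k
  induction k with
  | zero => exact fun c _ => ⟨c, .refl, by omega⟩
  | succ n ih =>
    intro c h
    have hvw : v ≠ w := hadj.ne
    classical
    set c₁ : V → ℕ := fun u => if u = v then c v - 2 else if u = w then c w + 1 else c u
      with hc₁
    have hm : PebblingMove G c c₁ :=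
      ⟨v, w, hadj, by omega, by simp [hc₁], by simp [hc₁, hvw.symm],
        fun u h1 h2 => by simp [hc₁, h1, h2]⟩
    obtain ⟨c', hrtg, hw⟩ := ih c₁ (by simp [hc₁]; omega)
    refine ⟨c', .head hm hrtg, ?_⟩
    have : c₁ w = c w + 1 := by simp [hc₁, hvw.symm]
    omega

lemma solvable_of_walk {v r : V} (p : G.Walk v r) :
    ∀ c : V → ℕ, 2 ^ p.length ≤ c v → Solvable G c r := by
  induction p with
  | nil => exact fun c h => ⟨c, .refl, by simpa using h⟩
  | cons hadj p ih =>
    intro c h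
    rw [Walk.length_cons, pow_succ] at h
    obtain ⟨c₁, h1, h2⟩ := rtg_edge_pump hadj (2 ^ p.length) c (by omega)
    obtain ⟨c₂, h3, h4⟩ := ih c₁ (by omega)
    exact ⟨c₂, h1.trans h3, h4⟩

lemma pebbling_set_nonempty [Fintype V] (hG : G.Connected) :
    ∃ k, ∀ c : V → ℕ, (∑ u, c u) = k → ∀ r, Solvable G c r := by
  classical
  refine ⟨Fintype.card V * 2 ^ Fintype.card V + 1, fun c hc r => ?_⟩
  have hex : ∃ v, 2 ^ Fintype.card V < c v := by
    by_contra hcon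
    push_neg at hcon
    have := Finset.sum_le_sum (fun v (_ : v ∈ univ) => hcon v)
    simp only [Finset.sum_const, Finset.card_univ, smul_eq_mul] at this
    omega
  obtain ⟨v, hv⟩ := hex
  obtain ⟨p⟩ := hG.preconnected v r
  refine solvable_of_walk (p.toPath : G.Path v r).val c ?_
  have hlt : ((p.toPath : G.Path v r).val).length < Fintype.card V :=
    (p.toPath : G.Path v r).property.length_lt
  calc 2 ^ ((p.toPath : G.Path v r).val).length ≤ 2 ^ Fintype.card V :=
        Nat.pow_le_pow_right (by norm_num) hlt.le
    _ ≤ c v := hv.le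

lemma pebbling_mem [Fintype V] (hG : G.Connected) :
    ∀ c : V → ℕ, (∑ u, c u) = pebblingNumber G → ∀ r, Solvable G c r :=
  Nat.sInf_mem (pebbling_set_nonempty hG)

lemma move_sum_lt [Fintype V] {c c' : V → ℕ} (h : PebblingMove G c c') :
    ∑ u, c' u < ∑ u, c u := by
  classical
  obtain ⟨v, w, hadj, h2, hv, hw, ho⟩ := h
  have hvw : v ≠ w := hadj.ne
  have key : ∀ u, c' u + (if u = v then 2 else 0) = c u + (if u = w then 1 else 0) := by
    intro u
    rcases eq_or_ne u v with rfl | h1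
    · simp [hvw]; omega
    · rcases eq_or_ne u w with rfl | h2'
      · simp [h1]; omega
      · simp [h1, h2', ho u h1 h2']
  have hsum := Finset.sum_congr rfl (fun u (_ : u ∈ univ) => key u)
  rw [Finset.sum_add_distrib, Finset.sum_add_distrib] at hsum
  rw [Finset.sum_ite_eq' univ v (fun _ => 2), Finset.sum_ite_eq' univ w (fun _ => 1)] at hsum
  simp at hsum
  omega

lemma rtg_sum_le [Fintype V] {c c' : V → ℕ}
    (h : Relation.ReflTransGen (PebblingMove G) c c') : ∑ u, c' u ≤ ∑ u, c u := by
  induction h with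
  | refl => exact le_rfl
  | tail _ hm ih => exact le_trans (move_sum_lt hm).le ih

lemma one_le_pebblingNumber [Fintype V] (hG : G.Connected) : 1 ≤ pebblingNumber G := by
  by_contra hcon
  have h0 : pebblingNumber G = 0 := by omega
  obtain ⟨r⟩ := hG.nonempty
  obtain ⟨c', hrtg, hr⟩ := pebbling_mem hG (fun _ => 0) (by simp [h0]) r
  have hle := rtg_sum_le hrtg
  have hsingle : c' r ≤ ∑ u, c' u :=
    Finset.single_le_sum (fun _ _ => Nat.zero_le _) (mem_univ r)
  simp only [Finset.sum_const_zero] at hle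
  omega
end Aux2

section Prod
variable {α β : Type*} {G : SimpleGraph α} {H : SimpleGraph β}

lemma slice_move (j : β) {a a' : α → ℕ} (h : PebblingMove G a a') (C : α × β → ℕ)
    (hC : ∀ i, C (i, j) = a i) :
    ∃ C', PebblingMove (G.boxProd H) C C' ∧ (∀ i, C' (i, j) = a' i) ∧
      ∀ i j', j' ≠ j → C' (i, j') = C (i, j') := by
  classical
  obtain ⟨v, w, hadj, h2, hv, hw, ho⟩ := h
  refine ⟨fun p => if p.2 = j then a' p.1 else C p,
    ⟨(v, j), (w, j), ?_, ?_, ?_, ?_, ?_⟩, fun i => by simp, fun i j' hj => by simp [hj]⟩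
  · exact (SimpleGraph.boxProd_adj).2 (Or.inl ⟨hadj, rfl⟩)
  · simpa [hC v] using h2
  · simp [hv, hC v]
  · simp [hw, hC w]
  · rintro ⟨u, j'⟩ h1 h2'
    by_cases hj : j' = j
    · subst hj
      have hu1 : u ≠ v := fun h => h1 (by rw [h])
      have hu2 : u ≠ w := fun h => h2' (by rw [h])
      simp [ho u hu1 hu2, hC u]
    · simp [hj]

lemma slice_rtg (j : β) {a d : α → ℕ}
    (h : Relation.ReflTransGen (PebblingMove G) a d) (C : α × β → ℕ)
    (hC : ∀ i, C (i, j) = a i) :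
    ∃ C', Relation.ReflTransGen (PebblingMove (G.boxProd H)) C C' ∧
      (∀ i, C' (i, j) = d i) ∧ ∀ i j', j' ≠ j → C' (i, j') = C (i, j') := by
  induction h with
  | refl => exact ⟨C, .refl, hC, fun _ _ _ => rfl⟩
  | tail _ hmove ih =>
    obtain ⟨C₁, h1, h2, h3⟩ := ih
    obtain ⟨C₂, h4, h5, h6⟩ := slice_move j hmove C₁ h2
    exact ⟨C₂, h1.tail h4, h5, fun i j' hj => by rw [h6 i j' hj, h3 i j' hj]⟩

lemma stepA [Fintype α] [DecidableEq α] (hG : G.Connected) (rG : α) (j : β) (t : ℕ) (C : α × β → ℕ)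
    (ht : t * pebblingNumber G ≤ ∑ i ∈ univ.erase rG, C (i, j)) :
    ∃ C', Relation.ReflTransGen (PebblingMove (G.boxProd H)) C C' ∧
      C (rG, j) + t ≤ C' (rG, j) ∧
      (∑ i ∈ univ.erase rG, C (i, j)) - t * pebblingNumber G ≤
        ∑ i ∈ univ.erase rG, C' (i, j) ∧
      ∀ i j', j' ≠ j → C' (i, j') = C (i, j') := by
  classical
  set a : α → ℕ := fun i => C (i, j) with ha
  set e : α → ℕ := fun i => if i = rG then 0 else a i with he
  have hse : ∑ i, e i = ∑ i ∈ univ.erase rG, a i := by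
    rw [← Finset.add_sum_erase univ e (mem_univ rG)]
    have h0 : e rG = 0 := by simp [he]
    rw [h0, zero_add]
    exact Finset.sum_congr rfl (fun i hi => by simp [he, (Finset.mem_erase.1 hi).1])
  obtain ⟨b, hb, hsb⟩ := exists_subconfig e (t * pebblingNumber G) (by rw [hse]; exact ht)
  have hba : ∀ i, b i ≤ a i := by
    intro i
    refine le_trans (hb i) ?_
    by_cases hi : i = rG <;> simp [he, hi]
  set d : α → ℕ := fun i => a i - b i with hd
  have had : a = fun i => b i + d i := funext fun i => by
    have := hba i; simp only [hd]; omega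
  obtain ⟨b', hb', hbt⟩ := nsolvable_of_mul (pebbling_mem hG) t b rG (le_of_eq hsb.symm)
  have hrtg : Relation.ReflTransGen (PebblingMove G) a (fun i => b' i + d i) := by
    rw [had]; exact rtg_add d hb'
  obtain ⟨C', h1, h2, h3⟩ := slice_rtg j hrtg C (fun i => rfl)
  refine ⟨C', h1, ?_, ?_, h3⟩
  · have h2r := h2 rG
    have hbrG : b rG = 0 := by
      have := hb rG
      simpa [he] using this
    have hdr : d rG = a rG := by simp [hd, hbrG]
    rw [h2r, hdr]
    have haC : a rG = C (rG, j) := rfl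
    omega
  · have hsum2 : ∑ i ∈ univ.erase rG, d i + ∑ i ∈ univ.erase rG, b i
        = ∑ i ∈ univ.erase rG, a i := by
      rw [← Finset.sum_add_distrib]
      exact Finset.sum_congr rfl (fun i _ => by have := hba i; simp only [hd]; omega)
    have hble : ∑ i ∈ univ.erase rG, b i ≤ t * pebblingNumber G := by
      rw [← hsb]
      exact Finset.sum_le_sum_of_subset (Finset.subset_univ _)
    have hfin : ∑ i ∈ univ.erase rG, d i ≤ ∑ i ∈ univ.erase rG, C' (i, j) :=
      Finset.sum_le_sum (fun i _ => by rw [h2 i]; omega)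
    have hee : (univ.erase rG).sum a = ∑ i ∈ univ.erase rG, a i := rfl
    omega

lemma sim_step [Fintype α] [DecidableEq α] (hG : G.Connected) (rG : α)
    {q q' : β → ℕ} (hq : PebblingMove H q q') (C : α × β → ℕ)
    (hinv : ∀ u, q u ≤ C (rG, u) + (∑ i ∈ univ.erase rG, C (i, u)) / pebblingNumber G) :
    ∃ C', Relation.ReflTransGen (PebblingMove (G.boxProd H)) C C' ∧
      ∀ u, q' u ≤ C' (rG, u) + (∑ i ∈ univ.erase rG, C' (i, u)) / pebblingNumber G := by
  classical
  obtain ⟨j, w, hjw, h2q, hqj, hqw, hqo⟩ := hq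
  have hjwne : j ≠ w := hjw.ne
  have hpi : 1 ≤ pebblingNumber G := one_le_pebblingNumber hG
  have hinvj := hinv j
  set t := 2 - C (rG, j) with htdef
  have hts : t ≤ (∑ i ∈ univ.erase rG, C (i, j)) / pebblingNumber G := by
    have hnn := Nat.zero_le ((∑ i ∈ univ.erase rG, C (i, j)) / pebblingNumber G)
    omega
  have htπ : t * pebblingNumber G ≤ ∑ i ∈ univ.erase rG, C (i, j) :=
    le_trans (Nat.mul_le_mul_right _ hts) (Nat.div_mul_le_self _ _)
  obtain ⟨C₁, hrtg1, hC1r, hC1s, hC1o⟩ := stepA hG rG j t C htπ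
  have h2p : 2 ≤ C₁ (rG, j) := by omega
  set C₂ : α × β → ℕ := fun x =>
    if x = (rG, j) then C₁ (rG, j) - 2 else if x = (rG, w) then C₁ (rG, w) + 1 else C₁ x
    with hC₂
  have hne : ((rG, j) : α × β) ≠ (rG, w) := fun hh => hjwne (congrArg Prod.snd hh)
  have hmove : PebblingMove (G.boxProd H) C₁ C₂ :=
    ⟨(rG, j), (rG, w), (SimpleGraph.boxProd_adj).2 (Or.inr ⟨hjw, rfl⟩), h2p,
      by simp [hC₂], by simp [hC₂, hne.symm], fun u h1 h2 => by simp [hC₂, h1, h2]⟩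
  refine ⟨C₂, hrtg1.tail hmove, fun u => ?_⟩
  have hC2j : C₂ (rG, j) = C₁ (rG, j) - 2 := by simp [hC₂]
  have hC2w : C₂ (rG, w) = C₁ (rG, w) + 1 := by simp [hC₂, hne.symm]
  have hC2e : ∀ i u', ¬ (i = rG ∧ u' = j) → ¬ (i = rG ∧ u' = w) → C₂ (i, u') = C₁ (i, u') := by
    intro i u' h1 h2
    have e1 : (i, u') ≠ ((rG, j) : α × β) :=
      fun hh => h1 ⟨congrArg Prod.fst hh, congrArg Prod.snd hh⟩
    have e2 : (i, u') ≠ ((rG, w) : α × β) :=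
      fun hh => h2 ⟨congrArg Prod.fst hh, congrArg Prod.snd hh⟩
    simp [hC₂, e1, e2]
  have hsliceeq : ∀ u', ∑ i ∈ univ.erase rG, C₂ (i, u') = ∑ i ∈ univ.erase rG, C₁ (i, u') := by
    intro u'
    refine Finset.sum_congr rfl (fun i hi => ?_)
    have hirG := (Finset.mem_erase.1 hi).1
    exact hC2e i u' (fun hh => hirG hh.1) (fun hh => hirG hh.1)
  by_cases huj : u = j
  · subst huj
    rw [hqj, hC2j, hsliceeq]
    have hdiv1 : ((∑ i ∈ univ.erase rG, C (i, u)) - t * pebblingNumber G) / pebblingNumber G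
        ≤ (∑ i ∈ univ.erase rG, C₁ (i, u)) / pebblingNumber G :=
      Nat.div_le_div_right hC1s
    have hdiv2 : ((∑ i ∈ univ.erase rG, C (i, u)) - t * pebblingNumber G) / pebblingNumber G
        = (∑ i ∈ univ.erase rG, C (i, u)) / pebblingNumber G - t := by
      have h' := Nat.sub_mul_div (∑ i ∈ univ.erase rG, C (i, u)) (pebblingNumber G) t
      rwa [Nat.mul_comm (pebblingNumber G) t] at h'
    omega
  · by_cases huw : u = w
    · subst huw
      rw [hqw, hC2w, hsliceeq]
      have hCw : C₁ (rG, u) = C (rG, u) := hC1o rG u (fun hh => hjwne hh.symm)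
      have hCsw : ∑ i ∈ univ.erase rG, C₁ (i, u) = ∑ i ∈ univ.erase rG, C (i, u) :=
        Finset.sum_congr rfl (fun i _ => hC1o i u (fun hh => hjwne hh.symm))
      have hiu := hinv u
      rw [hCw, hCsw]
      omega
    · rw [hqo u huj huw]
      have hCu : C₂ (rG, u) = C (rG, u) := by
        rw [hC2e rG u (fun hh => huj hh.2) (fun hh => huw hh.2)]
        exact hC1o rG u huj
      have hCsu : ∑ i ∈ univ.erase rG, C₂ (i, u) = ∑ i ∈ univ.erase rG, C (i, u) := by
        rw [hsliceeq]
        exact Finset.sum_congr rfl (fun i _ => hC1o i u huj)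
      rw [hCu, hCsu]
      exact hinv u

lemma sim_rtg [Fintype α] [DecidableEq α] (hG : G.Connected) (rG : α)
    {q qf : β → ℕ} (h : Relation.ReflTransGen (PebblingMove H) q qf) (C : α × β → ℕ)
    (hinv : ∀ u, q u ≤ C (rG, u) + (∑ i ∈ univ.erase rG, C (i, u)) / pebblingNumber G) :
    ∃ C', Relation.ReflTransGen (PebblingMove (G.boxProd H)) C C' ∧
      ∀ u, qf u ≤ C' (rG, u) + (∑ i ∈ univ.erase rG, C' (i, u)) / pebblingNumber G := by
  induction h with
  | refl => exact ⟨C, .refl, hinv⟩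
  | tail _ hmove ih =>
    obtain ⟨C₁, h1, h2⟩ := ih
    obtain ⟨C₂, h3, h4⟩ := sim_step hG rG hmove C₁ h2
    exact ⟨C₂, h1.trans h3, h4⟩
end Prod

lemma sliceBound {α β : Type*} [Fintype α] [Fintype β]
    (G : SimpleGraph α) (H : SimpleGraph β) (hG : G.Connected) (hH : H.Connected)
    (c : α × β → ℕ) (rG : α) (rH : β)
    (hns : ¬ Solvable (G.boxProd H) c (rG, rH)) :
    ∑ j : β, (∑ i : α, c (i, j)) / pebblingNumber G ≤ pebblingNumber H - 1 := by
  classical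
  by_contra hcon
  push_neg at hcon
  have hH1 : 1 ≤ pebblingNumber H := one_le_pebblingNumber hH
  have hpg1 : 1 ≤ pebblingNumber G := one_le_pebblingNumber hG
  have htot : pebblingNumber H ≤ ∑ j, (∑ i, c (i, j)) / pebblingNumber G := by omega
  obtain ⟨q₀, hq₀le, hq₀sum⟩ := exists_subconfig (fun j => (∑ i, c (i, j)) / pebblingNumber G)
    (pebblingNumber H) htot
  obtain ⟨qf, hqrtg, hqr⟩ := pebbling_mem hH q₀ hq₀sum rH
  have hinv0 : ∀ u, q₀ u ≤ c (rG, u) + (∑ i ∈ univ.erase rG, c (i, u)) / pebblingNumber G := by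
    intro u
    refine le_trans (hq₀le u) ?_
    have hsplit : ∑ i, c (i, u) = c (rG, u) + ∑ i ∈ univ.erase rG, c (i, u) :=
      (Finset.add_sum_erase _ _ (mem_univ rG)).symm
    rw [hsplit]
    calc (c (rG, u) + ∑ i ∈ univ.erase rG, c (i, u)) / pebblingNumber G
        ≤ (pebblingNumber G * c (rG, u) + ∑ i ∈ univ.erase rG, c (i, u)) / pebblingNumber G := by
          refine Nat.div_le_div_right (Nat.add_le_add_right ?_ _)
          calc c (rG, u) = 1 * c (rG, u) := (one_mul _).symm
            _ ≤ pebblingNumber G * c (rG, u) := Nat.mul_le_mul_right _ hpg1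
      _ = c (rG, u) + (∑ i ∈ univ.erase rG, c (i, u)) / pebblingNumber G := Nat.mul_add_div hpg1 _ _
  obtain ⟨C', hrtg, hfinv⟩ := sim_rtg hG rG hqrtg c hinv0
  have hfr := hfinv rH
  apply hns
  rcases Nat.eq_zero_or_pos (C' (rG, rH)) with h0 | hpos
  · have hs1 : 1 ≤ (∑ i ∈ univ.erase rG, C' (i, rH)) / pebblingNumber G := by omega
    have hspg : 1 * pebblingNumber G ≤ ∑ i ∈ univ.erase rG, C' (i, rH) := by
      rw [one_mul]
      exact (Nat.one_le_div_iff hpg1).1 hs1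
    obtain ⟨C'', h1, h2, _, _⟩ := stepA hG rG rH 1 C' hspg
    exact ⟨C'', hrtg.trans h1, by omega⟩
  · exact ⟨C', hrtg, hpos⟩

lemma swap_move {α β : Type*} {G : SimpleGraph α} {H : SimpleGraph β} {d d' : β × α → ℕ}
    (h : PebblingMove (H.boxProd G) d d') :
    PebblingMove (G.boxProd H) (fun p => d (p.2, p.1)) (fun p => d' (p.2, p.1)) := by
  obtain ⟨v, w, hadj, h2, hv, hw, ho⟩ := h
  refine ⟨(v.2, v.1), (w.2, w.1), ?_, by simpa using h2, by simpa using hv,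
    by simpa using hw, ?_⟩
  · rw [SimpleGraph.boxProd_adj] at hadj ⊢
    simpa using hadj.symm
  · rintro ⟨i, j⟩ h1 h2'
    have e1 : (j, i) ≠ v := fun hh => h1 (by rw [← hh])
    have e2 : (j, i) ≠ w := fun hh => h2' (by rw [← hh])
    simpa using ho (j, i) e1 e2

lemma swap_solvable {α β : Type*} {G : SimpleGraph α} {H : SimpleGraph β}
    {c : α × β → ℕ} {rG : α} {rH : β}
    (h : Solvable (H.boxProd G) (fun p => c (p.2, p.1)) (rH, rG)) :
    Solvable (G.boxProd H) c (rG, rH) := by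
  obtain ⟨c', hrtg, hr⟩ := h
  refine ⟨fun p => c' (p.2, p.1), ?_, hr⟩
  have hl := Relation.ReflTransGen.lift
    (fun (d : β × α → ℕ) => fun p : α × β => d (p.2, p.1))
    (fun _ _ hm => swap_move hm) _ _ hrtg
  simpa using hl


/-- Every configuration on `G □ H` that is not `(r_G, r_H)`-solvable has total
`G`-set count at most `π(H) - 1` and total `H`-set count at most `π(G) - 1`. -/
theorem stmt2 {α β : Type*} [Fintype α] [Fintype β]
    (G : SimpleGraph α) (H : SimpleGraph β) (hG : G.Connected) (hH : H.Connected)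
    (c : α × β → ℕ) (rG : α) (rH : β)
    (hns : ¬ Solvable (G.boxProd H) c (rG, rH)) :
    (∑ j : β, (∑ i : α, c (i, j)) / pebblingNumber G ≤ pebblingNumber H - 1) ∧
    (∑ i : α, (∑ j : β, c (i, j)) / pebblingNumber H ≤ pebblingNumber G - 1) := by
  refine ⟨sliceBound G H hG hH c rG rH hns, ?_⟩
  have hns' : ¬ Solvable (H.boxProd G) (fun p => c (p.2, p.1)) (rH, rG) :=
    fun h => hns (swap_solvable h)
  have := sliceBound H G hH hG (fun p => c (p.2, p.1)) rH rG hns'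
  simpa using this
end

section
/- Let G and H be finite connected simple graphs, fix a root (r_G, r_H) of G□H, fix v ∈ V(H), η ∈ {1, …, π(H)}, and a set S ⊆ V(H)\{v} with η ≤ |S| ≤ π(H) and d := max_{w∈S} dist_H(v,w) ≤ ⌈log₂ π(G)⌉ − 1; set χ := (2^d − 1) + |S| − η. Let c be a pebbling configuration on G□H such that: (i) Σ_{j∈V(H)} ⌊c̃_j / π(G)⌋ ≥ π(H) − η; (ii) c̃_v ≥ χ·|V(G)| + extra_v; and (iii) |V(G)|·(|S| − η) + extra_v ≥ Σ_{w∈S} 2^{dist_H(v,w)}·(π(G) − extra_w). Then c is (r_G, r_H)-solvable. -/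
open SimpleGraph Finset

set_option linter.unusedSectionVars false
section Basic
variable {V : Type*} [DecidableEq V] {G : SimpleGraph V}

abbrev Reach (G : SimpleGraph V) : (V → ℕ) → (V → ℕ) → Prop :=
  Relation.ReflTransGen (PebblingMove G)

lemma move_add_s3 {c c' : V → ℕ} (e : V → ℕ) (h : PebblingMove G c c') :
    PebblingMove G (fun u => c u + e u) (fun u => c' u + e u) := by
  obtain ⟨x, y, hadj, hx, hcx, hcy, hrest⟩ := h
  refine ⟨x, y, hadj, by beta_reduce; omega, by beta_reduce; omega, by beta_reduce; omega,
    fun u hux huy => by beta_reduce; rw [hrest u hux huy]⟩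

lemma reach_add {c c' : V → ℕ} (e : V → ℕ) (h : Reach G c c') :
    Reach G (fun u => c u + e u) (fun u => c' u + e u) :=
  Relation.ReflTransGen.lift (fun (f : V → ℕ) u => f u + e u) (fun _ _ hm => move_add_s3 e hm) _ _ h

lemma reach_of_le {c c' c₀ : V → ℕ} (hle : ∀ u, c u ≤ c₀ u) (h : Reach G c c') :
    Reach G c₀ (fun u => c' u + (c₀ u - c u)) := by
  have h2 := reach_add (G := G) (fun u => c₀ u - c u) h
  have he : (fun u => c u + (c₀ u - c u)) = c₀ := funext fun u => by
    have := hle u; omega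
  rwa [he] at h2

lemma transfer {x y : V} (hadj : G.Adj x y) (m : ℕ) :
    ∀ c : V → ℕ, 2 * m ≤ c x →
      ∃ c', Reach G c c' ∧ c' x = c x - 2 * m ∧ c' y = c y + m ∧
        ∀ u, u ≠ x → u ≠ y → c' u = c u := by
  classical
  induction m with
  | zero => exact fun c _ => ⟨c, Relation.ReflTransGen.refl, by omega, by omega, fun _ _ _ => rfl⟩
  | succ m ih =>
    intro c hc
    have hxy : x ≠ y := G.ne_of_adj hadj
    set c1 : V → ℕ := fun u => if u = x then c x - 2 else if u = y then c y + 1 else c u with hc1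
    have hmove : PebblingMove G c c1 :=
      ⟨x, y, hadj, by omega, by simp [hc1], by simp [hc1, hxy.symm], fun u hux huy => by
        simp [hc1, hux, huy]⟩
    have hc1x : c1 x = c x - 2 := by simp [hc1]
    have hc1y : c1 y = c y + 1 := by simp [hc1, hxy.symm]
    obtain ⟨c', hr, h1, h2, h3⟩ := ih c1 (by omega)
    refine ⟨c', Relation.ReflTransGen.head hmove hr, by omega, by omega, ?_⟩
    intro u hux huy; rw [h3 u hux huy]; simp [hc1, hux, huy]

lemma walk_deliver {x y : V} (p : G.Walk x y) :
    ∀ c : V → ℕ, 2 ^ p.length ≤ c x →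
      ∃ c', Reach G c c' ∧
        (∀ u, c u ≤ c' u + (if u = x then 2 ^ p.length else 0)) ∧
        c y + 1 ≤ c' y + (if y = x then 2 ^ p.length else 0) := by
  classical
  induction p with
  | nil =>
    intro c hc
    simp only [SimpleGraph.Walk.length_nil, pow_zero] at hc ⊢
    exact ⟨c, Relation.ReflTransGen.refl, fun u => by split <;> omega, by simp⟩
  | @cons a b yy hadj q ih =>
    intro c hc
    have hab : a ≠ b := G.ne_of_adj hadj
    simp only [SimpleGraph.Walk.length_cons] at hc ⊢
    have h2 : 2 * 2 ^ q.length ≤ c a := by rw [pow_succ] at hc; omega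
    obtain ⟨c1, hr1, e1, e2, e3⟩ := transfer hadj (2 ^ q.length) c h2
    obtain ⟨c2, hr2, f1, f2⟩ := ih c1 (by omega)
    have hpow : (2 : ℕ) ^ (q.length + 1) = 2 * 2 ^ q.length := by rw [pow_succ]; ring
    refine ⟨c2, hr1.trans hr2, ?_, ?_⟩
    · intro u
      have hf := f1 u
      by_cases hua : u = a
      · subst hua
        rw [if_pos rfl, hpow]
        rw [if_neg hab] at hf
        omega
      · rw [if_neg hua]
        by_cases hub : u = b
        · subst hub; rw [if_pos rfl] at hf; omega
        · rw [if_neg hub] at hf; rw [e3 u hua hub] at hf; omega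
    · by_cases hya : yy = a
      · subst hya
        rw [if_pos rfl, hpow]
        rw [if_neg hab] at f2
        omega
      · rw [if_neg hya]
        by_cases hyb : yy = b
        · subst hyb; rw [if_pos rfl] at f2; omega
        · rw [if_neg hyb] at f2; rw [e3 yy hya hyb] at f2; omega

end Basic

set_option linter.unusedSectionVars false

section PN
variable {V : Type*} [DecidableEq V] {G : SimpleGraph V}

lemma exists_le_sum [Fintype V] {c : V → ℕ} {m : ℕ} (h : m ≤ ∑ u, c u) :
    ∃ c1 : V → ℕ, (∀ u, c1 u ≤ c u) ∧ ∑ u, c1 u = m := by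
  induction m with
  | zero => exact ⟨0, fun u => Nat.zero_le _, by simp⟩
  | succ m ih =>
    obtain ⟨c1, hle, hsum⟩ := ih (by omega)
    have hex : ∃ u, c1 u < c u := by
      by_contra hco; push_neg at hco
      have := Finset.sum_le_sum (fun u (_ : u ∈ univ) => hco u)
      omega
    obtain ⟨u0, hu0⟩ := hex
    refine ⟨fun u => c1 u + (if u = u0 then 1 else 0), fun u => ?_, ?_⟩
    · by_cases hh : u = u0
      · beta_reduce; rw [if_pos hh, hh]; omega
      · beta_reduce; rw [if_neg hh]; have := hle u; omega
    · rw [Finset.sum_add_distrib, hsum, Finset.sum_ite_eq' univ u0 (fun _ => 1),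
        if_pos (mem_univ u0)]

lemma solvable_of_pow_dist (hG : G.Connected) {c : V → ℕ} {x r : V}
    (h : 2 ^ G.dist x r ≤ c x) : Solvable G c r := by
  obtain ⟨p, hp⟩ := (hG.preconnected x r).exists_walk_length_eq_dist
  obtain ⟨c', hr, _, h2⟩ := walk_deliver p c (by rw [hp]; exact h)
  refine ⟨c', hr, ?_⟩
  by_cases hrx : r = x
  · subst hrx
    rw [if_pos rfl, hp, SimpleGraph.dist_self, pow_zero] at h2
    have h1 : 1 ≤ c r := by simpa [SimpleGraph.dist_self] using h
    omega
  · rw [if_neg hrx] at h2; omega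

lemma pebblingSet_nonempty [Fintype V] (hG : G.Connected) :
    Set.Nonempty {k | ∀ c : V → ℕ, (∑ u, c u) = k → ∀ r, Solvable G c r} := by
  set D := Finset.univ.sup fun x => Finset.univ.sup fun r => G.dist x r with hD
  refine ⟨Fintype.card V * 2 ^ D, fun c hc r => ?_⟩
  have hne : Nonempty V := hG.nonempty
  have hcard : 1 ≤ Fintype.card V := Fintype.card_pos
  have hex : ∃ x, 2 ^ D ≤ c x := by
    by_contra hco; push_neg at hco
    have h1 : ∑ u, c u ≤ ∑ _u : V, (2 ^ D - 1) :=
      Finset.sum_le_sum fun u _ => by have := hco u; omega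
    rw [Finset.sum_const, Finset.card_univ, smul_eq_mul] at h1
    have h2 : 1 ≤ 2 ^ D := Nat.one_le_two_pow
    have h3 : Fintype.card V * (2 ^ D - 1) + Fintype.card V * 1 = Fintype.card V * 2 ^ D := by
      rw [← Nat.mul_add]; congr 1; omega
    omega
  obtain ⟨x, hx⟩ := hex
  apply solvable_of_pow_dist hG (x := x)
  refine le_trans (Nat.pow_le_pow_right (by norm_num) ?_) hx
  exact le_trans (Finset.le_sup (f := fun r => G.dist x r) (mem_univ r))
    (Finset.le_sup (f := fun x => Finset.univ.sup fun r => G.dist x r) (mem_univ x))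

lemma solvable_of_pebbling_le [Fintype V] (hG : G.Connected) {c : V → ℕ}
    (h : pebblingNumber G ≤ ∑ u, c u) (r : V) : Solvable G c r := by
  have hmem := Nat.sInf_mem (pebblingSet_nonempty hG)
  obtain ⟨c1, hle, hsum⟩ := exists_le_sum h
  obtain ⟨c', hr, hc'⟩ := hmem c1 hsum r
  exact ⟨_, reach_of_le hle hr, by beta_reduce; omega⟩

lemma card_le_pebblingNumber [Fintype V] (hG : G.Connected) :
    Fintype.card V ≤ pebblingNumber G := by
  have hmem := Nat.sInf_mem (pebblingSet_nonempty hG)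
  by_contra hco; push_neg at hco
  have hne : Nonempty V := hG.nonempty
  obtain ⟨r⟩ := hne
  set c0 : V → ℕ := fun u => if u = r then 0 else 1 with hc0
  have hsum0 : ∑ u, c0 u = Fintype.card V - 1 := by
    have key : ∑ u, (c0 u + if u = r then 1 else 0) = Fintype.card V := by
      have he : (fun u => c0 u + if u = r then 1 else 0) = fun _ => 1 :=
        funext fun u => by by_cases h : u = r <;> simp [hc0, h]
      rw [he, Finset.sum_const, Finset.card_univ, smul_eq_mul, Nat.mul_one]
    rw [Finset.sum_add_distrib, Finset.sum_ite_eq' univ r (fun _ => 1),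
      if_pos (mem_univ r)] at key
    have hcard : 1 ≤ Fintype.card V := Fintype.card_pos_iff.mpr ⟨r⟩
    omega
  have hsize : pebblingNumber G ≤ ∑ u, c0 u := by rw [hsum0]; omega
  obtain ⟨c1, hle, hsum⟩ := exists_le_sum hsize
  obtain ⟨c', hr, hc'⟩ := hmem c1 hsum r
  have hstuck : ∀ b, ¬ PebblingMove G c1 b := by
    rintro b ⟨xx, yy, -, hx, -, -, -⟩
    have h1 := hle xx
    have h2 : c0 xx ≤ 1 := by by_cases h : xx = r <;> simp [hc0, h]
    omega
  rw [Relation.reflTransGen_iff_eq hstuck] at hr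
  rw [hr] at hc'
  have h2 : c1 r ≤ c0 r := hle r
  simp [hc0] at h2
  omega

lemma multi_solve [Fintype V] (hG : G.Connected) (k : ℕ) :
    ∀ c : V → ℕ, k * pebblingNumber G ≤ ∑ u, c u → ∀ r, NSolvable G c r k := by
  induction k with
  | zero => exact fun c _ r => ⟨c, Relation.ReflTransGen.refl, Nat.zero_le _⟩
  | succ k ih =>
    intro c hc r
    have hP : pebblingNumber G ≤ ∑ u, c u := by
      have h1 : pebblingNumber G ≤ (k + 1) * pebblingNumber G := by
        calc pebblingNumber G = 1 * pebblingNumber G := (one_mul _).symm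
        _ ≤ (k + 1) * pebblingNumber G := Nat.mul_le_mul_right _ (by omega)
      omega
    obtain ⟨c1, hle, hsum⟩ := exists_le_sum hP
    obtain ⟨c1', hr1, hc1'⟩ := solvable_of_pebbling_le hG (le_of_eq hsum.symm) r
    have hr1' : Reach G c (fun u => c1' u + (c u - c1 u)) := reach_of_le hle hr1
    have key : ∑ u, (c u - c1 u) + ∑ u, c1 u = ∑ u, c u := by
      rw [← Finset.sum_add_distrib]
      exact Finset.sum_congr rfl fun u _ => by have := hle u; omega
    have hsum2 : k * pebblingNumber G ≤ ∑ u, (c u - c1 u) := by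
      have hmul : (k + 1) * pebblingNumber G = k * pebblingNumber G + pebblingNumber G := by ring
      omega
    obtain ⟨c2', hr2, hc2'⟩ := ih _ hsum2 r
    have hr2' : Reach G (fun u => c1' u + (c u - c1 u)) (fun u => c2' u + c1' u) := by
      have h3 := reach_add (G := G) c1' hr2
      have he : (fun u => (c u - c1 u) + c1' u) = fun u => c1' u + (c u - c1 u) :=
        funext fun u => by omega
      rwa [he] at h3
    exact ⟨_, hr1'.trans hr2', by beta_reduce; omega⟩
end PN

section Product
variable {α β : Type*} [DecidableEq α] [DecidableEq β] {G : SimpleGraph α} {H : SimpleGraph β}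

lemma slice_move_s3 (j : β) (c0 : α × β → ℕ) {c c' : α → ℕ} (h : PebblingMove G c c') :
    PebblingMove (G.boxProd H) (fun p => if p.2 = j then c p.1 else c0 p)
      (fun p => if p.2 = j then c' p.1 else c0 p) := by
  obtain ⟨x, y, hadj, hx, hcx, hcy, hrest⟩ := h
  refine ⟨(x, j), (y, j), (SimpleGraph.boxProd_adj).mpr (Or.inl ⟨hadj, rfl⟩),
    by simpa using hx, by simpa using hcx, by simpa using hcy, ?_⟩
  intro u hux huy
  by_cases h2 : u.2 = j
  · simp only [if_pos h2]
    refine hrest u.1 (fun hh => hux ?_) (fun hh => huy ?_)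
    · exact Prod.ext hh h2
    · exact Prod.ext hh h2
  · simp only [if_neg h2]

lemma slice_reach (j : β) (c0 : α × β → ℕ) {c c' : α → ℕ} (h : Reach G c c') :
    Reach (G.boxProd H) (fun p => if p.2 = j then c p.1 else c0 p)
      (fun p => if p.2 = j then c' p.1 else c0 p) :=
  Relation.ReflTransGen.lift
    (fun (f : α → ℕ) (p : α × β) => if p.2 = j then f p.1 else c0 p)
    (fun _ _ hm => slice_move_s3 j c0 hm) _ _ h

lemma copy_move (a : α) (c0 : α × β → ℕ) {c c' : β → ℕ} (h : PebblingMove H c c') :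
    PebblingMove (G.boxProd H) (fun p => if p.1 = a then c p.2 else c0 p)
      (fun p => if p.1 = a then c' p.2 else c0 p) := by
  obtain ⟨x, y, hadj, hx, hcx, hcy, hrest⟩ := h
  refine ⟨(a, x), (a, y), (SimpleGraph.boxProd_adj).mpr (Or.inr ⟨hadj, rfl⟩),
    by simpa using hx, by simpa using hcx, by simpa using hcy, ?_⟩
  intro u hux huy
  by_cases h1 : u.1 = a
  · simp only [if_pos h1]
    refine hrest u.2 (fun hh => hux ?_) (fun hh => huy ?_)
    · exact Prod.ext h1 hh
    · exact Prod.ext h1 hh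
  · simp only [if_neg h1]

lemma copy_reach (a : α) (c0 : α × β → ℕ) {c c' : β → ℕ} (h : Reach H c c') :
    Reach (G.boxProd H) (fun p => if p.1 = a then c p.2 else c0 p)
      (fun p => if p.1 = a then c' p.2 else c0 p) :=
  Relation.ReflTransGen.lift
    (fun (f : β → ℕ) (p : α × β) => if p.1 = a then f p.2 else c0 p)
    (fun _ _ hm => copy_move a c0 hm) _ _ h

lemma harvest [Fintype α] (hG : G.Connected) (rG : α) (T : Finset β) :
    ∀ X : α × β → ℕ, ∃ X', Reach (G.boxProd H) X X' ∧
      (∀ j ∈ T, (∑ i, X (i, j)) / pebblingNumber G ≤ X' (rG, j)) ∧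
      (∀ j ∉ T, ∀ i, X' (i, j) = X (i, j)) := by
  induction T using Finset.induction with
  | empty =>
    exact fun X => ⟨X, Relation.ReflTransGen.refl, by simp, fun _ _ _ => rfl⟩
  | @insert j0 T hj0 ih =>
    intro X
    obtain ⟨X1, hr1, h1, h2⟩ := ih X
    set cs : α → ℕ := fun i => X1 (i, j0) with hcs
    have hsumeq : ∑ i, cs i = ∑ i, X (i, j0) :=
      Finset.sum_congr rfl fun i _ => h2 j0 hj0 i
    obtain ⟨cs', hrs, hcs'⟩ := multi_solve hG ((∑ i, X (i, j0)) / pebblingNumber G) cs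
      (by rw [hsumeq]; exact Nat.div_mul_le_self _ _) rG
    have hbase : (fun p : α × β => if p.2 = j0 then cs p.1 else X1 p) = X1 := by
      funext p
      by_cases h : p.2 = j0
      · rw [if_pos h, hcs]
        show X1 (p.1, j0) = X1 p
        rw [← h]
      · rw [if_neg h]
    have hr2 : Reach (G.boxProd H) X1 (fun p => if p.2 = j0 then cs' p.1 else X1 p) := by
      have := slice_reach (H := H) j0 X1 hrs
      rwa [hbase] at this
    refine ⟨_, hr1.trans hr2, ?_, ?_⟩
    · intro j hj
      rcases Finset.mem_insert.mp hj with hj | hj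
      · subst hj; simpa using hcs'
      · have hne : j ≠ j0 := fun hh => hj0 (hh ▸ hj)
        simpa [hne] using h1 j hj
    · intro j hj i
      have hne : j ≠ j0 := fun hh => hj (hh ▸ Finset.mem_insert_self j0 T)
      have hnT : j ∉ T := fun hh => hj (Finset.mem_insert_of_mem hh)
      simpa [hne] using h2 j hnT i

end Product

section Deliver
variable {α β : Type*} [DecidableEq α] [DecidableEq β] {G : SimpleGraph α} {H : SimpleGraph β}

lemma deliver_many [Fintype α] (hH : H.Connected) (S : Finset β) (v : β) (hv : v ∉ S)
    (d : ℕ) (hd : ∀ w ∈ S, H.dist v w ≤ d) :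
    ∀ (N : ℕ) (dem : β → ℕ) (X : α × β → ℕ), (∑ w ∈ S, dem w) = N →
      (∑ w ∈ S, 2 ^ H.dist v w * dem w) + (2 ^ d - 1) * Fintype.card α ≤ ∑ i, X (i, v) →
      ∃ X', Reach (G.boxProd H) X X' ∧
        (∀ w ∈ S, ∑ i, X (i, w) + dem w ≤ ∑ i, X' (i, w)) ∧
        (∀ j, j ≠ v → ∑ i, X (i, j) ≤ ∑ i, X' (i, j)) ∧
        (∑ i, X (i, v) ≤ (∑ i, X' (i, v)) + ∑ w ∈ S, 2 ^ H.dist v w * dem w) := by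
  intro N
  induction N with
  | zero =>
    intro dem X h0 _
    have hz : ∀ w ∈ S, dem w = 0 := by
      intro w hw
      exact (Finset.sum_eq_zero_iff).mp h0 w hw
    exact ⟨X, Relation.ReflTransGen.refl,
      fun w hw => by rw [hz w hw]; omega, fun j _ => le_refl _, Nat.le_add_right _ _⟩
  | succ N ih =>
    intro dem X hN hbound
    have hex : ∃ w0 ∈ S, 0 < dem w0 := by
      by_contra hco; push_neg at hco
      have hz : ∑ w ∈ S, dem w = 0 :=
        Finset.sum_eq_zero fun w hw => Nat.le_zero.mp (hco w hw)
      omega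
    obtain ⟨w0, hw0S, hw0⟩ := hex
    have hvw0 : w0 ≠ v := fun h => hv (h ▸ hw0S)
    set ℓ := H.dist v w0 with hℓ
    have hℓd : ℓ ≤ d := hd w0 hw0S
    have hpow : 2 ^ ℓ ≤ 2 ^ d := Nat.pow_le_pow_right (by norm_num) hℓd
    have hterm : 2 ^ ℓ * dem w0 ≤ ∑ w ∈ S, 2 ^ H.dist v w * dem w := by
      rw [hℓ]
      exact Finset.single_le_sum (f := fun w => 2 ^ H.dist v w * dem w)
        (fun w _ => Nat.zero_le _) hw0S
    have hsrc : ∃ i0, 2 ^ d ≤ X (i0, v) := by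
      by_contra hco; push_neg at hco
      have h1 : ∑ i, X (i, v) ≤ ∑ _i : α, (2 ^ d - 1) :=
        Finset.sum_le_sum fun i _ => by have := hco i; omega
      rw [Finset.sum_const, Finset.card_univ, smul_eq_mul] at h1
      have h2 : 1 ≤ 2 ^ ℓ := Nat.one_le_two_pow
      have h3 : 1 ≤ 2 ^ ℓ * dem w0 := Nat.mul_pos (by positivity) hw0
      have h4 : (2 ^ d - 1) * Fintype.card α = Fintype.card α * (2 ^ d - 1) :=
        Nat.mul_comm _ _
      omega
    obtain ⟨i0, hi0⟩ := hsrc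
    obtain ⟨pH, hpl⟩ := (hH.preconnected v w0).exists_walk_length_eq_dist
    set p : (G.boxProd H).Walk (i0, v) (i0, w0) := SimpleGraph.Walk.boxProdRight G i0 pH
      with hp
    have hplen : p.length = ℓ := by
      rw [hp]; exact (SimpleGraph.Walk.length_map _ pH).trans hpl
    obtain ⟨X1, hr1, hA, hB⟩ := walk_deliver p X (by rw [hplen]; exact le_trans hpow hi0)
    rw [hplen] at hA hB
    have hne : (i0, w0) ≠ (i0, v) := fun h => hvw0 (congrArg Prod.snd h)
    rw [if_neg hne] at hB
    have hslice : ∀ j, j ≠ v → ∀ i, X (i, j) ≤ X1 (i, j) := by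
      intro j hj i
      have h5 := hA (i, j)
      rw [if_neg (fun h : (i, j) = (i0, v) => hj (congrArg Prod.snd h))] at h5
      omega
    have hsliceSum : ∀ j, j ≠ v → ∑ i, X (i, j) ≤ ∑ i, X1 (i, j) :=
      fun j hj => Finset.sum_le_sum fun i _ => hslice j hj i
    have hsliceW0 : ∑ i, X (i, w0) + 1 ≤ ∑ i, X1 (i, w0) := by
      have hle : ∀ i ∈ univ, X (i, w0) + (if i = i0 then 1 else 0) ≤ X1 (i, w0) := by
        intro i _
        by_cases h : i = i0
        · subst h; rw [if_pos rfl]; omega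
        · rw [if_neg h]; exact hslice w0 hvw0 i
      have h6 := Finset.sum_le_sum hle
      rwa [Finset.sum_add_distrib, Finset.sum_ite_eq' univ i0 (fun _ => 1),
        if_pos (mem_univ i0)] at h6
    have hsliceV : ∑ i, X (i, v) ≤ ∑ i, X1 (i, v) + 2 ^ ℓ := by
      have hle : ∀ i ∈ univ, X (i, v) ≤ X1 (i, v) + (if i = i0 then 2 ^ ℓ else 0) := by
        intro i _
        have h5 := hA (i, v)
        by_cases h : i = i0
        · subst h; rw [if_pos rfl] at h5 ⊢; exact h5
        · rw [if_neg (fun hh : (i, v) = (i0, v) => h (congrArg Prod.fst hh))] at h5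
          rw [if_neg h]; omega
      have h6 := Finset.sum_le_sum hle
      rwa [Finset.sum_add_distrib, Finset.sum_ite_eq' univ i0 (fun _ => 2 ^ ℓ),
        if_pos (mem_univ i0)] at h6
    set dem' : β → ℕ := fun w => if w = w0 then dem w - 1 else dem w with hdem'
    have hsum' : ∑ w ∈ S, dem' w = N := by
      have h7 : ∑ w ∈ S, (dem' w + if w = w0 then 1 else 0) = ∑ w ∈ S, dem w :=
        Finset.sum_congr rfl fun w _ => by
          by_cases h : w = w0
          · subst h; rw [hdem']; simp; omega
          · rw [hdem']; simp [h]
      rw [Finset.sum_add_distrib, Finset.sum_ite_eq' S w0 (fun _ => 1),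
        if_pos hw0S] at h7
      omega
    have hcost' : ∑ w ∈ S, 2 ^ H.dist v w * dem' w + 2 ^ ℓ
        = ∑ w ∈ S, 2 ^ H.dist v w * dem w := by
      have h7 : ∑ w ∈ S, (2 ^ H.dist v w * dem' w + if w = w0 then 2 ^ ℓ else 0)
          = ∑ w ∈ S, 2 ^ H.dist v w * dem w :=
        Finset.sum_congr rfl fun w _ => by
          by_cases h : w = w0
          · subst h
            rw [hdem']
            have hm : dem w = (dem w - 1) + 1 := by omega
            conv_rhs => rw [hm]
            rw [Nat.mul_add, Nat.mul_one, ← hℓ]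
            simp
          · rw [hdem']; simp [h]
      rw [Finset.sum_add_distrib, Finset.sum_ite_eq' S w0 (fun _ => 2 ^ ℓ),
        if_pos hw0S] at h7
      exact h7
    have hb' : ∑ w ∈ S, 2 ^ H.dist v w * dem' w + (2 ^ d - 1) * Fintype.card α
        ≤ ∑ i, X1 (i, v) := by omega
    obtain ⟨X2, hr2, g1, g2, g3⟩ := ih dem' X1 hsum' hb'
    refine ⟨X2, hr1.trans hr2, ?_, ?_, ?_⟩
    · intro w hw
      by_cases h : w = w0
      · subst h
        have h8 := g1 w hw
        have hd' : dem' w = dem w - 1 := by rw [hdem']; simp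
        omega
      · have h8 := g1 w hw
        have hd' : dem' w = dem w := by rw [hdem']; simp [h]
        have h9 := hsliceSum w (fun hh => hv (hh ▸ hw))
        omega
    · intro j hj
      exact le_trans (hsliceSum j hj) (g2 j hj)
    · omega

end Deliver

/-- constraint A.2(K, v, η, S) is valid: if the total `G`-set count is at least
`π(H) - η`, the slice `G_v` is `χ`-saturated with `χ = (2^d - 1) + |S| - η`, and enough
pebbles are available at `G_v` to complete a set at each slice indexed by `S`, then the
configuration is solvable. -/
theorem stmt3 {α β : Type*} [Fintype α] [Fintype β]
    (G : SimpleGraph α) (H : SimpleGraph β) (hG : G.Connected) (hH : H.Connected)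
    (c : α × β → ℕ) (rG : α) (rH : β)
    (v : β) (η : ℕ) (hη1 : 1 ≤ η) (hη2 : η ≤ pebblingNumber H)
    (S : Finset β) (hvS : v ∉ S) (hcard1 : η ≤ S.card) (hcard2 : S.card ≤ pebblingNumber H)
    (d : ℕ) (hdmax : d = S.sup fun w => H.dist v w)
    (hdlog : d ≤ Nat.clog 2 (pebblingNumber G) - 1)
    -- (i) the total G-set count is at least π(H) - η
    (hsets : pebblingNumber H - η ≤ ∑ j : β, (∑ i : α, c (i, j)) / pebblingNumber G)
    -- (ii) slice G_v is χ-saturated, χ = (2^d - 1) + |S| - η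
    (hsat : ((2 ^ d - 1) + S.card - η) * Fintype.card α
        + (∑ i : α, c (i, v)) % pebblingNumber G ≤ ∑ i : α, c (i, v))
    -- (iii) enough pebbles are available at G_v to complete a set at each slice in S
    (havail : ∑ w ∈ S, 2 ^ (H.dist v w) *
          (pebblingNumber G - (∑ i : α, c (i, w)) % pebblingNumber G)
        ≤ Fintype.card α * (S.card - η) + (∑ i : α, c (i, v)) % pebblingNumber G) :
    Solvable (G.boxProd H) c (rG, rH) := by
  classical
  set P := pebblingNumber G with hPdef
  set n := Fintype.card α with hndef
  set Q := pebblingNumber H with hQdef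
  have hPn : n ≤ P := card_le_pebblingNumber hG
  have hn1 : 1 ≤ n := Fintype.card_pos_iff.mpr hG.nonempty
  have hP1 : 1 ≤ P := le_trans hn1 hPn
  have hd : ∀ w ∈ S, H.dist v w ≤ d := fun w hw =>
    hdmax ▸ Finset.le_sup (f := fun w => H.dist v w) hw
  set T : β → ℕ := fun j => ∑ i, c (i, j) with hT
  set dem : β → ℕ := fun w => P - T w % P with hdem
  set s' := S.card - η with hs'
  -- feasibility
  have hfeas : (∑ w ∈ S, 2 ^ H.dist v w * dem w) + (2 ^ d - 1) * n ≤ ∑ i, c (i, v) := by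
    have heq : (2 ^ d - 1) + S.card - η = (2 ^ d - 1) + s' := by omega
    rw [heq, Nat.add_mul] at hsat
    have hcm : n * s' = s' * n := Nat.mul_comm _ _
    have hav : ∑ w ∈ S, 2 ^ H.dist v w * dem w ≤ n * s' + T v % P := havail
    have hTv : T v = ∑ i, c (i, v) := rfl
    linarith [hsat, hav]
  obtain ⟨X1, hr1, g1, g2, g3⟩ := deliver_many (G := G) hH S v hvS d hd
    (∑ w ∈ S, dem w) dem c rfl hfeas
  -- div bounds
  set q : β → ℕ := fun j => T j / P with hq
  set q1 : β → ℕ := fun j => (∑ i, X1 (i, j)) / P with hq1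
  have hqw : ∀ w ∈ S, q w + 1 ≤ q1 w := by
    intro w hw
    simp only [hq, hq1]
    rw [Nat.le_div_iff_mul_le (show 0 < P by omega), Nat.add_mul, one_mul]
    have h1 : P * (T w / P) + T w % P = T w := Nat.div_add_mod (T w) P
    have h2 : T w % P < P := Nat.mod_lt _ (by omega)
    have h4 : T w + (P - T w % P) ≤ ∑ i, X1 (i, w) := g1 w hw
    calc T w / P * P + P
        = P * (T w / P) + (T w % P + (P - T w % P)) := by
          rw [Nat.mul_comm, Nat.add_sub_cancel' (Nat.le_of_lt h2)]
      _ = T w + (P - T w % P) := by rw [← Nat.add_assoc, h1]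
      _ ≤ ∑ i, X1 (i, w) := h4
  have hqother : ∀ j, j ≠ v → q j ≤ q1 j := by
    intro j hj
    exact Nat.div_le_div_right (g2 j hj)
  have hqv : q v - s' ≤ q1 v := by
    rcases le_total s' (q v) with hc | hc
    · simp only [hq, hq1] at hc ⊢
      rw [Nat.le_div_iff_mul_le (show 0 < P by omega)]
      have hid : (T v / P - s') * P + s' * P = T v / P * P := by
        rw [← Nat.add_mul]; congr 1; omega
      have h1 : P * (T v / P) + T v % P = T v := Nat.div_add_mod (T v) P
      have hcomm : T v / P * P = P * (T v / P) := Nat.mul_comm _ _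
      have h4 : T v ≤ (∑ i, X1 (i, v)) + ∑ w ∈ S, 2 ^ H.dist v w * dem w := g3
      have h5 : ∑ w ∈ S, 2 ^ H.dist v w * dem w ≤ n * s' + T v % P := havail
      have h6 : n * s' ≤ s' * P :=
        le_trans (Nat.mul_le_mul_right s' hPn) (le_of_eq (Nat.mul_comm P s'))
      have hfin : (T v / P - s') * P + (s' * P + T v % P)
          ≤ (∑ i, X1 (i, v)) + (s' * P + T v % P) := by
        calc (T v / P - s') * P + (s' * P + T v % P)
            = ((T v / P - s') * P + s' * P) + T v % P := by rw [Nat.add_assoc]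
          _ = T v / P * P + T v % P := by rw [hid]
          _ = T v := by rw [hcomm]; exact h1
          _ ≤ (∑ i, X1 (i, v)) + ∑ w ∈ S, 2 ^ H.dist v w * dem w := h4
          _ ≤ (∑ i, X1 (i, v)) + (n * s' + T v % P) := Nat.add_le_add_left h5 _
          _ ≤ (∑ i, X1 (i, v)) + (s' * P + T v % P) :=
              Nat.add_le_add_left (Nat.add_le_add_right h6 _) _
      exact Nat.le_of_add_le_add_right hfin
    · have h0 : q v - s' = 0 := by omega
      rw [h0]; exact Nat.zero_le _
  -- total count
  have htot : Q ≤ ∑ j, q1 j := by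
    have hSE : S ⊆ univ.erase v := fun w hw =>
      Finset.mem_erase.mpr ⟨fun h => hvS (h ▸ hw), mem_univ w⟩
    have hsplit1 : q1 v + ∑ j ∈ univ.erase v, q1 j = ∑ j, q1 j :=
      Finset.add_sum_erase univ q1 (mem_univ v)
    have hsplit1' : q v + ∑ j ∈ univ.erase v, q j = ∑ j, q j :=
      Finset.add_sum_erase univ q (mem_univ v)
    have hsplit2 : ∑ j ∈ univ.erase v \ S, q1 j + ∑ j ∈ S, q1 j
        = ∑ j ∈ univ.erase v, q1 j := Finset.sum_sdiff hSE
    have hsplit2' : ∑ j ∈ univ.erase v \ S, q j + ∑ j ∈ S, q j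
        = ∑ j ∈ univ.erase v, q j := Finset.sum_sdiff hSE
    have hS1 : ∑ j ∈ S, q j + S.card ≤ ∑ j ∈ S, q1 j := by
      have := Finset.sum_le_sum (fun w hw => hqw w hw)
      rw [Finset.sum_add_distrib, Finset.sum_const, smul_eq_mul, Nat.mul_one] at this
      omega
    have hS2 : ∑ j ∈ univ.erase v \ S, q j ≤ ∑ j ∈ univ.erase v \ S, q1 j :=
      Finset.sum_le_sum fun j hj =>
        hqother j (Finset.ne_of_mem_erase (Finset.mem_sdiff.mp hj).1)
    have hsq : Q - η ≤ ∑ j, q j := hsets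
    omega
  -- harvest
  obtain ⟨X2, hr2, h1, _⟩ := harvest (H := H) hG rG univ X1
  -- H-copy solve
  set ch : β → ℕ := fun j => X2 (rG, j) with hch
  have hsum : Q ≤ ∑ j, ch j := by
    refine le_trans htot (Finset.sum_le_sum fun j _ => ?_)
    exact h1 j (mem_univ j)
  obtain ⟨ch', hr3, h3⟩ := solvable_of_pebbling_le hH hsum rH
  have hbase : (fun p : α × β => if p.1 = rG then ch p.2 else X2 p) = X2 := by
    funext p
    by_cases h : p.1 = rG
    · rw [if_pos h, hch]
      show X2 (rG, p.2) = X2 p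
      rw [← h]
    · rw [if_neg h]
  have hr4 : Reach (G.boxProd H) X2 (fun p => if p.1 = rG then ch' p.2 else X2 p) := by
    have := copy_reach (G := G) rG X2 hr3
    rwa [hbase] at this
  exact ⟨_, (hr1.trans hr2).trans hr4, by simpa using h3⟩
end

section
/- Let G and H be finite connected simple graphs, fix a root (r_G, r_H) of G□H, and let S and T be disjoint subsets of V(H) such that every i ∈ S is adjacent in H to every j ∈ T. Let c be a pebbling configuration on G□H such that: (i) Σ_{j∈V(H)} ⌊c̃_j / π(G)⌋ ≥ π(H) − |T|; (ii) for every i ∈ S, c̃_i − extra_i ≥ |V(G)|; and (iii) Σ_{i∈S} ⌊extra_i / 2⌋ ≥ Σ_{j∈T} (π(G) − extra_j). Then c is (r_G, r_H)-solvable. -/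
open SimpleGraph Finset

namespace StmtAux

lemma sum_sub_ite {α : Type*} [DecidableEq α] {s : Finset α} {a : α} (ha : a ∈ s)
    (f : α → ℕ) (k : ℕ) (hk : k ≤ f a) :
    ∑ x ∈ s, (f x - if x = a then k else 0) = (∑ x ∈ s, f x) - k := by
  have h1 : ∑ x ∈ s, (f x - if x = a then k else 0) + ∑ x ∈ s, (if x = a then k else 0)
      = ∑ x ∈ s, f x := by
    rw [← Finset.sum_add_distrib]
    refine Finset.sum_congr rfl fun x hx => ?_
    by_cases hxa : x = a
    · subst hxa; simp; omega
    · simp [hxa]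
  have h2 : ∑ x ∈ s, (if x = a then k else 0) = k := by
    rw [Finset.sum_ite_eq' s a (fun _ => k)]; simp [ha]
  omega

lemma sum_add_ite {α : Type*} [DecidableEq α] {s : Finset α} {a : α} (ha : a ∈ s)
    (f : α → ℕ) (k : ℕ) :
    ∑ x ∈ s, (f x + if x = a then k else 0) = (∑ x ∈ s, f x) + k := by
  rw [Finset.sum_add_distrib]
  congr 1
  rw [Finset.sum_ite_eq' s a (fun _ => k)]; simp [ha]

lemma exists_two_le {α : Type*} [Fintype α] {f : α → ℕ} (h : Fintype.card α < ∑ x, f x) :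
    ∃ a, 2 ≤ f a := by
  by_contra hno
  push_neg at hno
  have : ∑ x, f x ≤ ∑ _x : α, 1 := Finset.sum_le_sum fun x _ => by have := hno x; omega
  simp at this
  omega

variable {V : Type*} {G : SimpleGraph V}

lemma move_add {c c' : V → ℕ} (h : PebblingMove G c c') (d : V → ℕ) :
    PebblingMove G (fun v => c v + d v) (fun v => c' v + d v) := by
  obtain ⟨v, w, hvw, h2, hv, hw, ho⟩ := h
  refine ⟨v, w, hvw, le_trans h2 (Nat.le_add_right _ _), by simp only; omega,
    by simp only; omega, ?_⟩
  intro u hu1 hu2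
  simp only [ho u hu1 hu2]

lemma rtg_add {c c' : V → ℕ} (h : Relation.ReflTransGen (PebblingMove G) c c') (d : V → ℕ) :
    Relation.ReflTransGen (PebblingMove G) (fun v => c v + d v) (fun v => c' v + d v) :=
  Relation.ReflTransGen.lift (fun t : V → ℕ => fun v => t v + d v) (fun _ _ hab => move_add hab d) _ _ h

lemma nsolvable_mono {c₁ c : V → ℕ} (hle : ∀ v, c₁ v ≤ c v) {r : V} {t : ℕ}
    (h : NSolvable G c₁ r t) : NSolvable G c r t := by
  obtain ⟨c', hsteps, hr⟩ := h
  have hc : c = fun v => c₁ v + (c v - c₁ v) := by funext v; have := hle v; omega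
  refine ⟨fun v => c' v + (c v - c₁ v), ?_, le_trans hr (Nat.le_add_right _ _)⟩
  have h2 := rtg_add hsteps (fun v => c v - c₁ v)
  rwa [← hc] at h2

lemma exists_le_sum_eq {V : Type*} [Fintype V] [DecidableEq V] {c : V → ℕ} {k : ℕ}
    (h : k ≤ ∑ v, c v) : ∃ c₁ : V → ℕ, (∀ v, c₁ v ≤ c v) ∧ ∑ v, c₁ v = k := by
  obtain ⟨n, hn⟩ : ∃ n, ∑ v, c v = k + n := ⟨∑ v, c v - k, by omega⟩
  clear h
  induction n generalizing c with
  | zero => exact ⟨c, fun v => le_rfl, by omega⟩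
  | succ n ih =>
    obtain ⟨v, hv⟩ : ∃ v, 0 < c v := by
      by_contra hno
      push_neg at hno
      have : ∑ v, c v = 0 := Finset.sum_eq_zero fun x _ => by have := hno x; omega
      omega
    have hsum' : ∑ x, (c x - if x = v then 1 else 0) = k + n := by
      rw [sum_sub_ite (Finset.mem_univ v) c 1 hv]; omega
    obtain ⟨c₁, hle, hs⟩ := ih hsum'
    exact ⟨c₁, fun x => le_trans (hle x) (Nat.sub_le _ _), hs⟩

lemma moveMany {v w : V} (hvw : G.Adj v w) :
    ∀ (m : ℕ) (c : V → ℕ), 2 * m ≤ c v →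
    ∃ c', Relation.ReflTransGen (PebblingMove G) c c' ∧
      c' v = c v - 2 * m ∧ c' w = c w + m ∧ ∀ u, u ≠ v → u ≠ w → c' u = c u := by
  intro m
  induction m with
  | zero => intro c _; exact ⟨c, .refl, by omega, by omega, fun _ _ _ => rfl⟩
  | succ m ih =>
    intro c hc
    classical
    have hne : v ≠ w := hvw.ne
    set c1 : V → ℕ := fun u => if u = v then c v - 2 else if u = w then c w + 1 else c u
      with hc1
    have hmove : PebblingMove G c c1 := by
      refine ⟨v, w, hvw, by omega, by simp [hc1], by simp [hc1, hne.symm], ?_⟩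
      intro u hu1 hu2; simp [hc1, hu1, hu2]
    obtain ⟨c', hsteps, h1, h2, h3⟩ := ih c1 (by simp [hc1]; omega)
    refine ⟨c', Relation.ReflTransGen.head hmove hsteps, ?_, ?_, ?_⟩
    · rw [h1]; simp [hc1]; omega
    · rw [h2]; simp [hc1, hne.symm]; omega
    · intro u hu1 hu2; rw [h3 u hu1 hu2]; simp [hc1, hu1, hu2]

lemma walk_solvable : ∀ {v r : V} (p : G.Walk v r) (c : V → ℕ),
    2 ^ p.length ≤ c v → Solvable G c r := by
  intro v r p
  induction p with
  | nil => intro c hc; exact ⟨c, .refl, by simpa using hc⟩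
  | @cons v w r h q ih =>
    intro c hc
    have hlen : (2:ℕ) ^ (SimpleGraph.Walk.cons h q).length = 2 * 2 ^ q.length := by
      rw [SimpleGraph.Walk.length_cons, pow_succ]; ring
    obtain ⟨c1, hsteps, _, hw, _⟩ := moveMany h (2 ^ q.length) c (by omega)
    obtain ⟨c', hsteps', hr⟩ := ih c1 (by omega)
    exact ⟨c', hsteps.trans hsteps', hr⟩

lemma solvable_of_big [Fintype V] (hG : G.Connected) (c : V → ℕ)
    (h : Fintype.card V * 2 ^ Fintype.card V ≤ ∑ x, c x) (r : V) : Solvable G c r := by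
  classical
  have hne : Nonempty V := hG.nonempty
  have hcard : 1 ≤ Fintype.card V := Fintype.card_pos
  obtain ⟨v, hv⟩ : ∃ v, 2 ^ Fintype.card V ≤ c v := by
    by_contra hno
    push_neg at hno
    have h1 : ∑ x, c x ≤ ∑ _x : V, (2 ^ Fintype.card V - 1) :=
      Finset.sum_le_sum fun i _ => by have := hno i; omega
    simp only [Finset.sum_const, Finset.card_univ, smul_eq_mul] at h1
    have hpow : 1 ≤ 2 ^ Fintype.card V := Nat.one_le_two_pow
    have hmul : Fintype.card V * 2 ^ Fintype.card V
        = Fintype.card V * (2 ^ Fintype.card V - 1) + Fintype.card V := by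
      have hps : 2 ^ Fintype.card V - 1 + 1 = 2 ^ Fintype.card V := by omega
      calc Fintype.card V * 2 ^ Fintype.card V
          = Fintype.card V * ((2 ^ Fintype.card V - 1) + 1) := by rw [hps]
        _ = Fintype.card V * (2 ^ Fintype.card V - 1) + Fintype.card V := by ring
    omega
  obtain ⟨pw⟩ := hG.preconnected v r
  have hlen : pw.bypass.length < Fintype.card V := pw.bypass_isPath.length_lt
  exact walk_solvable pw.bypass c
    (le_trans (Nat.pow_le_pow_right (by norm_num) hlen.le) hv)

lemma pebblingNumber_spec [Fintype V] (hG : G.Connected) (c : V → ℕ)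
    (hsum : ∑ v, c v = pebblingNumber G) (r : V) : Solvable G c r := by
  have hne : {k | ∀ c : V → ℕ, (∑ v, c v) = k → ∀ r, Solvable G c r}.Nonempty :=
    ⟨Fintype.card V * 2 ^ Fintype.card V, fun c hc r => solvable_of_big hG c hc.ge r⟩
  have hmem := Nat.sInf_mem hne
  exact hmem c hsum r

lemma pebblingNumber_pos [Fintype V] (hG : G.Connected) : 0 < pebblingNumber G := by
  rcases Nat.eq_zero_or_pos (pebblingNumber G) with h0 | h
  · exfalso
    obtain ⟨r⟩ := hG.nonempty
    obtain ⟨c', hsteps, hr⟩ := pebblingNumber_spec hG (fun _ => 0) (by simp [h0]) r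
    rcases Relation.ReflTransGen.cases_head hsteps with rfl | ⟨mid, hm, _⟩
    · simp at hr
    · obtain ⟨v, w, _, h2, _⟩ := hm
      simp at h2
  · exact h

lemma solve_of_le [Fintype V] (hG : G.Connected) {c : V → ℕ} {r : V}
    (h : pebblingNumber G ≤ ∑ v, c v) : Solvable G c r := by
  classical
  obtain ⟨c₁, hle, hsum⟩ := exists_le_sum_eq h
  exact nsolvable_mono hle (pebblingNumber_spec hG c₁ hsum r)


section Product

variable {α β : Type*} [Fintype α] [Fintype β] {G : SimpleGraph α} {H : SimpleGraph β}

lemma lift_slice [DecidableEq β] {c : α × β → ℕ} {j : β} {s' : α → ℕ}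
    (h : Relation.ReflTransGen (PebblingMove G) (fun x => c (x, j)) s') :
    Relation.ReflTransGen (PebblingMove (G.boxProd H)) c
      (fun p => if p.2 = j then s' p.1 else c p) := by
  have key : ∀ t t' : α → ℕ, PebblingMove G t t' →
      PebblingMove (G.boxProd H) (fun p : α × β => if p.2 = j then t p.1 else c p)
        (fun p : α × β => if p.2 = j then t' p.1 else c p) := by
    rintro t t' ⟨v, w, hvw, h2, hv, hw, ho⟩
    refine ⟨(v, j), (w, j), ?_, by simpa using h2, by simpa using hv, by simpa using hw, ?_⟩
    · rw [SimpleGraph.boxProd_adj]; exact Or.inl ⟨hvw, rfl⟩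
    · rintro ⟨x, y⟩ hx hw'
      by_cases hy : y = j
      · subst hy
        have hxv : x ≠ v := fun hh => hx (by rw [hh])
        have hxw : x ≠ w := fun hh => hw' (by rw [hh])
        simpa using ho x hxv hxw
      · simp [hy]
  have hstart : (fun p : α × β => if p.2 = j then c (p.1, j) else c p) = c := by
    funext p
    by_cases hy : p.2 = j
    · simp only [hy, if_true]
      have hp : p = (p.1, j) := by rw [← hy]
      conv_rhs => rw [hp]
    · simp [hy]
  have hlift : Relation.ReflTransGen (PebblingMove (G.boxProd H))
      (fun p : α × β => if p.2 = j then c (p.1, j) else c p)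
      (fun p : α × β => if p.2 = j then s' p.1 else c p) :=
    Relation.ReflTransGen.lift
      (fun t : α → ℕ => fun p : α × β => if p.2 = j then t p.1 else c p)
      (fun a b hab => key a b hab) _ _ h
  rwa [hstart] at hlift

lemma convert1 [DecidableEq α] [DecidableEq β] (hG : G.Connected) (rG : α) (j : β)
    (c : α × β → ℕ) (b a : ℕ)
    (hb : pebblingNumber G * b + a ≤ ∑ x : α, c (x, j)) (ha : a ≤ c (rG, j)) (hb1 : 1 ≤ b) :
    ∃ c', Relation.ReflTransGen (PebblingMove (G.boxProd H)) c c' ∧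
      (∀ p : α × β, p.2 ≠ j → c' p = c p) ∧
      pebblingNumber G * (b - 1) + (a + 1) ≤ ∑ x : α, c' (x, j) ∧
      a + 1 ≤ c' (rG, j) := by
  set πG := pebblingNumber G with hπG
  set s : α → ℕ := fun x => c (x, j) with hs
  have hmul : πG * b = πG * (b - 1) + πG := by
    have hb' : b - 1 + 1 = b := by omega
    calc πG * b = πG * ((b - 1) + 1) := by rw [hb']
      _ = πG * (b - 1) + πG := by ring
  have hsa : a ≤ s rG := ha
  have hts : ∑ x, (s x - if x = rG then a else 0) = (∑ x, s x) - a :=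
    sum_sub_ite (Finset.mem_univ rG) s a hsa
  have heta : Finset.univ.sum s = ∑ x, s x := rfl
  have hπle : πG ≤ ∑ x, (s x - if x = rG then a else 0) := by omega
  obtain ⟨c1, hc1le, hc1sum⟩ := exists_le_sum_eq hπle
  have hc1s : ∀ x, c1 x ≤ s x := fun x => le_trans (hc1le x) (Nat.sub_le _ _)
  obtain ⟨c1', hsteps1, hr1⟩ := pebblingNumber_spec hG c1 hc1sum rG
  have hdecomp : (fun x => c1 x + (s x - c1 x)) = s := by
    funext x; have := hc1s x; omega
  have hsteps2 : Relation.ReflTransGen (PebblingMove G) s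
      (fun x => c1' x + (s x - c1 x)) := by
    have h2 := rtg_add hsteps1 (fun x => s x - c1 x)
    rwa [hdecomp] at h2
  have hlift := lift_slice (H := H) (c := c) (j := j) hsteps2
  refine ⟨_, hlift, ?_, ?_, ?_⟩
  · intro p hp; simp [hp]
  · have hsum1 : (∑ x : α, (if ((x, j) : α × β).2 = j then c1' x + (s x - c1 x) else c (x, j)))
        = ∑ x : α, (c1' x + (s x - c1 x)) := by simp
    rw [hsum1]
    have hsplit : ∑ x, (s x - c1 x) + ∑ x, c1 x = ∑ x, s x := by
      rw [← Finset.sum_add_distrib]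
      exact Finset.sum_congr rfl fun x _ => by have := hc1s x; omega
    rw [Finset.sum_add_distrib]
    have h1le : 1 ≤ ∑ x, c1' x :=
      le_trans hr1 (Finset.single_le_sum (fun _ _ => Nat.zero_le _) (Finset.mem_univ rG))
    omega
  · have hc1rG : c1 rG ≤ s rG - a := by
      have h := hc1le rG
      simpa using h
    have hrw : (if ((rG, j) : α × β).2 = j then c1' rG + (s rG - c1 rG) else c (rG, j))
        = c1' rG + (s rG - c1 rG) := by simp
    rw [hrw]
    omega

lemma convertN [DecidableEq α] [DecidableEq β] (hG : G.Connected) (rG : α) (j : β) :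
    ∀ (k : ℕ) (c : α × β → ℕ) (b a : ℕ),
      pebblingNumber G * b + a ≤ ∑ x : α, c (x, j) →
      a ≤ c (rG, j) → k ≤ b →
      ∃ c3, Relation.ReflTransGen (PebblingMove (G.boxProd H)) c c3 ∧
        (∀ p : α × β, p.2 ≠ j → c3 p = c p) ∧
        pebblingNumber G * (b - k) + (a + k) ≤ ∑ x : α, c3 (x, j) ∧
        a + k ≤ c3 (rG, j) := by
  intro k
  induction k with
  | zero => intro c b a hb ha _; exact ⟨c, .refl, fun _ _ => rfl, by simpa using hb, by simpa using ha⟩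
  | succ k ih =>
    intro c b a hb ha hk
    obtain ⟨c', hsteps, hoff, hb', ha'⟩ := convert1 (H := H) hG rG j c b a hb ha (by omega)
    obtain ⟨c3, hsteps3, hoff3, hb3, ha3⟩ := ih c' (b - 1) (a + 1) hb' ha' (by omega)
    refine ⟨c3, hsteps.trans hsteps3, fun p hp => by rw [hoff3 p hp, hoff p hp], ?_, ?_⟩
    · have he1 : b - 1 - k = b - (k + 1) := by omega
      have he2 : a + 1 + k = a + (k + 1) := by omega
      rwa [he1, he2] at hb3
    · have he2 : a + 1 + k = a + (k + 1) := by omega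
      rwa [he2] at ha3

lemma interMove' [DecidableEq α] [DecidableEq β] {i j : β} (hij : H.Adj i j)
    (c : α × β → ℕ) (a : α) (h2 : 2 ≤ c (a, i)) :
    ∃ c2, PebblingMove (G.boxProd H) c c2 ∧
      (∑ x : α, c2 (x, i)) = (∑ x : α, c (x, i)) - 2 ∧
      (∑ x : α, c2 (x, j)) = (∑ x : α, c (x, j)) + 1 ∧
      (∀ j', j' ≠ i → j' ≠ j → ∀ x, c2 (x, j') = c (x, j')) ∧
      c2 (a, i) = c (a, i) - 2 ∧ c2 (a, j) = c (a, j) + 1 := by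
  have hne : i ≠ j := hij.ne
  set c2 : α × β → ℕ := fun p => if p = (a, i) then c p - 2
    else if p = (a, j) then c p + 1 else c p with hc2
  have hvi : c2 (a, i) = c (a, i) - 2 := by simp [hc2]
  have hvj : c2 (a, j) = c (a, j) + 1 := by simp [hc2, hne.symm, Prod.ext_iff]
  have hother : ∀ p : α × β, p ≠ (a, i) → p ≠ (a, j) → c2 p = c p := by
    intro p h1 h2; simp [hc2, h1, h2]
  have hmove : PebblingMove (G.boxProd H) c c2 := by
    refine ⟨(a, i), (a, j), ?_, h2, hvi, hvj, hother⟩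
    rw [SimpleGraph.boxProd_adj]; exact Or.inr ⟨hij, rfl⟩
  have hsi : (∑ x : α, c2 (x, i)) = (∑ x : α, c (x, i)) - 2 := by
    have hpt : ∀ x : α, c2 (x, i) = c (x, i) - if x = a then 2 else 0 := by
      intro x
      by_cases hx : x = a
      · subst hx; simpa using hvi
      · rw [hother (x, i) (by simp [hx]) (by simp [hne])]
        simp [hx]
    rw [Finset.sum_congr rfl fun x _ => hpt x]
    exact sum_sub_ite (Finset.mem_univ a) _ 2 h2
  have hsj : (∑ x : α, c2 (x, j)) = (∑ x : α, c (x, j)) + 1 := by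
    have hpt : ∀ x : α, c2 (x, j) = c (x, j) + if x = a then 1 else 0 := by
      intro x
      by_cases hx : x = a
      · subst hx; simpa using hvj
      · rw [hother (x, j) (by simp [hne.symm]) (by simp [hx])]
        simp [hx]
    rw [Finset.sum_congr rfl fun x _ => hpt x]
    exact sum_add_ite (Finset.mem_univ a) _ 1
  refine ⟨c2, hmove, hsi, hsj, ?_, hvi, hvj⟩
  intro j' hji hjj x
  exact hother (x, j') (by simp [hji]) (by simp [hjj])


lemma stepA [DecidableEq α] [DecidableEq β] {S T : Finset β}
    (hST : Disjoint S T) (hadj : ∀ i ∈ S, ∀ j ∈ T, H.Adj i j)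
    (L : β → ℕ) (hL : ∀ i ∈ S, Fintype.card α ≤ L i) :
    ∀ (N : ℕ) (m g : β → ℕ) (c : α × β → ℕ),
      ∑ j ∈ T, m j = N →
      ∑ j ∈ T, m j ≤ ∑ i ∈ S, g i →
      (∀ i ∈ S, L i + 2 * g i ≤ ∑ x : α, c (x, i)) →
      ∃ c2, Relation.ReflTransGen (PebblingMove (G.boxProd H)) c c2 ∧
        (∀ i ∈ S, L i ≤ ∑ x : α, c2 (x, i)) ∧
        (∀ j ∈ T, (∑ x : α, c (x, j)) + m j ≤ ∑ x : α, c2 (x, j)) ∧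
        (∀ j, j ∉ S → j ∉ T → ∑ x : α, c (x, j) ≤ ∑ x : α, c2 (x, j)) := by
  intro N
  induction N with
  | zero =>
    intro m g c hsum _ hslice
    have hm0 : ∀ j ∈ T, m j = 0 := by
      intro j hj
      have := Finset.sum_eq_zero_iff.mp hsum j hj
      exact this
    refine ⟨c, .refl, fun i hi => le_trans (Nat.le_add_right _ _) (hslice i hi),
      fun j hj => by simp [hm0 j hj], fun _ _ _ => le_rfl⟩
  | succ N ih =>
    intro m g c hsum hbudget hslice
    obtain ⟨j, hjT, hmj⟩ : ∃ j ∈ T, 1 ≤ m j := by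
      by_contra hno
      push_neg at hno
      have : ∑ j ∈ T, m j = 0 := Finset.sum_eq_zero fun j hj => by have := hno j hj; omega
      omega
    obtain ⟨i, hiS, hgi⟩ : ∃ i ∈ S, 1 ≤ g i := by
      by_contra hno
      push_neg at hno
      have : ∑ i ∈ S, g i = 0 := Finset.sum_eq_zero fun i hi => by have := hno i hi; omega
      omega
    have hij : H.Adj i j := hadj i hiS j hjT
    have hne2 : i ≠ j := hij.ne
    have hcard : Fintype.card α < ∑ x : α, c (x, i) := by
      have h1 := hslice i hiS
      have h2 := hL i hiS
      omega
    obtain ⟨a, ha⟩ := exists_two_le (f := fun x => c (x, i)) hcard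
    obtain ⟨c', hmove, hsi, hsj, hother, _, _⟩ := interMove' (G := G) hij c a ha
    have hsum' : ∑ j' ∈ T, (m j' - if j' = j then 1 else 0) = N := by
      rw [sum_sub_ite hjT m 1 hmj]; omega
    have hgsum : 1 ≤ ∑ i' ∈ S, g i' :=
      le_trans hgi (Finset.single_le_sum (fun _ _ => Nat.zero_le _) hiS)
    have hbudget' : ∑ j' ∈ T, (m j' - if j' = j then 1 else 0)
        ≤ ∑ i' ∈ S, (g i' - if i' = i then 1 else 0) := by
      rw [sum_sub_ite hjT m 1 hmj, sum_sub_ite hiS g 1 hgi]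
      omega
    have hslice' : ∀ i' ∈ S, L i' + 2 * (g i' - if i' = i then 1 else 0)
        ≤ ∑ x : α, c' (x, i') := by
      intro i' hi'
      by_cases hii : i' = i
      · subst hii
        rw [hsi]
        have h5 := hslice i' hi'
        have h6 : (if i' = i' then (1:ℕ) else 0) = 1 := if_pos rfl
        omega
      · have hij' : i' ≠ j := fun hh => (Finset.disjoint_left.mp hST hi') (hh ▸ hjT)
        rw [Finset.sum_congr rfl fun x _ => hother i' hii hij' x]
        have h5 := hslice i' hi'
        have h6 : (if i' = i then (1:ℕ) else 0) = 0 := if_neg hii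
        omega
    obtain ⟨c2, hsteps, hS2, hT2, hO2⟩ := ih (fun j' => m j' - if j' = j then 1 else 0)
      (fun i' => g i' - if i' = i then 1 else 0) c' hsum' hbudget' hslice'
    refine ⟨c2, Relation.ReflTransGen.head hmove hsteps, hS2, ?_, ?_⟩
    · intro j' hj'
      by_cases hjj : j' = j
      · subst hjj
        have h1 := hT2 j' hj'
        rw [hsj] at h1
        have h6 : (if j' = j' then (1:ℕ) else 0) = 1 := if_pos rfl
        omega
      · have hji : j' ≠ i := fun hh => (Finset.disjoint_left.mp hST hiS) (hh ▸ hj')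
        have h1 := hT2 j' hj'
        rw [Finset.sum_congr rfl fun x _ => hother j' hji hjj x] at h1
        have h6 : (if j' = j then (1:ℕ) else 0) = 0 := if_neg hjj
        omega
    · intro j' hjS hjT'
      have h1 := hO2 j' hjS hjT'
      have hji : j' ≠ i := fun hh => hjS (hh ▸ hiS)
      have hjj : j' ≠ j := fun hh => hjT' (hh ▸ hjT)
      rwa [Finset.sum_congr rfl fun x _ => hother j' hji hjj x] at h1

lemma stepB [DecidableEq α] [DecidableEq β] (hG : G.Connected) (rG : α)
    {d d' : β → ℕ} (hd : Relation.ReflTransGen (PebblingMove H) d d') :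
    ∀ (c : α × β → ℕ) (b a : β → ℕ),
      (∀ j, d j ≤ b j + a j) →
      (∀ j, pebblingNumber G * b j + a j ≤ ∑ x : α, c (x, j)) →
      (∀ j, a j ≤ c (rG, j)) →
      ∃ (c2 : α × β → ℕ) (b2 a2 : β → ℕ),
        Relation.ReflTransGen (PebblingMove (G.boxProd H)) c c2 ∧
        (∀ j, d' j ≤ b2 j + a2 j) ∧
        (∀ j, pebblingNumber G * b2 j + a2 j ≤ ∑ x : α, c2 (x, j)) ∧
        (∀ j, a2 j ≤ c2 (rG, j)) := by
  induction hd with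
  | refl => intro c b a h1 h2 h3; exact ⟨c, b, a, .refl, h1, h2, h3⟩
  | @tail e e' hsteps hmove ih =>
    intro c b a h1 h2 h3
    obtain ⟨c2, b2, a2, hs, h1', h2', h3'⟩ := ih c b a h1 h2 h3
    obtain ⟨j, j', hjj', h2e, hej, hej', heo⟩ := hmove
    have hne : j ≠ j' := hjj'.ne
    set k := 2 - a2 j with hk
    have hkb : k ≤ b2 j := by
      have := h1' j
      omega
    obtain ⟨c3, hsteps3, hoff3, hb3, ha3⟩ :=
      convertN (H := H) hG rG j k c2 (b2 j) (a2 j) (h2' j) (h3' j) hkb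
    have ha3two : 2 ≤ c3 (rG, j) := by
      have := ha3
      omega
    obtain ⟨c4, hmove4, hsi4, hsj4, hother4, hvi4, hvj4⟩ :=
      interMove' (G := G) hjj' c3 rG ha3two
    set b4 : β → ℕ := fun y => if y = j then b2 j - k else b2 y with hb4
    set a4 : β → ℕ := fun y => if y = j then a2 j + k - 2
      else if y = j' then a2 j' + 1 else a2 y with ha4
    have hb4j : b4 j = b2 j - k := by simp [hb4]
    have hb4o : ∀ y, y ≠ j → b4 y = b2 y := fun y hy => by simp [hb4, hy]
    have ha4j : a4 j = a2 j + k - 2 := by simp [ha4]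
    have ha4j' : a4 j' = a2 j' + 1 := by simp [ha4, hne.symm]
    have ha4o : ∀ y, y ≠ j → y ≠ j' → a4 y = a2 y := fun y hy hy' => by simp [ha4, hy, hy']
    refine ⟨c4, b4, a4,
      hs.trans (hsteps3.trans (Relation.ReflTransGen.single hmove4)), ?_, ?_, ?_⟩
    · intro x
      by_cases hxj : x = j
      · subst hxj
        rw [hb4j, ha4j, hej]
        have := h1' x
        omega
      · by_cases hxj' : x = j'
        · subst hxj'
          rw [hb4o x hxj, ha4j', hej']
          have := h1' x
          omega
        · rw [hb4o x hxj, ha4o x hxj hxj', heo x hxj hxj']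
          exact h1' x
    · intro x
      by_cases hxj : x = j
      · subst hxj
        rw [hb4j, ha4j, hsi4]
        omega
      · have hcx : (∑ y : α, c3 (y, x)) = ∑ y : α, c2 (y, x) :=
          Finset.sum_congr rfl fun y _ => hoff3 (y, x) (by simpa using hxj)
        by_cases hxj' : x = j'
        · subst hxj'
          rw [hb4o x hxj, ha4j', hsj4, hcx]
          have := h2' x
          omega
        · rw [hb4o x hxj, ha4o x hxj hxj',
            Finset.sum_congr rfl fun y _ => hother4 x (by simpa using hxj) (by simpa using hxj') y,
            hcx]
          exact h2' x
    · intro x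
      by_cases hxj : x = j
      · subst hxj
        rw [ha4j, hvi4]
        omega
      · have hcx : c3 (rG, x) = c2 (rG, x) := hoff3 (rG, x) (by simpa using hxj)
        by_cases hxj' : x = j'
        · subst hxj'
          rw [ha4j', hvj4, hcx]
          have := h3' x
          omega
        · rw [ha4o x hxj hxj', hother4 x (by simpa using hxj) (by simpa using hxj') rG, hcx]
          exact h3' x

end Product

end StmtAux

/-- constraint A.3(K, S, T) is valid: with `S` and `T` disjoint and completely
joined in `H`, if the total `G`-set count is at least `π(H) - |T|`, every slice indexed by
`S` is 1-saturated, and the extra pairs in `S`-slices suffice to complete a set at each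
`T`-slice, then the configuration is solvable. -/
theorem stmt4 {α β : Type*} [Fintype α] [Fintype β]
    (G : SimpleGraph α) (H : SimpleGraph β) (hG : G.Connected) (hH : H.Connected)
    (c : α × β → ℕ) (rG : α) (rH : β)
    (S T : Finset β) (hST : Disjoint S T)
    (hadj : ∀ i ∈ S, ∀ j ∈ T, H.Adj i j)
    -- (i) the total G-set count is at least π(H) - |T|
    (hsets : pebblingNumber H - T.card ≤ ∑ j : β, (∑ i : α, c (i, j)) / pebblingNumber G)
    -- (ii) every slice indexed by S is 1-saturated
    (hsat : ∀ i ∈ S, Fintype.card α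
        ≤ (∑ i' : α, c (i', i)) - (∑ i' : α, c (i', i)) % pebblingNumber G)
    -- (iii) pairs among extras in S-slices suffice to complete a set at each T-slice
    (hpairs : ∑ j ∈ T, (pebblingNumber G - (∑ i : α, c (i, j)) % pebblingNumber G)
        ≤ ∑ i ∈ S, ((∑ i' : α, c (i', i)) % pebblingNumber G) / 2) :
    Solvable (G.boxProd H) c (rG, rH) := by
  classical
  open StmtAux in
  have hπGpos : 0 < pebblingNumber G := StmtAux.pebblingNumber_pos hG
  set πG := pebblingNumber G with hπG
  -- Step A
  have hbudget : ∀ i ∈ S, (fun i => (∑ x : α, c (x, i)) - (∑ x : α, c (x, i)) % πG) i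
      + 2 * ((fun i => ((∑ x : α, c (x, i)) % πG) / 2) i) ≤ ∑ x : α, c (x, i) := by
    intro i _
    have h1 : (∑ x : α, c (x, i)) % πG ≤ ∑ x : α, c (x, i) := Nat.mod_le _ _
    have h2 : 2 * (((∑ x : α, c (x, i)) % πG) / 2) ≤ (∑ x : α, c (x, i)) % πG :=
      Nat.mul_div_le _ 2
    simp only
    omega
  obtain ⟨c2, hsteps1, hS2, hT2, hO2⟩ := StmtAux.stepA (G := G) hST hadj
    (fun i => (∑ x : α, c (x, i)) - (∑ x : α, c (x, i)) % πG)
    (fun i hi => hsat i hi)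
    (∑ j ∈ T, (πG - (∑ x : α, c (x, j)) % πG))
    (fun j => πG - (∑ x : α, c (x, j)) % πG)
    (fun i => ((∑ x : α, c (x, i)) % πG) / 2)
    c rfl hpairs hbudget
  -- slice coverage for d
  set q : β → ℕ := fun j => (∑ x : α, c (x, j)) / πG with hq
  set d : β → ℕ := fun j => q j + if j ∈ T then 1 else 0 with hd
  have hdm : ∀ j : β, πG * q j + (∑ x : α, c (x, j)) % πG = ∑ x : α, c (x, j) :=
    fun j => Nat.div_add_mod _ _
  have hcov : ∀ j, πG * d j ≤ ∑ x : α, c2 (x, j) := by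
    intro j
    have h2 : πG * q j + (∑ x : α, c (x, j)) % πG = ∑ x : α, c (x, j) := hdm j
    by_cases hjS : j ∈ S
    · have hjT : j ∉ T := Finset.disjoint_left.mp hST hjS
      have h1 : (∑ x : α, c (x, j)) - (∑ x : α, c (x, j)) % πG ≤ ∑ x : α, c2 (x, j) :=
        hS2 j hjS
      simp only [hd, if_neg hjT, add_zero]
      omega
    · by_cases hjT : j ∈ T
      · have h1 : (∑ x : α, c (x, j)) + (πG - (∑ x : α, c (x, j)) % πG)
            ≤ ∑ x : α, c2 (x, j) := hT2 j hjT
        have h3 : (∑ x : α, c (x, j)) % πG < πG := Nat.mod_lt _ hπGpos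
        have h4 : πG * (q j + 1) = πG * q j + πG := by ring
        simp only [hd, if_pos hjT]
        omega
      · have h1 : (∑ x : α, c (x, j)) ≤ ∑ x : α, c2 (x, j) := hO2 j hjS hjT
        simp only [hd, if_neg hjT, add_zero]
        omega
  -- d is rH-solvable in H
  have hdsum : πG ∣ 0 ∨ True := Or.inr trivial
  have hsumd : ∑ j : β, d j = (∑ j : β, q j) + T.card := by
    rw [hd, Finset.sum_add_distrib]
    congr 1
    simp [Finset.sum_ite_mem]
  have hdsolv : Solvable H d rH := by
    apply StmtAux.solve_of_le hH
    rw [hsumd]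
    have heta : Finset.univ.sum q = ∑ j : β, q j := rfl
    omega
  obtain ⟨d', hdsteps, hd'⟩ := hdsolv
  -- Step B
  obtain ⟨c3, b3, a3, hsteps2, hi1, hi2, hi3⟩ := StmtAux.stepB (H := H) hG rG hdsteps c2 d
    (fun _ => 0) (fun j => le_rfl.trans (Nat.le_add_right _ _)) (fun j => by simpa using hcov j)
    (fun j => Nat.zero_le _)
  -- finish: one more conversion if needed at slice rH
  have h1rH : 1 ≤ b3 rH + a3 rH := le_trans hd' (hi1 rH)
  set k := 1 - a3 rH with hk
  have hkb : k ≤ b3 rH := by omega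
  obtain ⟨c4, hsteps3, _, _, ha4⟩ :=
    StmtAux.convertN (H := H) hG rG rH k c3 (b3 rH) (a3 rH) (hi2 rH) (hi3 rH) hkb
  exact ⟨c4, (hsteps1.trans hsteps2).trans hsteps3, by omega⟩
end

section
/- Let G and H be finite connected simple graphs, fix a root (r_G, r_H) of G□H, and let c be a pebbling configuration on G□H. For each j ∈ V(H), let N_j denote the maximum, over all finite sequences of pebbling moves that only move pebbles between vertices of the slice G_j (i.e., moves from (i,j) to (i',j) with i adjacent to i' in G), of the number of pebbles placed on the vertex (r_G, j). If Σ_{j∈V(H)} N_j ≥ π(H), then c is (r_G, r_H)-solvable; equivalently, every configuration that is not (r_G, r_H)-solvable satisfies Σ_{j∈V(H)} N_j ≤ π(H) − 1. -/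
open SimpleGraph Finset

/-- A pebbling move on `G □ H` that stays within the `G`-slice at `j ∈ V(H)`:
two pebbles are removed from `(i, j)` and one is added to `(i', j)` with `i ~ i'` in `G`. -/
def SliceMove {α β : Type*} (G : SimpleGraph α) (j : β) (c c' : α × β → ℕ) : Prop :=
  ∃ i i', G.Adj i i' ∧ 2 ≤ c (i, j) ∧ c' (i, j) = c (i, j) - 2 ∧
    c' (i', j) = c (i', j) + 1 ∧ ∀ u : α × β, u ≠ (i, j) → u ≠ (i', j) → c' u = c u

section Aux
open Relation

lemma moveMany {V : Type*} (Gr : SimpleGraph V) {v w : V} (hadj : Gr.Adj v w) :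
    ∀ k (c : V → ℕ), 2 * k ≤ c v → ∃ c', ReflTransGen (PebblingMove Gr) c c' ∧ c w + k ≤ c' w := by
  intro k
  induction k with
  | zero => exact fun c _ => ⟨c, .refl, by omega⟩
  | succ k ih =>
    intro c hc
    classical
    have hne : v ≠ w := hadj.ne
    set c₂ : V → ℕ := fun u => if u = v then c v - 2 else if u = w then c w + 1 else c u with hc₂
    have hmove : PebblingMove Gr c c₂ := by
      refine ⟨v, w, hadj, by omega, ?_, ?_, ?_⟩
      · simp [hc₂]
      · simp [hc₂, hne.symm]
      · intro u h1 h2; simp [hc₂, h1, h2]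
    have h2v : 2 * k ≤ c₂ v := by simp [hc₂]; omega
    obtain ⟨c', hrtg, hle⟩ := ih c₂ h2v
    refine ⟨c', .head hmove hrtg, ?_⟩
    have : c₂ w = c w + 1 := by simp [hc₂, hne.symm]
    omega

lemma walk_solv {V : Type*} (Gr : SimpleGraph V) {v r : V} (p : Gr.Walk v r) :
    ∀ c : V → ℕ, 2 ^ p.length ≤ c v → Solvable Gr c r := by
  induction p with
  | nil => exact fun c hc => ⟨c, .refl, by simpa using hc⟩
  | @cons a b r hadj q ih =>
    intro c hc
    simp only [SimpleGraph.Walk.length_cons] at hc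
    obtain ⟨c', hrtg, hle⟩ := moveMany Gr hadj (2 ^ q.length) c (by rw [pow_succ] at hc; omega)
    obtain ⟨c'', hrtg2, hle2⟩ := ih c' (by omega)
    exact ⟨c'', hrtg.trans hrtg2, hle2⟩

lemma pebbling_set_mem {V : Type*} [Fintype V] (Gr : SimpleGraph V) (hc : Gr.Connected) :
    (Fintype.card V * 2 ^ Fintype.card V) ∈
      {k | ∀ c : V → ℕ, (∑ v, c v) = k → ∀ r, Solvable Gr c r} := by
  classical
  intro c hsum r
  have hne : Nonempty V := hc.nonempty
  have hcard : 1 ≤ Fintype.card V := Fintype.card_pos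
  have hv : ∃ v, 2 ^ Fintype.card V ≤ c v := by
    by_contra hcon
    push_neg at hcon
    have hle : ∑ v, c v ≤ Fintype.card V * (2 ^ Fintype.card V - 1) := by
      calc ∑ v, c v ≤ ∑ _v : V, (2 ^ Fintype.card V - 1) :=
            Finset.sum_le_sum fun v _ => by have := hcon v; omega
        _ = Fintype.card V * (2 ^ Fintype.card V - 1) := by
            rw [Finset.sum_const, smul_eq_mul, Finset.card_univ]
    have h2 : Fintype.card V * (2 ^ Fintype.card V - 1) + Fintype.card V
        = Fintype.card V * 2 ^ Fintype.card V := by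
      rw [← Nat.mul_succ]
      congr 1
      have h1 : 1 ≤ 2 ^ Fintype.card V := Nat.one_le_two_pow
      omega
    omega
  obtain ⟨v, hv⟩ := hv
  obtain ⟨p⟩ := hc.preconnected v r
  have hlen : (p.toPath : Gr.Walk v r).length < Fintype.card V :=
    SimpleGraph.Walk.IsPath.length_lt (p.toPath).2
  exact walk_solv Gr p.toPath c (le_trans (Nat.pow_le_pow_right (by norm_num) hlen.le) hv)

lemma mono_reach {V : Type*} (Gr : SimpleGraph V) {c c₁ : V → ℕ}
    (h : ReflTransGen (PebblingMove Gr) c c₁) :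
    ∀ d : V → ℕ, (∀ v, c v ≤ d v) →
      ∃ d₁, ReflTransGen (PebblingMove Gr) d d₁ ∧ ∀ v, c₁ v ≤ d₁ v := by
  induction h with
  | refl => exact fun d hd => ⟨d, .refl, hd⟩
  | @tail b c₁ _hab hstep ih =>
    intro d hd
    obtain ⟨d₁, hrtg, hle⟩ := ih d hd
    obtain ⟨v, w, hadj, h2, hv, hw, ho⟩ := hstep
    haveI : DecidableEq V := Classical.decEq V
    have hne : v ≠ w := hadj.ne
    set d₂ : V → ℕ := fun u => if u = v then d₁ v - 2 else if u = w then d₁ w + 1 else d₁ u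
      with hd₂
    have hmove : PebblingMove Gr d₁ d₂ := by
      refine ⟨v, w, hadj, le_trans h2 (hle v), by simp [hd₂], by simp [hd₂, hne.symm],
        fun u h1 h3 => by simp [hd₂, h1, h3]⟩
    refine ⟨d₂, hrtg.tail hmove, fun u => ?_⟩
    by_cases h1 : u = v
    · subst h1; have := hle u; simp [hd₂]; omega
    · by_cases h3 : u = w
      · subst h3; have := hle u; simp [hd₂, h1]; omega
      · rw [ho u h1 h3]; simp [hd₂, h1, h3]; exact hle u

lemma exists_le_sum_eq {V : Type*} [Fintype V] (k : ℕ) :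
    ∀ n (c : V → ℕ), ∑ v, c v = k + n → ∃ d : V → ℕ, (∀ v, d v ≤ c v) ∧ ∑ v, d v = k := by
  intro n
  induction n with
  | zero => exact fun c hc => ⟨c, fun v => le_rfl, by omega⟩
  | succ n ih =>
    intro c hc
    classical
    have hv : ∃ v, 1 ≤ c v := by
      by_contra hcon
      push_neg at hcon
      have : ∑ v, c v = 0 := Finset.sum_eq_zero fun v _ => by have := hcon v; omega
      omega
    obtain ⟨v, hv⟩ := hv
    set c₂ : V → ℕ := Function.update c v (c v - 1) with hc₂
    have hsum : ∑ u, c₂ u = k + n := by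
      rw [hc₂, Finset.sum_update_of_mem (Finset.mem_univ v)]
      have := Finset.sum_eq_sum_sdiff_singleton_add (Finset.mem_univ v) c
      omega
    obtain ⟨d, hle, hdsum⟩ := ih c₂ hsum
    refine ⟨d, fun u => le_trans (hle u) ?_, hdsum⟩
    rw [hc₂]
    by_cases h1 : u = v
    · subst h1; simp [Function.update_self]
    · simp [Function.update_of_ne h1]

lemma sliceMove_to_boxMove {α β : Type*} (G : SimpleGraph α) (H : SimpleGraph β) (j : β)
    {c c' : α × β → ℕ} (h : SliceMove G j c c') : PebblingMove (G.boxProd H) c c' := by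
  obtain ⟨i, i', hadj, h2, hv, hw, ho⟩ := h
  exact ⟨(i, j), (i', j), Or.inl ⟨hadj, rfl⟩, h2, hv, hw, ho⟩

lemma slice_restrict {α β : Type*} (G : SimpleGraph α) (j : β) {c c' : α × β → ℕ}
    (h : ReflTransGen (SliceMove G j) c c') :
    ∀ d : α × β → ℕ, (∀ i, d (i, j) = c (i, j)) →
      ∃ d', ReflTransGen (SliceMove G j) d d' ∧ (∀ i, d' (i, j) = c' (i, j)) ∧
        ∀ u : α × β, u.2 ≠ j → d' u = d u := by
  induction h with
  | refl => exact fun d hd => ⟨d, .refl, hd, fun _ _ => rfl⟩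
  | @tail b c' _hab hstep ih =>
    intro d hd
    obtain ⟨d₁, hrtg, hsl, hoff⟩ := ih d hd
    obtain ⟨i, i', hadj, h2, hv, hw, ho⟩ := hstep
    haveI : DecidableEq (α × β) := Classical.decEq _
    have hne : (i, j) ≠ ((i', j) : α × β) := by
      simp only [ne_eq, Prod.mk.injEq]
      exact fun hh => hadj.ne hh.1
    set d₂ : α × β → ℕ := fun u =>
      if u = (i, j) then d₁ (i, j) - 2 else if u = (i', j) then d₁ (i', j) + 1 else d₁ u
      with hd₂
    have hmove : SliceMove G j d₁ d₂ := by
      refine ⟨i, i', hadj, by rw [hsl i]; exact h2, by simp [hd₂], by simp [hd₂, hne.symm],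
        fun u h1 h3 => by simp [hd₂, h1, h3]⟩
    refine ⟨d₂, hrtg.tail hmove, fun i₀ => ?_, fun u hu => ?_⟩
    · by_cases h1 : i₀ = i
      · subst h1; simp [hd₂, hv, hsl]
      · by_cases h3 : i₀ = i'
        · subst h3; simp [hd₂, hne.symm, hw, hsl]
        · have e1 : ((i₀, j) : α × β) ≠ (i, j) := by simp [h1]
          have e3 : ((i₀, j) : α × β) ≠ (i', j) := by simp [h3]
          rw [show d₂ (i₀, j) = d₁ (i₀, j) by simp [hd₂, e1, e3], hsl i₀, ho _ e1 e3]
    · have e1 : u ≠ (i, j) := fun hh => hu (by rw [hh])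
      have e3 : u ≠ (i', j) := fun hh => hu (by rw [hh])
      rw [show d₂ u = d₁ u by simp [hd₂, e1, e3], hoff u hu]

lemma combine {α β : Type*} (G : SimpleGraph α) (H : SimpleGraph β)
    (c : α × β → ℕ) (rG : α) (N : β → ℕ)
    (hN : ∀ j, ∃ c', ReflTransGen (SliceMove G j) c c' ∧ N j ≤ c' (rG, j)) :
    ∀ S : Finset β, ∀ d : α × β → ℕ, (∀ j ∈ S, ∀ i, d (i, j) = c (i, j)) →
      ∃ d', ReflTransGen (PebblingMove (G.boxProd H)) d d' ∧
        (∀ j ∈ S, N j ≤ d' (rG, j)) ∧ ∀ u : α × β, u.2 ∉ S → d' u = d u := by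
  classical
  intro S
  induction S using Finset.induction_on with
  | empty => exact fun d _ => ⟨d, .refl, by simp, fun _ _ => rfl⟩
  | @insert j S hjS ih =>
    intro d hd
    obtain ⟨cj, hcj, hNj⟩ := hN j
    obtain ⟨d₁, hrtg1, hsl, hoff⟩ :=
      slice_restrict G j hcj d (fun i => hd j (Finset.mem_insert_self j S) i)
    have hd₁ : ∀ j' ∈ S, ∀ i, d₁ (i, j') = c (i, j') := by
      intro j' hj' i
      have hne : j' ≠ j := fun hh => hjS (hh ▸ hj')
      rw [hoff (i, j') hne, hd j' (Finset.mem_insert_of_mem hj') i]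
    obtain ⟨d', hrtg2, hNle, hoff2⟩ := ih d₁ hd₁
    refine ⟨d', (ReflTransGen.trans (ReflTransGen.mono (fun _ _ hh => sliceMove_to_boxMove G H j hh) _ _ hrtg1) hrtg2),
      ?_, ?_⟩
    · intro j' hj'
      rcases Finset.mem_insert.mp hj' with h1 | h1
      · subst h1
        rw [hoff2 (rG, j') hjS, hsl rG]
        exact hNj
      · exact hNle j' h1
    · intro u hu
      rw [hoff2 u (fun hh => hu (Finset.mem_insert_of_mem hh)),
        hoff u (fun hh => hu (hh ▸ Finset.mem_insert_self j S))]

lemma lift_column {α β : Type*} (G : SimpleGraph α) (H : SimpleGraph β) (rG : α)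
    {b b' : β → ℕ} (h : ReflTransGen (PebblingMove H) b b') :
    ∀ d : α × β → ℕ, (∀ j, d (rG, j) = b j) →
      ∃ d', ReflTransGen (PebblingMove (G.boxProd H)) d d' ∧ ∀ j, d' (rG, j) = b' j := by
  induction h with
  | refl => exact fun d hd => ⟨d, .refl, hd⟩
  | @tail b₁ b' _hab hstep ih =>
    intro d hd
    obtain ⟨d₁, hrtg, hcol⟩ := ih d hd
    obtain ⟨j, j', hadj, h2, hv, hw, ho⟩ := hstep
    haveI : DecidableEq (α × β) := Classical.decEq _
    have hne : ((rG, j) : α × β) ≠ (rG, j') := by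
      simp only [ne_eq, Prod.mk.injEq]
      exact fun hh => hadj.ne hh.2
    set d₂ : α × β → ℕ := fun u =>
      if u = (rG, j) then d₁ (rG, j) - 2 else if u = (rG, j') then d₁ (rG, j') + 1 else d₁ u
      with hd₂
    have hmove : PebblingMove (G.boxProd H) d₁ d₂ := by
      refine ⟨(rG, j), (rG, j'), Or.inr ⟨hadj, rfl⟩, by rw [hcol j]; exact h2,
        by simp [hd₂], by simp [hd₂, hne.symm], fun u h1 h3 => by simp [hd₂, h1, h3]⟩
    refine ⟨d₂, hrtg.tail hmove, fun j₀ => ?_⟩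
    by_cases h1 : j₀ = j
    · subst h1; simp [hd₂, hv, hcol j₀]
    · by_cases h3 : j₀ = j'
      · subst h3; simp [hd₂, hne.symm, hw, hcol j₀]
      · have e1 : ((rG, j₀) : α × β) ≠ (rG, j) := by simp [h1]
        have e3 : ((rG, j₀) : α × β) ≠ (rG, j') := by simp [h3]
        rw [show d₂ (rG, j₀) = d₁ (rG, j₀) by simp [hd₂, e1, e3], hcol j₀, ho _ h1 h3]

/-- if, for each `j ∈ V(H)`, within-slice moves in `G_j` can place `N j`
pebbles on `(r_G, j)`, and `Σ_j N j ≥ π(H)`, then the configuration is solvable.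
(Taking `N j` to be the maximum achievable number gives the statement with maxima.) -/
theorem stmt5 {α β : Type*} [Fintype α] [Fintype β]
    (G : SimpleGraph α) (H : SimpleGraph β) (hG : G.Connected) (hH : H.Connected)
    (c : α × β → ℕ) (rG : α) (rH : β) (N : β → ℕ)
    (hN : ∀ j : β, ∃ c', Relation.ReflTransGen (SliceMove G j) c c' ∧ N j ≤ c' (rG, j))
    (h : pebblingNumber H ≤ ∑ j : β, N j) :
    Solvable (G.boxProd H) c (rG, rH) := by
  classical
  -- stage 1: run the slice moves for every j
  obtain ⟨c₁, hrtg1, hNle, _⟩ :=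
    combine G H c rG N hN Finset.univ c (fun _ _ _ => rfl)
  set b : β → ℕ := fun j => c₁ (rG, j) with hb
  -- π(H) is a member of the defining set
  have hmem : pebblingNumber H ∈
      {k | ∀ c : β → ℕ, (∑ v, c v) = k → ∀ r, Solvable H c r} :=
    Nat.sInf_mem ⟨_, pebbling_set_mem H hH⟩
  -- b has at least π(H) pebbles
  have hbsum : pebblingNumber H ≤ ∑ j, b j :=
    le_trans h (Finset.sum_le_sum fun j _ => hNle j (Finset.mem_univ j))
  obtain ⟨b₀, hb₀le, hb₀sum⟩ :=
    exists_le_sum_eq (pebblingNumber H) (∑ j, b j - pebblingNumber H) b (by omega)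
  obtain ⟨b₀', hrtgH, h1⟩ := hmem b₀ hb₀sum rH
  obtain ⟨b', hrtgH', hble⟩ := mono_reach H hrtgH b hb₀le
  -- lift the H-solution to the rG column
  obtain ⟨c₂, hrtg2, hcol⟩ := lift_column G H rG hrtgH' c₁ (fun j => rfl)
  exact ⟨c₂, hrtg1.trans hrtg2, by rw [hcol rH]; exact le_trans h1 (hble rH)⟩

end Aux
end

section
/- Let G and H be finite connected simple graphs, fix a root (r_G, r_H) of G□H, fix v ∈ V(H), and let S be a set of neighbors of v in H with 1 ≤ |S| ≤ π(H) − 3. Let c be a pebbling configuration on G□H, let s_v be the support size of c restricted to the slice G_v, and suppose c̃_v ≥ 2·Σ_{j∈S} (π(G) − extra_j) + π₂(G, s_v) + (π(H) − 2 − |S|)·π(G). Then c is (r_G, r_H)-solvable. -/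
open SimpleGraph Finset
open scoped Classical

/-- The 2-pebbling number with the convention `π₂(G, 0) = 2π(G)`. -/
noncomputable def twoPebblingNumber' {V : Type*} (G : SimpleGraph V) [Fintype V] (s : ℕ) : ℕ :=
  if s = 0 then 2 * pebblingNumber G else twoPebblingNumber G s

section Aux

variable {V : Type*} {Γ : SimpleGraph V}

/-- abbreviation for reachability by pebbling moves -/
local notation c " ⟶* " d => Relation.ReflTransGen (PebblingMove Γ) c d

lemma pebblingMove_add {c d : V → ℕ} (e : V → ℕ) (h : PebblingMove Γ c d) :
    PebblingMove Γ (c + e) (d + e) := by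
  obtain ⟨v, w, hvw, h2, hv, hw, ho⟩ := h
  refine ⟨v, w, hvw, ?_, ?_, ?_, ?_⟩
  · have : (c + e) v = c v + e v := rfl
    omega
  · have h1 : (d + e) v = d v + e v := rfl
    have h2' : (c + e) v = c v + e v := rfl
    omega
  · have h1 : (d + e) w = d w + e w := rfl
    have h2' : (c + e) w = c w + e w := rfl
    omega
  · intro u hu hw'
    have h1 : (d + e) u = d u + e u := rfl
    have h2' : (c + e) u = c u + e u := rfl
    rw [h1, h2', ho u hu hw']

lemma rtg_add_s7 {c d : V → ℕ} (e : V → ℕ)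
    (h : Relation.ReflTransGen (PebblingMove Γ) c d) :
    Relation.ReflTransGen (PebblingMove Γ) (c + e) (d + e) :=
  Relation.ReflTransGen.lift (· + e) (fun _ _ hm => pebblingMove_add e hm) _ _ h

/-- From a configuration with all values ≤ 1 no move is possible. -/
lemma rtg_fixed {c d : V → ℕ} (h1 : ∀ u, c u ≤ 1)
    (h : Relation.ReflTransGen (PebblingMove Γ) c d) : d = c := by
  induction h using Relation.ReflTransGen.head_induction_on with
  | refl => rfl
  | head hstep _ _ =>
    obtain ⟨v, w, _, h2, _⟩ := hstep
    exact absurd (h1 v) (by omega)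

/-- intermediate configurations: choose a subconfiguration of prescribed size. -/
lemma peb_exists_between [Fintype V] (b c : V → ℕ) (hbc : b ≤ c) (m : ℕ)
    (h1 : ∑ u, b u ≤ m) (h2 : m ≤ ∑ u, c u) :
    ∃ c₀ : V → ℕ, b ≤ c₀ ∧ c₀ ≤ c ∧ ∑ u, c₀ u = m := by
  obtain ⟨k, rfl⟩ := Nat.exists_eq_add_of_le h1
  clear h1
  induction k generalizing b with
  | zero => exact ⟨b, le_refl b, hbc, by omega⟩
  | succ k ih =>
    have : ∃ u, b u < c u := by
      by_contra hcon
      push_neg at hcon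
      have hle : ∑ u, c u ≤ ∑ u, b u := Finset.sum_le_sum (fun u _ => hcon u)
      omega
    obtain ⟨u, hu⟩ := this
    have hb' : Function.update b u (b u + 1) ≤ c := by
      intro x
      rcases eq_or_ne x u with rfl | hx
      · simp; omega
      · simp [Function.update_of_ne hx]; exact hbc x
    have hsum : ∑ x, Function.update b u (b u + 1) x = (∑ x, b x) + 1 := by
      rw [Finset.sum_update_of_mem (Finset.mem_univ u), Finset.sdiff_singleton_eq_erase]
      have := Finset.sum_erase_add Finset.univ b (Finset.mem_univ u)
      omega
    obtain ⟨c₀, hb₀, hc₀, hs₀⟩ := ih _ hb' (by omega)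
    refine ⟨c₀, le_trans ?_ hb₀, hc₀, by omega⟩
    intro x
    rcases eq_or_ne x u with rfl | hx
    · simp
    · simp [Function.update_of_ne hx]

/-- move k pebbles across a single edge, at cost 2 each -/
lemma moves_pair {u w : V} (hadj : Γ.Adj u w) (k : ℕ) :
    ∀ c : V → ℕ, 2 * k ≤ c u →
    ∃ c', (Relation.ReflTransGen (PebblingMove Γ) c c') ∧
      c' u = c u - 2 * k ∧ c' w = c w + k ∧ ∀ x, x ≠ u → x ≠ w → c' x = c x := by
  have hne : u ≠ w := hadj.ne
  induction k with
  | zero => exact fun c _ => ⟨c, Relation.ReflTransGen.refl, by omega, by omega, fun _ _ _ => rfl⟩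
  | succ k ih =>
    intro c hc
    set c1 : V → ℕ := fun x => if x = u then c u - 2 else if x = w then c w + 1 else c x with hc1
    have hmove : PebblingMove Γ c c1 := by
      refine ⟨u, w, hadj, by omega, by simp [hc1], ?_, ?_⟩
      · simp [hc1, hne.symm]
      · intro x hx hw'
        simp [hc1, hx, hw']
    obtain ⟨c', hrtg, h1, h2, h3⟩ := ih c1 (by simp [hc1]; omega)
    refine ⟨c', Relation.ReflTransGen.head hmove hrtg, ?_, ?_, ?_⟩
    · have : c1 u = c u - 2 := by simp [hc1]
      omega
    · have : c1 w = c w + 1 := by simp [hc1, hne.symm]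
      omega
    · intro x hx hw'
      rw [h3 x hx hw']
      simp [hc1, hx, hw']

/-- pump pebbles along a walk -/
lemma pump {u r : V} (p : Γ.Walk u r) (t : ℕ) :
    ∀ c : V → ℕ, 2 ^ p.length * t ≤ c u → NSolvable Γ c r t := by
  induction p with
  | nil =>
    intro c hc
    exact ⟨c, Relation.ReflTransGen.refl, by simpa using hc⟩
  | @cons a b r hadj p ih =>
    intro c hc
    rw [SimpleGraph.Walk.length_cons] at hc
    obtain ⟨c', hrtg, h1, h2, _⟩ := moves_pair hadj (2 ^ p.length * t) c (by
      have : 2 ^ (p.length + 1) * t = 2 * (2 ^ p.length * t) := by ring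
      omega)
    obtain ⟨c'', hrtg', ht⟩ := ih c' (by omega)
    exact ⟨c'', hrtg.trans hrtg', ht⟩

lemma exists_big [Fintype V] [Nonempty V] (c : V → ℕ) (N : ℕ)
    (h : Fintype.card V * N ≤ ∑ u, c u) : ∃ u, N ≤ c u := by
  have := Finset.exists_le_of_sum_le (f := fun _ : V => N) (g := c)
    (Finset.univ_nonempty) (by simpa [Finset.sum_const, Finset.card_univ, smul_eq_mul] using h)
  obtain ⟨u, _, hu⟩ := this
  exact ⟨u, hu⟩

lemma big_nsolvable [Fintype V] (hΓ : Γ.Connected) (t : ℕ) (c : V → ℕ) (r : V)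
    (h : Fintype.card V * (2 ^ Fintype.card V * t) ≤ ∑ u, c u) : NSolvable Γ c r t := by
  have : Nonempty V := hΓ.nonempty
  obtain ⟨u, hu⟩ := exists_big c _ h
  obtain ⟨w⟩ := hΓ.preconnected u r
  have hp := w.toPath.2
  have hlen : (w.toPath : Γ.Walk u r).length < Fintype.card V := hp.length_lt
  refine pump (w.toPath : Γ.Walk u r) t c (le_trans ?_ hu)
  exact Nat.mul_le_mul_right t (Nat.pow_le_pow_right (by norm_num) (le_of_lt hlen))

end Aux

section Pi

variable {V : Type*} [Fintype V] {Γ : SimpleGraph V}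

lemma sum_sub_of_le {c₀ c : V → ℕ} (h : c₀ ≤ c) :
    (∑ u, (c u - c₀ u)) + ∑ u, c₀ u = ∑ u, c u := by
  rw [← Finset.sum_add_distrib]
  exact Finset.sum_congr rfl (fun u _ => by have hx : c₀ u ≤ c u := h u; omega)

lemma pi_set_nonempty (hΓ : Γ.Connected) :
    {k | ∀ c : V → ℕ, (∑ u, c u) = k → ∀ r, Solvable Γ c r}.Nonempty :=
  ⟨Fintype.card V * (2 ^ Fintype.card V * 1), fun c hc r => big_nsolvable hΓ 1 c r (by omega)⟩

lemma pi_solve (hΓ : Γ.Connected) (c : V → ℕ) (r : V)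
    (h : pebblingNumber Γ ≤ ∑ u, c u) : NSolvable Γ c r 1 := by
  have hmem := Nat.sInf_mem (pi_set_nonempty hΓ)
  obtain ⟨c₀, -, hc₀, hs⟩ := peb_exists_between 0 c (fun x => Nat.zero_le _)
    (pebblingNumber Γ) (by simp) h
  obtain ⟨d, hrtg, hd⟩ := hmem c₀ hs r
  have hdecomp : c = c₀ + (c - c₀) := by
    funext x
    have hx : c₀ x ≤ c x := hc₀ x
    show c x = c₀ x + (c x - c₀ x); omega
  have h6 := rtg_add_s7 (c - c₀) hrtg
  rw [← hdecomp] at h6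
  refine ⟨d + (c - c₀), h6, ?_⟩
  have : (d + (c - c₀)) r = d r + (c r - c₀ r) := rfl
  omega

/-- with `t·π(G)` pebbles anywhere we can place `t` pebbles on any target vertex -/
lemma place_t (hΓ : Γ.Connected) (t : ℕ) :
    ∀ c : V → ℕ, ∀ x : V, t * pebblingNumber Γ ≤ ∑ u, c u →
    ∃ c', Relation.ReflTransGen (PebblingMove Γ) c c' ∧ t ≤ c' x := by
  induction t with
  | zero => exact fun c x _ => ⟨c, .refl, by omega⟩
  | succ t ih =>
    intro c x hc
    rw [Nat.succ_mul] at hc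
    obtain ⟨c₀, -, hc₀, hs⟩ := peb_exists_between 0 c (fun x => Nat.zero_le _)
      (pebblingNumber Γ) (by simp) (by omega)
    obtain ⟨d, hrtg, hd⟩ := pi_solve hΓ c₀ x (by omega)
    set e : V → ℕ := fun u => c u - c₀ u with he
    have hdecomp : c = c₀ + e := by
      funext y
      have hy : c₀ y ≤ c y := hc₀ y
      show c y = c₀ y + (c y - c₀ y); omega
    have hsum_e : (∑ u, e u) + ∑ u, c₀ u = ∑ u, c u := sum_sub_of_le hc₀
    have hrtg1 : Relation.ReflTransGen (PebblingMove Γ) c (d + e) := by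
      have h6 := rtg_add_s7 e hrtg
      rwa [← hdecomp] at h6
    set d' : V → ℕ := Function.update (d + e) x ((d + e) x - 1) with hd'
    have hsd : (∑ u, d' u) + 1 = ∑ u, (d + e) u := by
      rw [hd', Finset.sum_update_of_mem (Finset.mem_univ x), Finset.sdiff_singleton_eq_erase]
      have h2 := Finset.sum_erase_add Finset.univ (d + e) (Finset.mem_univ x)
      have h3 : (d + e) x = d x + e x := rfl
      omega
    have hsum_de : ∑ u, (d + e) u = (∑ u, d u) + ∑ u, e u := Finset.sum_add_distrib
    have hdx : 1 ≤ ∑ u, d u := le_trans hd (Finset.single_le_sum (fun u _ => Nat.zero_le (d u)) (Finset.mem_univ x))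
    obtain ⟨f, hrtg2, hf⟩ := ih d' x (by omega)
    set δ : V → ℕ := fun y => if y = x then 1 else 0 with hδ
    have hsplit : d + e = d' + δ := by
      funext y
      show (d + e) y = d' y + δ y
      rcases eq_or_ne y x with rfl | hy
      · have h3 : (d + e) y = d y + e y := rfl
        have h4 : d' y = (d + e) y - 1 := by simp [hd']
        simp only [hδ, if_pos rfl]
        omega
      · simp [hd', Function.update_of_ne hy, hδ, hy]
    refine ⟨f + δ, ?_, ?_⟩
    · refine hrtg1.trans ?_
      rw [hsplit]
      exact rtg_add_s7 _ hrtg2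
    · have : (f + δ) x = f x + δ x := rfl
      have h7 : δ x = 1 := by simp [hδ]
      omega

lemma card_le_pi (hΓ : Γ.Connected) : Fintype.card V ≤ pebblingNumber Γ := by
  have : Nonempty V := hΓ.nonempty
  refine le_csInf (pi_set_nonempty hΓ) ?_
  intro k hk
  by_contra hlt
  push_neg at hlt
  obtain ⟨r⟩ := ‹Nonempty V›
  set b : V → ℕ := fun x => if x = r then 0 else 1 with hb
  have h1 : ∑ x ∈ Finset.univ.erase r, b x = (Finset.univ.erase r).card := by
    rw [Finset.card_eq_sum_ones]
    exact Finset.sum_congr rfl (fun x hx => by simp [hb, Finset.ne_of_mem_erase hx])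
  have hsb : ∑ u, b u = Fintype.card V - 1 := by
    have h2 := Finset.sum_erase_add Finset.univ b (Finset.mem_univ r)
    have h3 : (Finset.univ.erase r).card = Fintype.card V - 1 := by
      rw [Finset.card_erase_of_mem (Finset.mem_univ r), Finset.card_univ]
    have h4 : b r = 0 := by simp [hb]
    omega
  obtain ⟨c₀, -, hc₀, hs⟩ := peb_exists_between 0 b (fun x => Nat.zero_le _) k (by simp) (by omega)
  obtain ⟨d, hrtg, hd⟩ := hk c₀ hs r
  have hble : ∀ u, b u ≤ 1 := by
    intro u
    rcases eq_or_ne u r with rfl | h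
    · simp [hb]
    · simp [hb, h]
  have hfix := rtg_fixed (fun u => le_trans (hc₀ u) (hble u)) hrtg
  rw [hfix] at hd
  have h5 : c₀ r ≤ b r := hc₀ r
  simp [hb] at h5
  omega

lemma two_set_nonempty (hΓ : Γ.Connected) (s : ℕ) :
    {m | ∀ (r : V) (c : V → ℕ), m ≤ ∑ u, c u →
      (Finset.univ.filter fun u => 1 ≤ c u).card = s → NSolvable Γ c r 2}.Nonempty :=
  ⟨Fintype.card V * (2 ^ Fintype.card V * 2), fun r c h1 _ => big_nsolvable hΓ 2 c r h1⟩

lemma two_mem (hΓ : Γ.Connected) (s : ℕ) :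
    ∀ (r : V) (c : V → ℕ), twoPebblingNumber Γ s ≤ ∑ u, c u →
      (Finset.univ.filter fun u => 1 ≤ c u).card = s → NSolvable Γ c r 2 :=
  Nat.sInf_mem (two_set_nonempty hΓ s)

/-- support size is at most the 2-pebbling number (for the actual support size) -/
lemma support_le_two (hΓ : Γ.Connected) (c : V → ℕ) :
    (Finset.univ.filter fun u => 1 ≤ c u).card
      ≤ twoPebblingNumber Γ ((Finset.univ.filter fun u => 1 ≤ c u).card) := by
  have : Nonempty V := hΓ.nonempty
  set T := Finset.univ.filter fun u => 1 ≤ c u with hT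
  refine le_csInf (two_set_nonempty hΓ T.card) ?_
  intro m hm
  by_contra hlt
  push_neg at hlt
  obtain ⟨r⟩ := ‹Nonempty V›
  set b : V → ℕ := fun x => if x ∈ T then 1 else 0 with hb
  have hsb : ∑ u, b u = T.card := by
    simp only [hb]
    rw [Finset.sum_ite_mem, Finset.univ_inter, Finset.card_eq_sum_ones]
  have hsupp : (Finset.univ.filter fun u => 1 ≤ b u) = T := by
    ext u
    by_cases h : u ∈ T <;> simp [hb, h]
  obtain ⟨d, hrtg, hd⟩ := hm r b (by omega) (by rw [hsupp])
  have hfix := rtg_fixed (fun u => by by_cases h : u ∈ T <;> simp [hb, h]) hrtg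
  rw [hfix] at hd
  have : b r ≤ 1 := by by_cases h : r ∈ T <;> simp [hb, h]
  omega

end Pi

section Lift

lemma sum_point_swap {α : Type*} [Fintype α] (f g : α → ℕ) (i : α)
    (hg : ∀ i', i' ≠ i → g i' = f i') :
    (∑ i', g i') + f i = (∑ i', f i') + g i := by
  rw [← Finset.sum_erase_add _ g (Finset.mem_univ i), ← Finset.sum_erase_add _ f (Finset.mem_univ i)]
  have h1 : ∑ x ∈ Finset.univ.erase i, g x = ∑ x ∈ Finset.univ.erase i, f x :=
    Finset.sum_congr rfl (fun x hx => hg x (Finset.ne_of_mem_erase hx))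
  omega

lemma rtg_lift {V W : Type*} {Γ : SimpleGraph V} {Δ : SimpleGraph W} (φ : V → W)
    (hinj : Function.Injective φ) (hadj : ∀ a b, Γ.Adj a b → Δ.Adj (φ a) (φ b))
    {c c' : V → ℕ} (h : Relation.ReflTransGen (PebblingMove Γ) c c') :
    ∀ C : W → ℕ, (∀ a, C (φ a) = c a) →
    ∃ C', Relation.ReflTransGen (PebblingMove Δ) C C' ∧ (∀ a, C' (φ a) = c' a) ∧
      ∀ z, (∀ a, φ a ≠ z) → C' z = C z := by
  induction h with
  | refl => exact fun C hC => ⟨C, .refl, hC, fun _ _ => rfl⟩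
  | @tail cmid cfin hsteps hstep ih =>
    intro C hC
    obtain ⟨C1, hr1, hmid, hoff⟩ := ih C hC
    obtain ⟨x, y, hxy, h2, hx, hy, ho⟩ := hstep
    have hxyne : φ x ≠ φ y := fun hEq => hxy.ne (hinj hEq)
    set C2 : W → ℕ := fun z => if z = φ x then C1 z - 2 else if z = φ y then C1 z + 1 else C1 z
      with hC2
    have hmove : PebblingMove Δ C1 C2 := by
      refine ⟨φ x, φ y, hadj _ _ hxy, ?_, by simp [hC2], ?_, ?_⟩
      · rw [hmid x]; exact h2
      · simp [hC2, hxyne.symm]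
      · intro u hu hv; simp [hC2, hu, hv]
    refine ⟨C2, hr1.tail hmove, ?_, ?_⟩
    · intro a
      rcases eq_or_ne a x with rfl | hax
      · have : C2 (φ a) = C1 (φ a) - 2 := by simp [hC2]
        rw [this, hmid a, hx]
      · rcases eq_or_ne a y with rfl | hay
        · have : C2 (φ a) = C1 (φ a) + 1 := by simp [hC2, hxyne.symm]
          rw [this, hmid a, hy]
        · have h1 : φ a ≠ φ x := fun hEq => hax (hinj hEq)
          have h2' : φ a ≠ φ y := fun hEq => hay (hinj hEq)
          have : C2 (φ a) = C1 (φ a) := by simp [hC2, h1, h2']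
          rw [this, hmid a, ho a hax hay]
    · intro z hz
      have hz1 : z ≠ φ x := Ne.symm (hz x)
      have hz2 : z ≠ φ y := Ne.symm (hz y)
      have : C2 z = C1 z := by simp [hC2, hz1, hz2]
      rw [this, hoff z hz]

variable {α β : Type*} [Fintype α] [Fintype β] {G : SimpleGraph α} {H : SimpleGraph β}

lemma cross_one {v j : β} (hadj : H.Adj v j) (t : ℕ) :
    ∀ C : α × β → ℕ, t ≤ ∑ i, C (i, v) / 2 →
    ∃ C', Relation.ReflTransGen (PebblingMove (G.boxProd H)) C C' ∧
      (∑ i, C' (i, j)) = (∑ i, C (i, j)) + t ∧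
      (∑ i, C' (i, v) / 2) + t = ∑ i, C (i, v) / 2 ∧
      (∑ i, C' (i, v)) + 2 * t = ∑ i, C (i, v) ∧
      ∀ i j', j' ≠ v → j' ≠ j → C' (i, j') = C (i, j') := by
  have hvj : v ≠ j := hadj.ne
  induction t with
  | zero =>
    intro C _
    exact ⟨C, .refl, by omega, by omega, by omega, fun _ _ _ _ => rfl⟩
  | succ t ih =>
    intro C hC
    have : ∃ i, 1 ≤ C (i, v) / 2 := by
      by_contra hcon
      push_neg at hcon
      have hz : ∑ i, C (i, v) / 2 = 0 :=
        Finset.sum_eq_zero (fun i _ => by have := hcon i; omega)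
      omega
    obtain ⟨i, hi⟩ := this
    have hi2 : 2 ≤ C (i, v) := by omega
    set C1 : α × β → ℕ := fun x => if x = (i, v) then C x - 2 else
      if x = (i, j) then C x + 1 else C x with hC1
    have hne : ((i, v) : α × β) ≠ (i, j) := by simp [hvj]
    have hmove : PebblingMove (G.boxProd H) C C1 := by
      refine ⟨(i, v), (i, j), ?_, hi2, by simp [hC1], ?_, ?_⟩
      · exact SimpleGraph.boxProd_adj.mpr (Or.inr ⟨hadj, rfl⟩)
      · simp [hC1, hne.symm]
      · intro u hu hv'; simp [hC1, hu, hv']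
    have hC1v : ∀ i', i' ≠ i → C1 (i', v) = C (i', v) := by
      intro i' hii
      have e1 : ((i', v) : α × β) ≠ (i, v) := by simp [hii]
      have e2 : ((i', v) : α × β) ≠ (i, j) := by simp [hvj]
      simp [hC1, e1, e2]
    have hC1vi : C1 (i, v) = C (i, v) - 2 := by simp [hC1]
    have hC1j : ∀ i', i' ≠ i → C1 (i', j) = C (i', j) := by
      intro i' hii
      have e1 : ((i', j) : α × β) ≠ (i, v) := by simp [hvj.symm]
      have e2 : ((i', j) : α × β) ≠ (i, j) := by simp [hii]
      simp [hC1, e1, e2]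
    have hC1ji : C1 (i, j) = C (i, j) + 1 := by simp [hC1, hne.symm]
    have hC1oth : ∀ i' j', j' ≠ v → j' ≠ j → C1 (i', j') = C (i', j') := by
      intro i' j' h1 h2
      have e1 : ((i', j') : α × β) ≠ (i, v) := by simp [h1]
      have e2 : ((i', j') : α × β) ≠ (i, j) := by simp [h2]
      simp [hC1, e1, e2]
    have hsv := sum_point_swap (fun i' => C (i', v)) (fun i' => C1 (i', v)) i hC1v
    have hsj := sum_point_swap (fun i' => C (i', j)) (fun i' => C1 (i', j)) i hC1j
    have hsh := sum_point_swap (fun i' => C (i', v) / 2) (fun i' => C1 (i', v) / 2) i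
      (fun i' hii => by show C1 (i', v) / 2 = C (i', v) / 2; rw [hC1v i' hii])
    rw [hC1vi] at hsv
    rw [hC1ji] at hsj
    rw [hC1vi] at hsh
    have hdiv : (C (i, v) - 2) / 2 + 1 = C (i, v) / 2 := by omega
    obtain ⟨C', hr2, hj2, hh2, hv2, hoth2⟩ := ih C1 (by omega)
    refine ⟨C', Relation.ReflTransGen.head hmove hr2, by omega, by omega, by omega, ?_⟩
    intro i' j' h1 h2
    rw [hoth2 i' j' h1 h2, hC1oth i' j' h1 h2]

lemma cross_chain {v : β} (S : Finset β) :
    (∀ j ∈ S, H.Adj v j) → ∀ (T : β → ℕ) (C : α × β → ℕ),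
    (∑ j ∈ S, T j) ≤ ∑ i, C (i, v) / 2 →
    ∃ C', Relation.ReflTransGen (PebblingMove (G.boxProd H)) C C' ∧
      (∀ j ∈ S, (∑ i, C' (i, j)) = (∑ i, C (i, j)) + T j) ∧
      (∑ i, C' (i, v)) + 2 * (∑ j ∈ S, T j) = ∑ i, C (i, v) ∧
      ∀ i j', j' ≠ v → j' ∉ S → C' (i, j') = C (i, j') := by
  induction S using Finset.induction with
  | empty =>
    intro _ T C _
    exact ⟨C, .refl, by simp, by simp, fun _ _ _ _ => rfl⟩
  | @insert a S ha ih =>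
    intro hS T C hC
    rw [Finset.sum_insert ha] at hC
    obtain ⟨C1, hr1, hja, hhalf, hsv, hoth⟩ :=
      cross_one (G := G) (hS a (Finset.mem_insert_self a S)) (T a) C (by omega)
    obtain ⟨C2, hr2, hjs, hsv2, hoth2⟩ := ih (fun j hj => hS j (Finset.mem_insert_of_mem hj))
      T C1 (by omega)
    have hanev : a ≠ v := (hS a (Finset.mem_insert_self a S)).ne'
    refine ⟨C2, hr1.trans hr2, ?_, ?_, ?_⟩
    · intro j hj
      rcases Finset.mem_insert.mp hj with rfl | hj'
      · have heq : ∀ i, C2 (i, j) = C1 (i, j) := fun i => hoth2 i j hanev ha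
        rw [Finset.sum_congr rfl (fun i _ => heq i), hja]
      · have hjv : j ≠ v := (hS j hj).ne'
        have hja' : j ≠ a := by rintro rfl; exact ha hj'
        rw [hjs j hj']
        have heq : ∀ i, C1 (i, j) = C (i, j) := fun i => hoth i j hjv hja'
        rw [Finset.sum_congr rfl (fun i _ => heq i)]
    · rw [Finset.sum_insert ha]; omega
    · intro i j' hjv hjS
      have h1 : j' ≠ a := fun hEq => hjS (hEq ▸ Finset.mem_insert_self a S)
      have h2 : j' ∉ S := fun hEq => hjS (Finset.mem_insert_of_mem hEq)
      rw [hoth2 i j' hjv h2, hoth i j' hjv h1]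

omit [Fintype α] [Fintype β] in
lemma slice_emb_inj (a : β) : Function.Injective (fun i : α => ((i, a) : α × β)) := by
  intro x y hxy
  simpa using hxy

lemma place_chain (hG : G.Connected) (rG : α) (S : Finset β) :
    ∀ C : α × β → ℕ,
    (∀ j ∈ S, pebblingNumber G ≤ ∑ i, C (i, j)) →
    ∃ C', Relation.ReflTransGen (PebblingMove (G.boxProd H)) C C' ∧
      (∀ j ∈ S, 1 ≤ C' (rG, j)) ∧ ∀ i j', j' ∉ S → C' (i, j') = C (i, j') := by
  induction S using Finset.induction with
  | empty => intro C _; exact ⟨C, .refl, by simp, fun _ _ _ => rfl⟩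
  | @insert a S ha ih =>
    intro C hC
    obtain ⟨d, hrtg, hd⟩ := pi_solve hG (fun i => C (i, a)) rG (hC a (Finset.mem_insert_self a S))
    obtain ⟨C1, hr1, hval, hoff⟩ := rtg_lift (fun i => ((i, a) : α × β)) (slice_emb_inj a)
      (fun x y hxy => SimpleGraph.boxProd_adj.mpr (Or.inl ⟨hxy, rfl⟩)) hrtg C (fun i => rfl)
    have hoffa : ∀ i j', j' ≠ a → C1 (i, j') = C (i, j') := by
      intro i j' hj
      refine hoff (i, j') ?_
      intro i' hEq
      exact hj (congrArg Prod.snd hEq).symm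
    obtain ⟨C2, hr2, hvals, hoff2⟩ := ih C1 (fun j hj => by
      have hja : j ≠ a := by rintro rfl; exact ha hj
      have heq : ∀ i, C1 (i, j) = C (i, j) := fun i => hoffa i j hja
      rw [Finset.sum_congr rfl (fun i _ => heq i)]
      exact hC j (Finset.mem_insert_of_mem hj))
    refine ⟨C2, hr1.trans hr2, ?_, ?_⟩
    · intro j hj
      rcases Finset.mem_insert.mp hj with rfl | hj'
      · have h1 : C2 (rG, j) = C1 (rG, j) := hoff2 rG j ha
        have h2 : C1 (rG, j) = d rG := hval rG
        omega
      · exact hvals j hj'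
    · intro i j' hjS
      have h1 : j' ≠ a := fun hEq => hjS (hEq ▸ Finset.mem_insert_self a S)
      have h2 : j' ∉ S := fun hEq => hjS (Finset.mem_insert_of_mem hEq)
      rw [hoff2 i j' h2, hoffa i j' h1]

end Lift

/-- constraint A.5(K, v, S) is valid: if `S` is a set of neighbors of `v` in
`H` with `1 ≤ |S| ≤ π(H) - 3`, and slice `G_v` holds at least
`2·Σ_{j∈S}(π(G) - extra_j) + π₂(G, s_v) + (π(H) - 2 - |S|)·π(G)` pebbles, then the
configuration is solvable. -/
theorem stmt7 {α β : Type*} [Fintype α] [Fintype β]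
    (G : SimpleGraph α) (H : SimpleGraph β) (hG : G.Connected) (hH : H.Connected)
    (c : α × β → ℕ) (rG : α) (rH : β)
    (v : β) (S : Finset β) (hS : ∀ j ∈ S, H.Adj v j)
    (hcard1 : 1 ≤ S.card) (hcard2 : S.card ≤ pebblingNumber H - 3)
    (h : 2 * (∑ j ∈ S, (pebblingNumber G - (∑ i : α, c (i, j)) % pebblingNumber G))
        + twoPebblingNumber' G ((Finset.univ.filter fun i : α => 1 ≤ c (i, v)).card)
        + (pebblingNumber H - 2 - S.card) * pebblingNumber G
        ≤ ∑ i : α, c (i, v)) :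
    Solvable (G.boxProd H) c (rG, rH) := by
  classical
  have hNα : Nonempty α := hG.nonempty
  have hNβ : Nonempty β := hH.nonempty
  set πG := pebblingNumber G with hπG
  set πH := pebblingNumber H with hπH
  set cv : α → ℕ := fun i => c (i, v) with hcv
  set sv := (Finset.univ.filter fun i : α => 1 ≤ c (i, v)).card with hsvdef
  have hπGcard : Fintype.card α ≤ πG := card_le_pi hG
  have hcardα : 1 ≤ Fintype.card α := Fintype.card_pos
  have hπG0 : 0 < πG := by omega
  -- v ∉ S
  have hvS : v ∉ S := fun hv => (H.loopless.irrefl v) (hS v hv)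
  -- πH ≥ S.card + 3
  have hπH3 : S.card + 3 ≤ πH := by omega
  set K := πH - 2 - S.card with hK
  have hK1 : 1 ≤ K := by omega
  have hKπ : πG ≤ K * πG := Nat.le_mul_of_pos_left πG (by omega)
  set Tsum := ∑ j ∈ S, (πG - (∑ i : α, c (i, j)) % πG) with hTsum
  set ctv := ∑ i : α, c (i, v) with hctv
  -- the support is nonempty
  have hsv1 : sv ≠ 0 := by
    intro h0
    have hfe : (Finset.univ.filter fun i : α => 1 ≤ c (i, v)) = ∅ := Finset.card_eq_zero.mp h0
    have hz : ∀ i, c (i, v) = 0 := by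
      intro i
      by_contra hci
      have hmem : i ∈ Finset.univ.filter fun i : α => 1 ≤ c (i, v) := by
        simp only [Finset.mem_filter, Finset.mem_univ, true_and]; omega
      rw [hfe] at hmem
      exact absurd hmem (Finset.notMem_empty i)
    have hzz : ctv = 0 := by rw [hctv]; exact Finset.sum_eq_zero fun i _ => hz i
    rw [h0] at h
    rw [show twoPebblingNumber' G 0 = 2 * pebblingNumber G from if_pos rfl] at h
    omega
  set π₂ := twoPebblingNumber G sv with hπ₂
  have hh : 2 * Tsum + π₂ + K * πG ≤ ctv := by
    have : twoPebblingNumber' G sv = π₂ := by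
      simp only [twoPebblingNumber', if_neg hsv1, hπ₂, hπG]
    rw [this] at h
    exact h
  -- support lower bound for π₂
  have hsvπ₂ : sv ≤ π₂ := support_le_two hG cv
  -- the reserved subconfiguration c₀
  set T : Finset α := Finset.univ.filter fun i => 1 ≤ c (i, v) with hT
  set b : α → ℕ := fun i => if i ∈ T then 1 else 0 with hb
  have hble : b ≤ cv := by
    intro i
    by_cases hi : i ∈ T
    · have : 1 ≤ c (i, v) := (Finset.mem_filter.mp hi).2
      simp [hb, hi, hcv]; omega
    · simp [hb, hi]
  have hsb : ∑ i, b i = sv := by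
    simp only [hb]
    rw [Finset.sum_ite_mem, Finset.univ_inter, hsvdef, Finset.card_eq_sum_ones]
  have hπ₂ctv : π₂ ≤ ctv := by omega
  have hcvsum : (∑ i, cv i) = ctv := rfl
  obtain ⟨c₀, hbc₀, hc₀le, hsc₀⟩ := peb_exists_between b cv hble π₂ (by omega) (by omega)
  have hsupp : (Finset.univ.filter fun i => 1 ≤ c₀ i) = T := by
    ext i
    simp only [Finset.mem_filter, Finset.mem_univ, true_and]
    constructor
    · intro hi
      have h1 : c₀ i ≤ cv i := hc₀le i
      have h2 : 1 ≤ c (i, v) := by have : cv i = c (i, v) := rfl; omega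
      exact Finset.mem_filter.mpr ⟨Finset.mem_univ i, h2⟩
    · intro hi
      have h1 : b i ≤ c₀ i := hbc₀ i
      have h2 : b i = 1 := by simp [hb, hi]
      omega
  -- two pebbles on (rG, v) from c₀
  obtain ⟨d, hrtgd, hd2⟩ := two_mem hG sv rG c₀ (by omega) (by rw [hsupp])
  -- decomposition c = E + A
  set A : α × β → ℕ := fun x => if x.2 = v then c₀ x.1 else 0 with hA
  have hAle : ∀ x : α × β, A x ≤ c x := by
    rintro ⟨i, j⟩
    by_cases hj : j = v
    · subst hj
      have : c₀ i ≤ cv i := hc₀le i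
      simpa [hA] using this
    · simp [hA, hj]
  set E : α × β → ℕ := fun x => c x - A x with hE
  have hdecomp : c = E + A := by
    funext x
    have := hAle x
    show c x = (c x - A x) + A x
    omega
  have hEv : ∀ i, E (i, v) = c (i, v) - c₀ i := by
    intro i
    simp [hE, hA]
  have hEj : ∀ (i : α) (j : β), j ≠ v → E (i, j) = c (i, j) := by
    intro i j hj
    simp [hE, hA, hj]
  have hEvsum : (∑ i, E (i, v)) + π₂ = ctv := by
    have h1 : (∑ i, (cv i - c₀ i)) + ∑ i, c₀ i = ∑ i, cv i := sum_sub_of_le hc₀le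
    have h2 : ∑ i, E (i, v) = ∑ i, (cv i - c₀ i) :=
      Finset.sum_congr rfl (fun i _ => by rw [hEv i])
    have h3 : ∑ i, cv i = ctv := rfl
    omega
  -- pair count bound
  have hpair : Tsum ≤ ∑ i, E (i, v) / 2 := by
    have h1 : ∑ i, E (i, v) ≤ ∑ i, (2 * (E (i, v) / 2) + 1) :=
      Finset.sum_le_sum (fun i _ => by omega)
    have h2 : ∑ i, (2 * (E (i, v) / 2) + 1) = 2 * (∑ i, E (i, v) / 2) + Fintype.card α := by
      rw [Finset.sum_add_distrib, ← Finset.mul_sum]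
      simp [Finset.card_univ]
    omega
  -- crossing into the slices of S
  obtain ⟨E1, hr1, hE1S, hE1v, hE1oth⟩ := cross_chain (G := G) S hS
    (fun j => πG - (∑ i : α, c (i, j)) % πG) E (by rw [← hTsum]; exact hpair)
  -- each slice j ∈ S now has at least πG pebbles
  have hE1big : ∀ j ∈ S, πG ≤ ∑ i, E1 (i, j) := by
    intro j hj
    have hjv : j ≠ v := (hS j hj).ne'
    have h1 : ∑ i, E (i, j) = ∑ i, c (i, j) :=
      Finset.sum_congr rfl (fun i _ => hEj i j hjv)
    have h2 := hE1S j hj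
    have h3 : (∑ i : α, c (i, j)) % πG ≤ ∑ i : α, c (i, j) := Nat.mod_le _ _
    have h4 : (∑ i : α, c (i, j)) % πG < πG := Nat.mod_lt _ hπG0
    omega
  -- place one pebble on (rG, j) for each j ∈ S
  obtain ⟨E2, hr2, hE2S, hE2oth⟩ := place_chain (H := H) hG rG S E1 hE1big
  -- slice v of E2 has at least K·πG pebbles
  have hE2v : ∀ i, E2 (i, v) = E1 (i, v) := fun i => hE2oth i v hvS
  have hE2vsum : K * πG ≤ ∑ i, E2 (i, v) := by
    have h1 : ∑ i, E2 (i, v) = ∑ i, E1 (i, v) := Finset.sum_congr rfl (fun i _ => hE2v i)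
    omega
  -- place K pebbles on (rG, v)
  obtain ⟨d2, hrtg3, hd2K⟩ := place_t hG K (fun i => E2 (i, v)) rG hE2vsum
  obtain ⟨E3, hr3, hval3, hoff3⟩ := rtg_lift (fun i => ((i, v) : α × β)) (slice_emb_inj v)
    (fun x y hxy => SimpleGraph.boxProd_adj.mpr (Or.inl ⟨hxy, rfl⟩)) hrtg3 E2 (fun i => rfl)
  have hE3v : K ≤ E3 (rG, v) := by rw [hval3 rG]; exact hd2K
  have hE3S : ∀ j ∈ S, 1 ≤ E3 (rG, j) := by
    intro j hj
    have hjv : j ≠ v := (hS j hj).ne'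
    have : E3 (rG, j) = E2 (rG, j) := by
      refine hoff3 (rG, j) ?_
      intro i' hEq
      exact hjv (congrArg Prod.snd hEq).symm
    rw [this]
    exact hE2S j hj
  -- moves of the reserved part
  obtain ⟨A1, hrA, hvalA, _⟩ := rtg_lift (fun i => ((i, v) : α × β)) (slice_emb_inj v)
    (fun x y hxy => SimpleGraph.boxProd_adj.mpr (Or.inl ⟨hxy, rfl⟩)) hrtgd A
    (fun i => by simp [hA])
  have hA1v : 2 ≤ A1 (rG, v) := by rw [hvalA rG]; exact hd2
  -- the column configuration
  set F : α × β → ℕ := A1 + E3 with hF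
  set Q : β → ℕ := fun j' => F (rG, j') with hQ
  have hQv : 2 + K ≤ Q v := by
    have : Q v = A1 (rG, v) + E3 (rG, v) := rfl
    omega
  have hQS : ∀ j ∈ S, 1 ≤ Q j := by
    intro j hj
    have : Q j = A1 (rG, j) + E3 (rG, j) := rfl
    have h2 := hE3S j hj
    omega
  have hQsum : πH ≤ ∑ j', Q j' := by
    have h1 : ∑ j' ∈ insert v S, Q j' ≤ ∑ j', Q j' :=
      Finset.sum_le_sum_of_subset (Finset.subset_univ _)
    rw [Finset.sum_insert hvS] at h1
    have h2 : S.card ≤ ∑ j' ∈ S, Q j' := by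
      have := Finset.sum_le_sum (fun j hj => hQS j hj)
      simpa using this
    omega
  obtain ⟨q, hrq, hq1⟩ := pi_solve hH Q rH hQsum
  obtain ⟨Cfin, hrfin, hvalfin, _⟩ := rtg_lift (fun j' => ((rG, j') : α × β))
    (fun x y hxy => by simpa using hxy)
    (fun x y hxy => SimpleGraph.boxProd_adj.mpr (Or.inr ⟨hxy, rfl⟩)) hrq F (fun j' => rfl)
  -- assemble all the moves
  have rE : Relation.ReflTransGen (PebblingMove (G.boxProd H)) E E3 := hr1.trans (hr2.trans hr3)
  have rEA : Relation.ReflTransGen (PebblingMove (G.boxProd H)) (E + A) (E3 + A) := rtg_add_s7 A rE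
  have rA : Relation.ReflTransGen (PebblingMove (G.boxProd H)) (A + E3) (A1 + E3) := rtg_add_s7 E3 hrA
  have rA' : Relation.ReflTransGen (PebblingMove (G.boxProd H)) (E3 + A) F := by
    rw [hF, add_comm E3 A] at *
    exact rA
  refine ⟨Cfin, ?_, ?_⟩
  · rw [hdecomp]
    exact rEA.trans (rA'.trans hrfin)
  · have : Cfin (rG, rH) = q rH := hvalfin rH
    omega
end

section
/- Let G and H be finite connected simple graphs, fix a root (r_G, r_H) of G□H, fix v ∈ V(H)\{r_H}, and let d := dist_H(v, r_H). Let c be a pebbling configuration on G□H, let s_v be the support size of c restricted to the slice G_v, and suppose Σ_{j ∈ V(H)\{r_H, v}} ( Σ_{i∈V(G)} ⌊c(i,j) / 2^{dist_H(v,j)}⌋ ) + c̃_v ≥ π₂^{mon}(G, s_v) + (2^d − 2)·π(G). Then c is (r_G, r_H)-solvable. -/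
open SimpleGraph Finset

/-- The monotonic 2-pebbling number `π₂^{mon}(G, s) = max_{s ≤ s' ≤ |V(G)|} π₂(G, s')`. -/
noncomputable def twoPebblingNumberMon {V : Type*} (G : SimpleGraph V) [Fintype V]
    (s : ℕ) : ℕ :=
  (Finset.Icc s (Fintype.card V)).sup (twoPebblingNumber' G)

namespace Peb

variable {V : Type*} [DecidableEq V] {G : SimpleGraph V}

abbrev RTG (G : SimpleGraph V) : (V → ℕ) → (V → ℕ) → Prop := Relation.ReflTransGen (PebblingMove G)

lemma rtg_add {a b : V → ℕ} (h : RTG G a b) (e : V → ℕ) :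
    RTG G (fun v => a v + e v) (fun v => b v + e v) := by
  induction h with
  | refl => exact .refl
  | @tail x y hxy hstep ih =>
    obtain ⟨p, q, hadj, h2, hp, hq, ho⟩ := hstep
    refine ih.tail ⟨p, q, hadj, by simp only []; omega, ?_, ?_, ?_⟩
    · show y p + e p = (x p + e p) - 2; omega
    · show y q + e q = (x q + e q) + 1; omega
    · intro u hu1 hu2; show y u + e u = x u + e u; rw [ho u hu1 hu2]

lemma rtg_eq_of_le_one {c c' : V → ℕ} (hc : ∀ v, c v ≤ 1) (h : RTG G c c') : c' = c := by
  rcases Relation.ReflTransGen.cases_head h with rfl | ⟨d, hd, _⟩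
  · rfl
  · obtain ⟨p, _, _, h2, _⟩ := hd
    exact absurd (hc p) (by omega)

lemma multi_move {u w : V} (h : G.Adj u w) (k : ℕ) (c : V → ℕ) (hc : 2*k ≤ c u) :
    RTG G c (fun x => if x = u then c u - 2*k else if x = w then c w + k else c x) := by
  induction k generalizing c with
  | zero =>
    have : (fun x => if x = u then c u - 2*0 else if x = w then c w + 0 else c x) = c := by
      funext x; split_ifs with h1 h2 <;> simp_all
    rw [this]
  | succ k ih =>
    have hne : w ≠ u := h.ne'
    set c₁ : V → ℕ := fun x => if x = u then c u - 2 else if x = w then c w + 1 else c x with hc₁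
    have hmove : PebblingMove G c c₁ := by
      refine ⟨u, w, h, by omega, by simp [hc₁], by simp [hc₁, hne], ?_⟩
      intro x h1 h2; simp [hc₁, h1, h2]
    have h2k : 2*k ≤ c₁ u := by simp [hc₁]; omega
    have := ih c₁ h2k
    have heq : (fun x => if x = u then c₁ u - 2*k else if x = w then c₁ w + k else c₁ x)
        = (fun x => if x = u then c u - 2*(k+1) else if x = w then c w + (k+1) else c x) := by
      funext x
      by_cases h1 : x = u
      · simp [h1, hc₁]; omega
      · by_cases h2 : x = w <;> simp [h1, h2, hc₁, hne] <;> omega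
    rw [heq] at this
    exact Relation.ReflTransGen.head hmove this

lemma send' : ∀ {u r : V} (p : G.Walk u r), u ≠ r → ∀ (c : V → ℕ) (k : ℕ),
    k * 2 ^ p.length ≤ c u →
    ∃ c', RTG G c c' ∧ c r + k ≤ c' r ∧ (∀ x, x ≠ u → x ≠ r → c x ≤ c' x) ∧
      c u - k * 2 ^ p.length ≤ c' u
  | u, _, SimpleGraph.Walk.nil, hur, _, _, _ => absurd rfl hur
  | u, r, SimpleGraph.Walk.cons hadj q, hur, c, k, hc => by
    rename_i w
    have hlen : (SimpleGraph.Walk.cons hadj q).length = q.length + 1 := by simp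
    have huw : u ≠ w := hadj.ne
    have e2 : 2 * (k * 2 ^ q.length) = k * 2 ^ (q.length + 1) := by rw [pow_succ]; ring
    rw [hlen] at hc ⊢
    have hc' : 2 * (k * 2 ^ q.length) ≤ c u := by omega
    set c₁ : V → ℕ := fun x => if x = u then c u - 2*(k * 2 ^ q.length)
      else if x = w then c w + k * 2 ^ q.length else c x with hc₁def
    have h₁ : RTG G c c₁ := multi_move hadj (k * 2 ^ q.length) c hc'
    have hc₁u : c₁ u = c u - k * 2 ^ (q.length + 1) := by
      simp only [hc₁def, if_pos trivial]; omega
    by_cases hwr : w = r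
    · subst hwr
      refine ⟨c₁, h₁, ?_, ?_, ?_⟩
      · have h1 : c₁ w = c w + k * 2 ^ q.length := by
          simp only [hc₁def]; rw [if_neg (Ne.symm huw), if_pos trivial]
        have h2 : 1 ≤ 2 ^ q.length := Nat.one_le_two_pow
        have h3 : k ≤ k * 2 ^ q.length := Nat.le_mul_of_pos_right k h2
        omega
      · intro x hx1 hx2; simp only [hc₁def]; rw [if_neg hx1, if_neg hx2]
      · omega
    · have hq : k * 2 ^ q.length ≤ c₁ w := by
        simp only [hc₁def]; rw [if_neg (Ne.symm huw), if_pos trivial]; omega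
      obtain ⟨c₂, h₂, hr₂, ho₂, hw₂⟩ := send' q hwr c₁ k hq
      have hc₁r : c₁ r = c r := by
        simp only [hc₁def]; rw [if_neg (Ne.symm hur), if_neg (Ne.symm hwr)]
      have hc₁w : c₁ w = c w + k * 2 ^ q.length := by
        simp only [hc₁def]; rw [if_neg (Ne.symm huw), if_pos trivial]
      refine ⟨c₂, h₁.trans h₂, by omega, ?_, ?_⟩
      · intro x hx1 hx2
        by_cases hxw : x = w
        · subst hxw; omega
        · have hcx : c₁ x = c x := by
            simp only [hc₁def]; rw [if_neg hx1, if_neg hxw]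
          have := ho₂ x hxw hx2
          omega
      · have := ho₂ u huw hur
        omega

lemma lift_hom {W : Type*} [DecidableEq W] {G' : SimpleGraph W} (φ : G →g G')
    (hinj : Function.Injective φ) {f f' : V → ℕ} (h : RTG G f f') :
    ∀ C : W → ℕ, (∀ i, C (φ i) = f i) →
      ∃ C', RTG G' C C' ∧ (∀ i, C' (φ i) = f' i) ∧ ∀ p, (∀ i, p ≠ φ i) → C' p = C p := by
  induction h with
  | refl => exact fun C hC => ⟨C, .refl, hC, fun _ _ => rfl⟩
  | @tail x y hxy hstep ih =>
    intro C hC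
    obtain ⟨C₁, h₁, hC₁, ho₁⟩ := ih C hC
    obtain ⟨p, q, hadj, h2, hp, hq, ho⟩ := hstep
    have hpq : φ p ≠ φ q := fun e => (G.ne_of_adj hadj) (hinj e)
    set C₂ : W → ℕ := fun z => if z = φ p then C₁ z - 2 else if z = φ q then C₁ z + 1 else C₁ z
      with hC₂def
    have hmove : PebblingMove G' C₁ C₂ := by
      refine ⟨φ p, φ q, φ.map_adj hadj, ?_, ?_, ?_, ?_⟩
      · rw [hC₁ p]; exact h2
      · simp only [hC₂def, if_pos trivial]
      · simp only [hC₂def]; rw [if_neg (Ne.symm hpq), if_pos trivial]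
      · intro u hu1 hu2; simp only [hC₂def]; rw [if_neg hu1, if_neg hu2]
    refine ⟨C₂, h₁.tail hmove, ?_, ?_⟩
    · intro i
      by_cases hip : i = p
      · subst hip; simp only [hC₂def, if_pos trivial]; rw [hC₁ i, hp]
      · by_cases hiq : i = q
        · subst hiq
          simp only [hC₂def]; rw [if_neg (fun e => hip (hinj e))]
          rw [if_pos trivial, hC₁ i, hq]
        · simp only [hC₂def]
          rw [if_neg (fun e => hip (hinj e)), if_neg (fun e => hiq (hinj e)),
            hC₁ i, ho i hip hiq]
    · intro z hz
      simp only [hC₂def]; rw [if_neg (hz p), if_neg (hz q)]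
      exact ho₁ z hz

lemma exists_sub [Fintype V] : ∀ (k : ℕ) (f : V → ℕ), k ≤ ∑ v, f v →
    ∃ g : V → ℕ, (∀ v, g v ≤ f v) ∧ ∑ v, g v = k
  | 0, f, _ => ⟨fun _ => 0, fun _ => Nat.zero_le _, by simp⟩
  | (k+1), f, hk => by
    obtain ⟨g, hg, hgs⟩ := exists_sub k f (by omega)
    have : ∃ v, g v < f v := by
      by_contra hcon
      push_neg at hcon
      have := Finset.sum_le_sum (s := (Finset.univ : Finset V)) (fun v _ => hcon v)
      omega
    obtain ⟨v₀, hv₀⟩ := this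
    refine ⟨Function.update g v₀ (g v₀ + 1), ?_, ?_⟩
    · intro v
      by_cases hv : v = v₀
      · subst hv; rw [Function.update_self]; omega
      · rw [Function.update_of_ne hv]; exact hg v
    · rw [Finset.sum_update_of_mem (Finset.mem_univ v₀), Finset.sdiff_singleton_eq_erase]
      rw [← hgs, ← Finset.sum_erase_add Finset.univ g (Finset.mem_univ v₀)]
      omega

section FintypeV
variable [Fintype V]

lemma nsolvable_of_stack (hG : G.Connected) {r u : V} {c : V → ℕ} {t : ℕ}
    (hu : t * 2 ^ (G.dist u r) ≤ c u) : NSolvable G c r t := by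
  by_cases hur : u = r
  · subst hur
    refine ⟨c, .refl, ?_⟩
    rw [SimpleGraph.dist_self] at hu
    simpa using hu
  · obtain ⟨p, hp⟩ := (hG.preconnected u r).exists_walk_length_eq_dist
    rw [← hp] at hu
    obtain ⟨c', hc', hr', _, _⟩ := send' p hur c t hu
    exact ⟨c', hc', by omega⟩

lemma pigeon (B : ℕ) (c : V → ℕ) (h : Fintype.card V * B < ∑ v, c v) : ∃ u, B < c u := by
  by_contra hcon
  push_neg at hcon
  have := Finset.sum_le_sum (s := (Finset.univ : Finset V)) fun v _ => hcon v
  simp only [Finset.sum_const, Finset.card_univ, smul_eq_mul] at this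
  omega

lemma P_nonempty (hG : G.Connected) :
    {k | ∀ c : V → ℕ, (∑ v, c v) = k → ∀ r, Solvable G c r}.Nonempty := by
  set B := Finset.univ.sup (fun u => Finset.univ.sup (fun r : V => 2 ^ (G.dist u r))) with hB
  refine ⟨Fintype.card V * B + 1, fun c hc r => ?_⟩
  obtain ⟨u, hu⟩ := pigeon B c (by omega)
  have hBu : 2 ^ (G.dist u r) ≤ B :=
    le_trans (Finset.le_sup (f := fun r : V => 2 ^ (G.dist u r)) (Finset.mem_univ r))
      (Finset.le_sup (f := fun u => Finset.univ.sup (fun r : V => 2 ^ (G.dist u r)))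
        (Finset.mem_univ u))
  exact nsolvable_of_stack hG (u := u) (by omega)

lemma S_nonempty (hG : G.Connected) (s : ℕ) :
    {m | ∀ (r : V) (c : V → ℕ), m ≤ ∑ v, c v →
      (Finset.univ.filter fun v => 1 ≤ c v).card = s → NSolvable G c r 2}.Nonempty := by
  set B := Finset.univ.sup (fun u => Finset.univ.sup (fun r : V => 2 ^ (G.dist u r + 1))) with hB
  refine ⟨Fintype.card V * B + 1, fun r c hc _ => ?_⟩
  obtain ⟨u, hu⟩ := pigeon B c (by omega)
  have hBu : 2 ^ (G.dist u r + 1) ≤ B :=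
    le_trans (Finset.le_sup (f := fun r : V => 2 ^ (G.dist u r + 1)) (Finset.mem_univ r))
      (Finset.le_sup (f := fun u => Finset.univ.sup (fun r : V => 2 ^ (G.dist u r + 1)))
        (Finset.mem_univ u))
  have : 2 * 2 ^ (G.dist u r) = 2 ^ (G.dist u r + 1) := by rw [pow_succ]; ring
  exact nsolvable_of_stack hG (u := u) (t := 2) (by omega)

lemma pi_pos (hG : G.Connected) [Nonempty V] : 1 ≤ pebblingNumber G := by
  by_contra h0
  push_neg at h0
  have hmem : pebblingNumber G ∈
      {k | ∀ c : V → ℕ, (∑ v, c v) = k → ∀ r, Solvable G c r} :=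
    Nat.sInf_mem (P_nonempty hG)
  have h00 : pebblingNumber G = 0 := by omega
  rw [h00] at hmem
  obtain ⟨r⟩ := ‹Nonempty V›
  obtain ⟨c', hc', hr'⟩ := hmem (fun _ => 0) (by simp) r
  have := rtg_eq_of_le_one (G := G) (fun v => by omega) hc'
  rw [this] at hr'
  simp at hr'

lemma pi_extract (hG : G.Connected) (r : V) : ∀ (k : ℕ) (f : V → ℕ),
    k * pebblingNumber G ≤ ∑ v, f v → NSolvable G f r k
  | 0, f, _ => ⟨f, .refl, Nat.zero_le _⟩
  | (k+1), f, hk => by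
    have hπ : pebblingNumber G ∈
        {k | ∀ c : V → ℕ, (∑ v, c v) = k → ∀ r, Solvable G c r} :=
      Nat.sInf_mem (P_nonempty hG)
    have hmul : (k+1) * pebblingNumber G = k * pebblingNumber G + pebblingNumber G := by ring
    obtain ⟨g, hg, hgs⟩ := exists_sub (pebblingNumber G) f (by omega)
    obtain ⟨b, hb, hbr⟩ := hπ g hgs r
    have hf : f = fun v => g v + (f v - g v) := funext fun v => by have := hg v; omega
    have h1 : RTG G f (fun v => b v + (f v - g v)) := by
      nth_rewrite 1 [hf]; exact rtg_add hb _
    have hsplit : (∑ v, (f v - g v)) + (∑ v, g v) = ∑ v, f v := by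
      rw [← Finset.sum_add_distrib]
      exact Finset.sum_congr rfl fun v _ => by have := hg v; omega
    obtain ⟨b₂, hb₂, hbr₂⟩ := pi_extract hG r k (fun v => f v - g v)
      (show k * pebblingNumber G ≤ ∑ v, (f v - g v) by omega)
    have h2 : RTG G (fun v => (f v - g v) + b v) (fun v => b₂ v + b v) := rtg_add hb₂ b
    have hcomm : (fun v => b v + (f v - g v)) = fun v => (f v - g v) + b v :=
      funext fun v => Nat.add_comm _ _
    exact ⟨fun v => b₂ v + b v, h1.trans (hcomm ▸ h2), show k + 1 ≤ b₂ r + b r by omega⟩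

lemma key (hG : G.Connected) (r : V) (f : V → ℕ) (m : ℕ)
    (h : twoPebblingNumber' G ((Finset.univ.filter fun v => 1 ≤ f v).card)
        + m * pebblingNumber G ≤ ∑ v, f v) :
    NSolvable G f r (m + 2) := by
  have hne : Nonempty V := ⟨r⟩
  set s := (Finset.univ.filter fun v => 1 ≤ f v).card with hs
  have hπ1 : 1 ≤ pebblingNumber G := pi_pos hG
  by_cases hs0 : s = 0
  · exfalso
    have hfilter : (Finset.univ.filter fun v => 1 ≤ f v) = ∅ := Finset.card_eq_zero.mp (hs ▸ hs0)
    have hf0 : ∀ v, f v = 0 := by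
      intro v
      by_contra hv
      have hmem : v ∈ Finset.univ.filter fun v => 1 ≤ f v := by
        simp only [Finset.mem_filter, Finset.mem_univ, true_and]; omega
      rw [hfilter] at hmem
      exact absurd hmem (Finset.notMem_empty v)
    have hsum0 : ∑ v, f v = 0 := Finset.sum_eq_zero fun v _ => hf0 v
    rw [twoPebblingNumber', if_pos hs0] at h
    omega
  have hS : twoPebblingNumber G s ∈ {m | ∀ (r : V) (c : V → ℕ), m ≤ ∑ v, c v →
      (Finset.univ.filter fun v => 1 ≤ c v).card = s → NSolvable G c r 2} :=
    Nat.sInf_mem (S_nonempty hG s)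
  rw [twoPebblingNumber', if_neg hs0] at h
  have hssum : s ≤ ∑ v, f v := by
    calc s = ∑ v ∈ Finset.univ.filter (fun v => 1 ≤ f v), 1 :=
          (Finset.card_eq_sum_ones _)
    _ ≤ ∑ v ∈ Finset.univ.filter (fun v => 1 ≤ f v), f v :=
          Finset.sum_le_sum fun v hv => (Finset.mem_filter.mp hv).2
    _ ≤ ∑ v, f v := Finset.sum_le_sum_of_subset (Finset.filter_subset _ _)
  by_cases hcase : m * pebblingNumber G ≤ (∑ v, f v) - s
  · -- main case
    have hbool : (∑ v, if 1 ≤ f v then (1:ℕ) else 0) = s := by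
      rw [hs, Finset.sum_boole]; simp
    have hsum1 : ∑ v, f v ≤ (∑ v, (f v - 1)) + s := by
      have hle : ∑ v, f v ≤ ∑ v, ((f v - 1) + if 1 ≤ f v then 1 else 0) :=
        Finset.sum_le_sum fun v _ => by split_ifs <;> omega
      rw [Finset.sum_add_distrib, hbool] at hle
      exact hle
    obtain ⟨e, he, hes⟩ := exists_sub (m * pebblingNumber G) (fun v => f v - 1)
      (show m * pebblingNumber G ≤ ∑ v, (f v - 1) by omega)
    have he1 : ∀ v, e v ≤ f v - 1 := he
    have hgsplit : (∑ v, (f v - e v)) + (∑ v, e v) = ∑ v, f v := by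
      rw [← Finset.sum_add_distrib]
      exact Finset.sum_congr rfl fun v _ => by have := he1 v; omega
    have hsupp : (Finset.univ.filter fun v => 1 ≤ f v - e v) = Finset.univ.filter fun v => 1 ≤ f v := by
      apply Finset.filter_congr
      intro v _
      have := he1 v
      constructor <;> intro <;> omega
    have hes' : ∑ v, e v = m * pebblingNumber G := by
      have : (∑ v, e v) = ∑ v, (fun v => e v) v := rfl
      omega
    have h2solv : NSolvable G (fun v => f v - e v) r 2 := by
      apply hS r
      · show twoPebblingNumber G s ≤ ∑ v, (f v - e v)
        omega
      · rw [show (Finset.univ.filter fun v => 1 ≤ (fun v => f v - e v) v)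
            = Finset.univ.filter fun v => 1 ≤ f v - e v from rfl, hsupp]
    have hesolv : NSolvable G e r m := pi_extract hG r m e (by omega)
    obtain ⟨b, hb, hbr⟩ := h2solv
    obtain ⟨b₂, hb₂, hbr₂⟩ := hesolv
    have hf : f = fun v => (f v - e v) + e v := funext fun v => by have := he1 v; omega
    have h1 : RTG G f (fun v => b v + e v) := by
      nth_rewrite 1 [hf]; exact rtg_add hb e
    have hcomm : (fun v => b v + e v) = fun v => e v + b v := funext fun v => Nat.add_comm _ _
    have h2 : RTG G (fun v => e v + b v) (fun v => b₂ v + b v) := rtg_add hb₂ b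
    exact ⟨fun v => b₂ v + b v, h1.trans (hcomm ▸ h2), show m + 2 ≤ b₂ r + b r by omega⟩
  · exfalso
    have hlt : twoPebblingNumber G s < s := by omega
    obtain ⟨T, hT1, hT2⟩ := Finset.exists_subset_card_eq
      (show s ≤ (Finset.univ : Finset V).card from hs ▸ Finset.card_filter_le _ _)
    set c₀ : V → ℕ := fun v => if v ∈ T then 1 else 0 with hc₀def
    have hc₀sum : ∑ v, c₀ v = s := by
      rw [hc₀def]
      simp only [Finset.sum_ite_mem, Finset.univ_inter, Finset.sum_const, smul_eq_mul, mul_one]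
      exact hT2
    have hc₀filter : (Finset.univ.filter fun v => 1 ≤ c₀ v) = T := by
      ext x
      simp only [Finset.mem_filter, Finset.mem_univ, true_and, hc₀def]
      split_ifs with hx <;> simp [hx]
    obtain ⟨c', hc', h2c⟩ := hS r c₀ (by omega) (by rw [hc₀filter, hT2])
    have hfix : c' = c₀ := rtg_eq_of_le_one
      (fun v => by show (if v ∈ T then 1 else 0) ≤ 1; split_ifs <;> omega) hc'
    rw [hfix] at h2c
    have hle : c₀ r ≤ 1 := by show (if r ∈ T then 1 else 0) ≤ 1; split_ifs <;> omega
    omega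
end FintypeV
section Product
variable {α β : Type*} [DecidableEq α] [DecidableEq β] {G : SimpleGraph α} {H : SimpleGraph β}

lemma stageA [Fintype α] (hH : H.Connected) (v : β) :
    ∀ (Q : Finset (α × β)), (∀ p ∈ Q, p.2 ≠ v) → ∀ C : α × β → ℕ,
      ∃ C', RTG (G.boxProd H) C C' ∧ (∀ i, C (i, v) ≤ C' (i, v)) ∧
        (∑ p ∈ Q, C p / 2 ^ (H.dist v p.2)) + ∑ i, C (i, v) ≤ ∑ i, C' (i, v) := by
  intro Q
  induction Q using Finset.induction with
  | empty => exact fun _ C => ⟨C, .refl, fun _ => le_rfl, by simp⟩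
  | @insert p Q' hp ih =>
    intro hQ C
    obtain ⟨i₀, j₀⟩ := p
    have hj₀ : j₀ ≠ v := hQ (i₀, j₀) (Finset.mem_insert_self _ _)
    obtain ⟨q, hq⟩ := (hH.preconnected j₀ v).exists_walk_length_eq_dist
    set n := H.dist v j₀ with hn
    have hqlen : q.length = n := by rw [hq, hn, SimpleGraph.dist_comm]
    have hwne : ((i₀, j₀) : α × β) ≠ (i₀, v) := fun e => hj₀ (congrArg Prod.snd e)
    set w : (G.boxProd H).Walk (i₀, j₀) (i₀, v) := q.boxProdRight G i₀ with hw
    have hwlen : w.length = n := by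
      rw [hw]; exact (SimpleGraph.Walk.length_map _ q).trans hqlen
    have hck : (C (i₀, j₀) / 2 ^ n) * 2 ^ w.length ≤ C (i₀, j₀) := by
      rw [hwlen]; exact Nat.div_mul_le_self _ _
    obtain ⟨C₁, h₁, hr₁, ho₁, hu₁⟩ := send' w hwne C (C (i₀, j₀) / 2 ^ n) hck
    obtain ⟨C₂, h₂, hm₂, hs₂⟩ := ih (fun p hp' => hQ p (Finset.mem_insert_of_mem hp')) C₁
    have hCmono : ∀ i, C (i, v) ≤ C₁ (i, v) := by
      intro i
      by_cases hi : i = i₀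
      · subst hi; exact le_trans (Nat.le_add_right _ _) hr₁
      · exact ho₁ (i, v) (fun e => hj₀ (congrArg Prod.snd e).symm) (fun e => hi (congrArg Prod.fst e))
    refine ⟨C₂, h₁.trans h₂, fun i => le_trans (hCmono i) (hm₂ i), ?_⟩
    rw [Finset.sum_insert hp]
    have hQ'mono : ∑ p ∈ Q', C p / 2 ^ (H.dist v p.2) ≤ ∑ p ∈ Q', C₁ p / 2 ^ (H.dist v p.2) := by
      refine Finset.sum_le_sum fun p hp' => Nat.div_le_div_right (ho₁ p ?_ ?_)
      · exact fun e => hp (e ▸ hp')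
      · exact fun e => hQ p (Finset.mem_insert_of_mem hp') (congrArg Prod.snd e)
    have hslice : (∑ i, C (i, v)) + C (i₀, j₀) / 2 ^ n ≤ ∑ i, C₁ (i, v) := by
      have hpt : ∀ i, C (i, v) + (if i = i₀ then C (i₀, j₀) / 2 ^ n else 0) ≤ C₁ (i, v) := by
        intro i
        by_cases hi : i = i₀
        · subst hi; rw [if_pos rfl]; exact hr₁
        · rw [if_neg hi]; simpa using hCmono i
      calc (∑ i, C (i, v)) + C (i₀, j₀) / 2 ^ n
          = ∑ i, (C (i, v) + if i = i₀ then C (i₀, j₀) / 2 ^ n else 0) := by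
            rw [Finset.sum_add_distrib,
              Finset.sum_ite_eq' Finset.univ i₀ (fun _ => C (i₀, j₀) / 2 ^ n),
              if_pos (Finset.mem_univ i₀)]
      _ ≤ ∑ i, C₁ (i, v) := Finset.sum_le_sum fun i _ => hpt i
    have hterm : C (i₀, j₀) / 2 ^ (H.dist v (i₀, j₀).2) = C (i₀, j₀) / 2 ^ n := rfl
    omega

end Product
end Peb

/-- constraint A.6(K, v) is valid: with `d = dist_H(v, r_H)` and `v ≠ r_H`,
if the stacks in the other slices (counted toward `v`) together with the pebbles on `G_v`
number at least `π₂^{mon}(G, s_v) + (2^d - 2)·π(G)`, then the configuration is solvable. -/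
theorem stmt8 {α β : Type*} [Fintype α] [Fintype β] [DecidableEq β]
    (G : SimpleGraph α) (H : SimpleGraph β) (hG : G.Connected) (hH : H.Connected)
    (c : α × β → ℕ) (rG : α) (rH : β)
    (v : β) (hv : v ≠ rH) (d : ℕ) (hd : d = H.dist v rH)
    (h : (∑ j ∈ (Finset.univ \ {rH, v} : Finset β),
          ∑ i : α, c (i, j) / 2 ^ (H.dist v j))
        + (∑ i : α, c (i, v))
        ≥ twoPebblingNumberMon G ((Finset.univ.filter fun i : α => 1 ≤ c (i, v)).card)
          + (2 ^ d - 2) * pebblingNumber G) :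
    Solvable (G.boxProd H) c (rG, rH) := by
  classical
  have hd1 : 1 ≤ d := by
    rw [hd]
    have := SimpleGraph.dist_ne_zero_iff_ne_and_reachable.mpr ⟨hv, hH.preconnected v rH⟩
    omega
  have hQv : ∀ p ∈ ((Finset.univ : Finset α) ×ˢ (Finset.univ \ {rH, v} : Finset β)),
      p.2 ≠ v := by
    intro p hp
    rw [Finset.mem_product, Finset.mem_sdiff] at hp
    have := hp.2.2
    simp only [Finset.mem_insert, Finset.mem_singleton] at this
    tauto
  obtain ⟨C₁, h₁, hm₁, hs₁⟩ := Peb.stageA (G := G) hH v _ hQv c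
  have hprod : ∑ p ∈ ((Finset.univ : Finset α) ×ˢ (Finset.univ \ {rH, v} : Finset β)),
      c p / 2 ^ (H.dist v p.2)
      = ∑ j ∈ (Finset.univ \ {rH, v} : Finset β), ∑ i : α, c (i, j) / 2 ^ (H.dist v j) := by
    rw [Finset.sum_product]
    exact Finset.sum_comm
  -- support bound
  have hsv : (Finset.univ.filter fun i : α => 1 ≤ c (i, v)).card
      ≤ (Finset.univ.filter fun i : α => 1 ≤ C₁ (i, v)).card := by
    apply Finset.card_le_card
    intro i hi
    simp only [Finset.mem_filter, Finset.mem_univ, true_and] at hi ⊢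
    exact le_trans hi (hm₁ i)
  have hs'card : (Finset.univ.filter fun i : α => 1 ≤ C₁ (i, v)).card ≤ Fintype.card α :=
    le_trans (Finset.card_filter_le _ _) (le_of_eq Finset.card_univ)
  have hmon : twoPebblingNumber' G ((Finset.univ.filter fun i : α => 1 ≤ C₁ (i, v)).card)
      ≤ twoPebblingNumberMon G ((Finset.univ.filter fun i : α => 1 ≤ c (i, v)).card) :=
    Finset.le_sup (Finset.mem_Icc.mpr ⟨hsv, hs'card⟩)
  have hkeyhyp : twoPebblingNumber' G ((Finset.univ.filter fun i : α => 1 ≤ C₁ (i, v)).card)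
      + (2 ^ d - 2) * pebblingNumber G ≤ ∑ i, C₁ (i, v) := by
    omega
  obtain ⟨b, hb, hbr⟩ := Peb.key hG rG (fun i => C₁ (i, v)) (2 ^ d - 2)
    (show twoPebblingNumber' G ((Finset.univ.filter fun i : α => 1 ≤ C₁ (i, v)).card)
      + (2 ^ d - 2) * pebblingNumber G ≤ ∑ i, C₁ (i, v) from hkeyhyp)
  have h2d : 2 ^ d - 2 + 2 = 2 ^ d := by
    have h21 : (2:ℕ) ^ 1 ≤ 2 ^ d := Nat.pow_le_pow_right (by norm_num) hd1
    have : (2:ℕ) ^ 1 = 2 := by norm_num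
    omega
  obtain ⟨C₂, h₂, hC₂, hC₂o⟩ := Peb.lift_hom (G := G) (G' := G.boxProd H)
    ((SimpleGraph.boxProdLeft G H v).toHom) (fun a b e => congrArg Prod.fst e)
    hb C₁ (fun i => rfl)
  obtain ⟨q, hq⟩ := (hH.preconnected v rH).exists_walk_length_eq_dist
  have hwlen : (q.boxProdRight G rG).length = d := by
    exact (SimpleGraph.Walk.length_map _ q).trans (hq.trans hd.symm)
  have hwne : ((rG, v) : α × β) ≠ (rG, rH) := fun e => hv (congrArg Prod.snd e)
  have hC₂v : C₂ (rG, v) = b rG := hC₂ rG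
  have hstack : 1 * 2 ^ (q.boxProdRight G rG).length ≤ C₂ (rG, v) := by
    rw [hwlen, one_mul, hC₂v]
    omega
  obtain ⟨C₃, h₃, hr₃, _, _⟩ := Peb.send' (q.boxProdRight G rG) hwne C₂ 1 hstack
  exact ⟨C₃, (h₁.trans h₂).trans h₃, by omega⟩
end
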